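/- arXiv:0811.1369 — 7 statements merged into one kernel-verified Lean document; each statement's English description precedes it below -/
import Mathlib

section
/- Let α > 0 be an irrational real number and β > 2 a real number. Let v₁ = (p₁,q₁) and v₂ = (p₂,q₂) be integer vectors such that x₁ = p₁ − α·q₁ and x₂ = p₂ − α·q₂ have the same sign and 0 < |x₂| < |x₁|; set d₁ = 1/|x₁| and d₂ = 1/|x₂|. Then the sum over all pairs (a,b) of coprime positive integers of 1/|(a·p₁ + b·p₂) − α·(a·q₁ + b·q₂)|^β converges and satisfies d₁^β · S < Σ_{(a,b) coprime, a,b ≥ 1} 1/|(a·p₁ + b·p₂) − α·(a·q₁ + b·q₂)|^β < d₂^β · S, where S = Σ_{(a,b) coprime, a,b ≥ 1} 1/(a+b)^β. -/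
set_option maxHeartbeats 1000000


theorem stmt5 (α β : ℝ) (hα : 0 < α) (hirr : Irrational α) (hβ : 2 < β)
    (p₁ q₁ p₂ q₂ : ℤ)
    (hsign : 0 < ((p₁ : ℝ) - α * q₁) * ((p₂ : ℝ) - α * q₂))
    (habs : 0 < |(p₂ : ℝ) - α * q₂| ∧ |(p₂ : ℝ) - α * q₂| < |(p₁ : ℝ) - α * q₁|) :
    Summable (fun ab : {ab : ℕ × ℕ // 0 < ab.1 ∧ 0 < ab.2 ∧ Nat.gcd ab.1 ab.2 = 1} =>
      1 / |((ab.1.1 : ℝ) * p₁ + (ab.1.2 : ℝ) * p₂) -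
            α * ((ab.1.1 : ℝ) * q₁ + (ab.1.2 : ℝ) * q₂)| ^ β) ∧
    (1 / |(p₁ : ℝ) - α * q₁|) ^ β *
        (∑' ab : {ab : ℕ × ℕ // 0 < ab.1 ∧ 0 < ab.2 ∧ Nat.gcd ab.1 ab.2 = 1},
          1 / ((ab.1.1 + ab.1.2 : ℕ) : ℝ) ^ β) <
      (∑' ab : {ab : ℕ × ℕ // 0 < ab.1 ∧ 0 < ab.2 ∧ Nat.gcd ab.1 ab.2 = 1},
        1 / |((ab.1.1 : ℝ) * p₁ + (ab.1.2 : ℝ) * p₂) -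
              α * ((ab.1.1 : ℝ) * q₁ + (ab.1.2 : ℝ) * q₂)| ^ β) ∧
    (∑' ab : {ab : ℕ × ℕ // 0 < ab.1 ∧ 0 < ab.2 ∧ Nat.gcd ab.1 ab.2 = 1},
        1 / |((ab.1.1 : ℝ) * p₁ + (ab.1.2 : ℝ) * p₂) -
              α * ((ab.1.1 : ℝ) * q₁ + (ab.1.2 : ℝ) * q₂)| ^ β) <
      (1 / |(p₂ : ℝ) - α * q₂|) ^ β *
        (∑' ab : {ab : ℕ × ℕ // 0 < ab.1 ∧ 0 < ab.2 ∧ Nat.gcd ab.1 ab.2 = 1},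
          1 / ((ab.1.1 + ab.1.2 : ℕ) : ℝ) ^ β) := by
  obtain ⟨hx2pos, hx12⟩ := habs
  have hβ0 : (0 : ℝ) < β := by linarith
  set x₁ : ℝ := (p₁ : ℝ) - α * q₁ with hx1def
  set x₂ : ℝ := (p₂ : ℝ) - α * q₂ with hx2def
  have hx1pos : 0 < |x₁| := lt_trans hx2pos hx12
  set T := {ab : ℕ × ℕ // 0 < ab.1 ∧ 0 < ab.2 ∧ Nat.gcd ab.1 ab.2 = 1} with hT
  -- abbreviations for the two summand families
  set s : T → ℝ := fun ab => 1 / ((ab.1.1 + ab.1.2 : ℕ) : ℝ) ^ β with hs_def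
  set t : T → ℝ := fun ab =>
    1 / |((ab.1.1 : ℝ) * p₁ + (ab.1.2 : ℝ) * p₂) -
          α * ((ab.1.1 : ℝ) * q₁ + (ab.1.2 : ℝ) * q₂)| ^ β with ht_def
  -- the absolute value splits
  have key : ∀ ab : T,
      |((ab.1.1 : ℝ) * p₁ + (ab.1.2 : ℝ) * p₂) -
        α * ((ab.1.1 : ℝ) * q₁ + (ab.1.2 : ℝ) * q₂)|
        = (ab.1.1 : ℝ) * |x₁| + (ab.1.2 : ℝ) * |x₂| := by
    intro ab
    have ha : (0 : ℝ) ≤ (ab.1.1 : ℝ) := Nat.cast_nonneg _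
    have hb : (0 : ℝ) ≤ (ab.1.2 : ℝ) := Nat.cast_nonneg _
    have hrw : ((ab.1.1 : ℝ) * p₁ + (ab.1.2 : ℝ) * p₂) -
        α * ((ab.1.1 : ℝ) * q₁ + (ab.1.2 : ℝ) * q₂)
        = (ab.1.1 : ℝ) * x₁ + (ab.1.2 : ℝ) * x₂ := by
      rw [hx1def, hx2def]; ring
    rw [hrw]
    rcases mul_pos_iff.mp hsign with ⟨h1, h2⟩ | ⟨h1, h2⟩
    · rw [abs_of_nonneg (by positivity), abs_of_pos h1, abs_of_pos h2]
    · rw [abs_of_nonpos (by nlinarith), abs_of_neg h1, abs_of_neg h2]; ring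
  -- pointwise positivity facts
  have hcast : ∀ ab : T, ((ab.1.1 + ab.1.2 : ℕ) : ℝ) = (ab.1.1 : ℝ) + (ab.1.2 : ℝ) := by
    intro ab; push_cast; ring
  have ha1 : ∀ ab : T, (1 : ℝ) ≤ (ab.1.1 : ℝ) := fun ab => by
    exact_mod_cast Nat.one_le_cast.mpr ab.2.1
  have hb1 : ∀ ab : T, (1 : ℝ) ≤ (ab.1.2 : ℝ) := fun ab => by
    exact_mod_cast Nat.one_le_cast.mpr ab.2.2.1
  -- summability of s
  have hhalf : Summable (fun n : ℕ => ((n : ℝ) ^ (β / 2))⁻¹) :=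
    Real.summable_nat_rpow_inv.mpr (by linarith)
  have hg : Summable (fun ab : ℕ × ℕ => ((ab.1 : ℝ) ^ (β / 2))⁻¹ * ((ab.2 : ℝ) ^ (β / 2))⁻¹) :=
    hhalf.mul_of_nonneg hhalf (fun n => by positivity) (fun n => by positivity)
  have hgT : Summable (fun ab : T =>
      ((ab.1.1 : ℝ) ^ (β / 2))⁻¹ * ((ab.1.2 : ℝ) ^ (β / 2))⁻¹) :=
    hg.subtype _
  have hs : Summable s := by
    refine hgT.of_nonneg_of_le (fun ab => by positivity) (fun ab => ?_)
    have ha := ha1 ab; have hb := hb1 ab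
    set A := (ab.1.1 : ℝ); set B := (ab.1.2 : ℝ)
    have h1 : A ^ (β / 2) * B ^ (β / 2) ≤ ((ab.1.1 + ab.1.2 : ℕ) : ℝ) ^ β := by
      rw [hcast ab, ← Real.mul_rpow (by linarith) (by linarith)]
      have h2 : (A + B) ^ β = ((A + B) ^ (2 : ℝ)) ^ (β / 2) := by
        rw [← Real.rpow_mul (by linarith)]; congr 1; ring
      rw [h2]
      refine Real.rpow_le_rpow (by positivity) ?_ (by linarith)
      rw [Real.rpow_two]; nlinarith
    rw [hs_def]
    simp only [one_div, mul_inv_rev]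
    rw [mul_comm, ← mul_inv]
    exact inv_anti₀ (by positivity) (by rw [mul_comm]; exact h1)
  -- basic bounds on denominators
  have hlow : ∀ ab : T,
      ((ab.1.1 : ℝ) + ab.1.2) * |x₂| < (ab.1.1 : ℝ) * |x₁| + (ab.1.2 : ℝ) * |x₂| := by
    intro ab; have ha := ha1 ab; have hb := hb1 ab; nlinarith
  have hhigh : ∀ ab : T,
      (ab.1.1 : ℝ) * |x₁| + (ab.1.2 : ℝ) * |x₂| < ((ab.1.1 : ℝ) + ab.1.2) * |x₁| := by
    intro ab; have ha := ha1 ab; have hb := hb1 ab; nlinarith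
  -- pointwise strict bounds on t
  have hlowpt : ∀ ab : T, (1 / |x₁|) ^ β * s ab < t ab := by
    intro ab
    have ha := ha1 ab; have hb := hb1 ab
    rw [ht_def]; simp only
    rw [key ab, hs_def]; simp only
    rw [hcast ab]
    have hL : (1 / |x₁|) ^ β * (1 / ((ab.1.1 : ℝ) + ab.1.2) ^ β)
        = 1 / (((ab.1.1 : ℝ) + ab.1.2) * |x₁|) ^ β := by
      rw [Real.mul_rpow (by positivity) (le_of_lt hx1pos)]
      rw [Real.div_rpow zero_le_one (le_of_lt hx1pos), Real.one_rpow]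
      field_simp
    rw [hL]
    apply div_lt_div_of_pos_left one_pos (by positivity)
    exact Real.rpow_lt_rpow (by positivity) (hhigh ab) hβ0
  have hhighpt : ∀ ab : T, t ab < (1 / |x₂|) ^ β * s ab := by
    intro ab
    have ha := ha1 ab; have hb := hb1 ab
    rw [ht_def]; simp only
    rw [key ab, hs_def]; simp only
    rw [hcast ab]
    have hL : (1 / |x₂|) ^ β * (1 / ((ab.1.1 : ℝ) + ab.1.2) ^ β)
        = 1 / (((ab.1.1 : ℝ) + ab.1.2) * |x₂|) ^ β := by
      rw [Real.mul_rpow (by positivity) (le_of_lt hx2pos)]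
      rw [Real.div_rpow zero_le_one (le_of_lt hx2pos), Real.one_rpow]
      field_simp
    rw [hL]
    apply div_lt_div_of_pos_left one_pos (by positivity)
    exact Real.rpow_lt_rpow (by positivity) (hlow ab) hβ0
  -- summability of t
  have ht : Summable t := by
    refine (hs.mul_left ((1 / |x₂|) ^ β)).of_nonneg_of_le
      (fun ab => ?_) (fun ab => le_of_lt (hhighpt ab))
    rw [ht_def]; positivity
  -- the element (1,1)
  have hmem : (0 < (1 : ℕ)) ∧ (0 < (1 : ℕ)) ∧ Nat.gcd 1 1 = 1 := by norm_num
  refine ⟨ht, ?_, ?_⟩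
  · have := Summable.tsum_lt_tsum (f := fun ab : T => (1 / |x₁|) ^ β * s ab) (g := t)
      (i := ⟨(1, 1), hmem⟩) (fun ab => le_of_lt (hlowpt ab)) (hlowpt _)
      (hs.mul_left _) ht
    rwa [tsum_mul_left] at this
  · have := Summable.tsum_lt_tsum (f := t) (g := fun ab : T => (1 / |x₂|) ^ β * s ab)
      (i := ⟨(1, 1), hmem⟩) (fun ab => le_of_lt (hhighpt ab)) (hhighpt _)
      ht (hs.mul_left _)
    rwa [tsum_mul_left] at this
end

section
/- For every real number β > 2 there exists a constant c > 0 such that for every positive irrational real number α and every integer N with N ≥ 1 and N ≥ N₀, writing N = N_m + k with 0 ≤ k < a_{m+1}, one has d_N^β ≤ Z_N(α;β) ≤ c · N · d_{N_m}^β. -/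
/-- The Farey matrix `A₀ = [[1,0],[1,1]]`. -/
def A0 : Matrix (Fin 2) (Fin 2) ℤ := !![1, 0; 1, 1]

/-- The Farey matrix `A₁ = [[1,1],[0,1]]`. -/
def A1 : Matrix (Fin 2) (Fin 2) ℤ := !![1, 1; 0, 1]

/-- The product `A_{σ₁}A_{σ₂}⋯A_{σ_N}` associated to a word `σ ∈ {0,1}^N`
(`false` codes `0`, `true` codes `1`). -/
def wordProd {N : ℕ} (σ : Fin N → Bool) : Matrix (Fin 2) (Fin 2) ℤ :=
  (List.ofFn fun i => if σ i then A1 else A0).prod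

/-- The Diophantine partition function
`Z_N(α;β) = Σ_{σ ∈ {0,1}^N} |p_σ - α q_σ|^{-β}`, where `(p_σ, q_σ)` is the
right column of `A_{σ₁}⋯A_{σ_N}`. -/
noncomputable def Zpart (N : ℕ) (α β : ℝ) : ℝ :=
  ∑ σ : Fin N → Bool,
    |((wordProd σ 0 1 : ℤ) : ℝ) - α * ((wordProd σ 1 1 : ℤ) : ℝ)| ^ (-β)

/-- Iterates of the Gauss map starting at `α`: `x₀ = α`, `x_{m+1} = 1/(x_m - ⌊x_m⌋)`. -/
noncomputable def gaussIter (α : ℝ) : ℕ → ℝ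
  | 0 => α
  | n + 1 => (gaussIter α n - (⌊gaussIter α n⌋ : ℝ))⁻¹

/-- The continued fraction coefficients of `α`: `a_m = ⌊x_m⌋`. -/
noncomputable def cfA (α : ℝ) (n : ℕ) : ℤ := ⌊gaussIter α n⌋

/-- Numerators of the convergents, shifted by one: `pConv a (m+1) = p_m`, with
`p₋₁ = 1`, `p₀ = a₀`, `p_m = a_m p_{m-1} + p_{m-2}`. -/
def pConv (a : ℕ → ℤ) : ℕ → ℤ
  | 0 => 1
  | 1 => a 0
  | n + 2 => a (n + 1) * pConv a (n + 1) + pConv a n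

/-- Denominators of the convergents, shifted by one: `qConv a (m+1) = q_m`, with
`q₋₁ = 0`, `q₀ = 1`, `q_m = a_m q_{m-1} + q_{m-2}`. -/
def qConv (a : ℕ → ℤ) : ℕ → ℤ
  | 0 => 0
  | 1 => 1
  | n + 2 => a (n + 1) * qConv a (n + 1) + qConv a n

/-- `N_m = a₀ + a₁ + ⋯ + a_m`. -/
def Nsum (a : ℕ → ℤ) (m : ℕ) : ℤ := ∑ i ∈ Finset.range (m + 1), a i

/-- `d_N = 1/|P_N - α Q_N|` for `N = N_m + k` with `0 ≤ k < a_{m+1}`: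
`(P_N, Q_N) = (p_m, q_m)` if `k = 0`, and
`(P_N, Q_N) = (k p_m + p_{m-1}, k q_m + q_{m-1})` if `k ≥ 1`. -/
noncomputable def dd (α : ℝ) (m k : ℕ) : ℝ :=
  if k = 0 then
    1 / |((pConv (cfA α) (m + 1) : ℤ) : ℝ) - α * ((qConv (cfA α) (m + 1) : ℤ) : ℝ)|
  else
    1 / |(((k : ℤ) * pConv (cfA α) (m + 1) + pConv (cfA α) m : ℤ) : ℝ) -
          α * (((k : ℤ) * qConv (cfA α) (m + 1) + qConv (cfA α) m : ℤ) : ℝ)|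

namespace S6

def step : Bool → ℤ × ℤ → ℤ × ℤ
  | true, c => (c.1 + c.2, c.2)
  | false, c => (c.1, c.1 + c.2)

def pq (L : List Bool) : ℤ × ℤ := L.foldr step (0, 1)
def lc (L : List Bool) : ℤ × ℤ := L.foldr step (1, 0)

@[simp] lemma pq_nil : pq [] = (0, 1) := rfl
@[simp] lemma lc_nil : lc [] = (1, 0) := rfl
@[simp] lemma pq_cons (b : Bool) (L : List Bool) : pq (b :: L) = step b (pq L) := rfl
@[simp] lemma lc_cons (b : Bool) (L : List Bool) : lc (b :: L) = step b (lc L) := rfl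

lemma step_add (b : Bool) (c d : ℤ × ℤ) : step b (c + d) = step b c + step b d := by
  cases b <;> simp [step, Prod.ext_iff] <;> ring

lemma pq_nonneg (L : List Bool) : 0 ≤ (pq L).1 ∧ 1 ≤ (pq L).2 := by
  induction L with
  | nil => simp
  | cons b L ih => cases b <;> simp [step] <;> omega

lemma pq_inj : ∀ L L' : List Bool, L.length = L'.length → pq L = pq L' → L = L' := by
  intro L
  induction L with
  | nil => intro L' h _; cases L' <;> simp_all
  | cons b L ih =>
    intro L' hlen hpq
    cases L' with
    | nil => simp at hlen
    | cons b' L' =>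
      simp only [List.length_cons, Nat.succ_inj] at hlen
      have h1 := pq_nonneg L
      have h2 := pq_nonneg L'
      cases b <;> cases b' <;>
        simp only [pq_cons, step, Prod.mk.injEq] at hpq <;>
        obtain ⟨e1, e2⟩ := hpq
      · have : pq L = pq L' := Prod.ext (by omega) (by omega)
        rw [ih L' hlen this]
      · exfalso; omega
      · exfalso; omega
      · have : pq L = pq L' := Prod.ext (by omega) (by omega)
        rw [ih L' hlen this]

lemma pq_append_false (L : List Bool) : pq (L ++ [false]) = pq L := by
  induction L with
  | nil => rfl
  | cons b L ih => simp only [List.cons_append, pq_cons, ih]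

lemma pq_append_true (L : List Bool) : pq (L ++ [true]) = lc L + pq L := by
  induction L with
  | nil => simp [pq, lc, step, Prod.ext_iff]
  | cons b L ih => simp only [List.cons_append, pq_cons, lc_cons, ih, step_add]

lemma lc_append_false (L : List Bool) : lc (L ++ [false]) = lc L + pq L := by
  induction L with
  | nil => simp [pq, lc, step, Prod.ext_iff]
  | cons b L ih => simp only [List.cons_append, pq_cons, lc_cons, ih, step_add]

lemma lc_append_true (L : List Bool) : lc (L ++ [true]) = lc L := by
  induction L with
  | nil => rfl
  | cons b L ih => simp only [List.cons_append, lc_cons, ih]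

lemma lc_to_pq : ∀ L : List Bool, lc L = (1, 0) ∨ ∃ L' : List Bool, L'.length = L.length ∧ pq L' = lc L := by
  intro L
  induction L using List.reverseRecOn with
  | nil => exact Or.inl rfl
  | append_singleton L b ih =>
    cases b with
    | false =>
      right
      exact ⟨L ++ [true], by simp, by rw [pq_append_true, lc_append_false]⟩
    | true =>
      rw [lc_append_true]
      rcases ih with h | ⟨L', hlen, hpq⟩
      · exact Or.inl h
      · exact Or.inr ⟨L' ++ [false], by simp [hlen], by rw [pq_append_false, hpq]⟩

noncomputable def va (α : ℝ) (c : ℤ × ℤ) : ℝ := (c.1 : ℝ) - α * (c.2 : ℝ)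

lemma va_add (α : ℝ) (u v : ℤ × ℤ) : va α (u + v) = va α u + va α v := by
  simp [va]; push_cast; ring

noncomputable def g (α β : ℝ) (u v c : ℤ × ℤ) : ℝ :=
  |va α u * ((c.1 : ℤ) : ℝ) + va α v * ((c.2 : ℤ) : ℝ)| ^ (-β)

noncomputable def S (α β : ℝ) (n : ℕ) (u v : ℤ × ℤ) : ℝ :=
  ∑ σ : Fin n → Bool, g α β u v (pq (List.ofFn σ))

lemma S_zero (α β : ℝ) (u v : ℤ × ℤ) : S α β 0 u v = |va α v| ^ (-β) := by
  rw [S]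
  rw [Fintype.sum_unique]
  simp [g]

def consEquiv (n : ℕ) : Bool × (Fin n → Bool) ≃ (Fin (n + 1) → Bool) :=
  { toFun := fun p => Fin.cons p.1 p.2
    invFun := fun f => (f 0, Fin.tail f)
    left_inv := fun p => by simp [Fin.tail_cons]
    right_inv := fun f => Fin.cons_self_tail f }

@[simp] lemma consEquiv_apply (n : ℕ) (b : Bool) (τ : Fin n → Bool) :
    consEquiv n (b, τ) = Fin.cons b τ := rfl

lemma S_succ (α β : ℝ) (n : ℕ) (u v : ℤ × ℤ) :
    S α β (n + 1) u v = S α β n (u + v) v + S α β n u (u + v) := by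
  classical
  rw [S, ← (consEquiv n).sum_comp, Fintype.sum_prod_type]
  rw [Fintype.sum_bool]
  have hofn : ∀ (b : Bool) (τ : Fin n → Bool),
      List.ofFn (Fin.cons b τ : Fin (n+1) → Bool) = b :: List.ofFn τ := by
    intro b τ
    rw [List.ofFn_succ]
    simp [Fin.cons_zero, Fin.cons_succ]
  have ht : ∀ τ : Fin n → Bool,
      g α β u v (pq (List.ofFn (Fin.cons true τ : Fin (n+1) → Bool))) =
        g α β u (u + v) (pq (List.ofFn τ)) := by
    intro τ
    rw [hofn, pq_cons]
    rcases h : pq (List.ofFn τ) with ⟨p, q⟩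
    have harg : va α u * (((step true (p, q)).1 : ℤ) : ℝ) + va α v * (((step true (p, q)).2 : ℤ) : ℝ)
        = va α u * ((p : ℤ) : ℝ) + va α (u + v) * ((q : ℤ) : ℝ) := by
      rw [va_add]; simp only [step]; push_cast; ring
    rw [g, g, harg]
  have hf : ∀ τ : Fin n → Bool,
      g α β u v (pq (List.ofFn (Fin.cons false τ : Fin (n+1) → Bool))) =
        g α β (u + v) v (pq (List.ofFn τ)) := by
    intro τ
    rw [hofn, pq_cons]
    rcases h : pq (List.ofFn τ) with ⟨p, q⟩
    have harg : va α u * (((step false (p, q)).1 : ℤ) : ℝ) + va α v * (((step false (p, q)).2 : ℤ) : ℝ)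
        = va α (u + v) * ((p : ℤ) : ℝ) + va α v * ((q : ℤ) : ℝ) := by
      rw [va_add]; simp only [step]; push_cast; ring
    rw [g, g, harg]
  rw [add_comm]
  congr 1
  · refine Finset.sum_congr rfl (fun τ _ => ?_)
    rw [consEquiv_apply]
    exact hf τ
  · refine Finset.sum_congr rfl (fun τ _ => ?_)
    rw [consEquiv_apply]
    exact ht τ

def fm (b : Bool) : Matrix (Fin 2) (Fin 2) ℤ := if b then A1 else A0

lemma Wl_entries : ∀ L : List Bool,
    (L.map fm).prod 0 1 = (pq L).1 ∧ (L.map fm).prod 1 1 = (pq L).2 := by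
  intro L
  induction L with
  | nil => simp [Matrix.one_apply]
  | cons b L ih =>
    rw [List.map_cons, List.prod_cons]
    obtain ⟨ih1, ih2⟩ := ih
    cases b <;>
      simp [fm, A0, A1, Matrix.mul_apply, Fin.sum_univ_two, ih1, ih2, step] <;> ring

lemma wordProd_entries {N : ℕ} (σ : Fin N → Bool) :
    _root_.wordProd σ 0 1 = (pq (List.ofFn σ)).1 ∧ _root_.wordProd σ 1 1 = (pq (List.ofFn σ)).2 := by
  have : (List.ofFn fun i => if σ i then A1 else A0) = (List.ofFn σ).map fm := by
    rw [List.map_ofFn]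
    rfl
  rw [wordProd, this]
  exact Wl_entries _


variable {α : ℝ}

lemma gauss_irr (hirr : Irrational α) : ∀ n, Irrational (gaussIter α n)
  | 0 => hirr
  | n + 1 => by
    rw [gaussIter]
    exact (Irrational.sub_intCast (gauss_irr hirr n) _).inv

lemma fract_pos (hirr : Irrational α) (n : ℕ) : 0 < gaussIter α n - (⌊gaussIter α n⌋ : ℝ) := by
  have h := gauss_irr hirr n
  have h1 : (⌊gaussIter α n⌋ : ℝ) ≤ gaussIter α n := Int.floor_le _
  rcases lt_or_eq_of_le h1 with h2 | h2
  · linarith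
  · exact absurd h2.symm (h.ne_int _)

lemma fract_lt_one (n : ℕ) : gaussIter α n - (⌊gaussIter α n⌋ : ℝ) < 1 := by
  have := Int.lt_floor_add_one (gaussIter α n)
  linarith

lemma gauss_gt_one (hirr : Irrational α) (n : ℕ) : 1 < gaussIter α (n + 1) := by
  rw [gaussIter]
  rw [lt_inv_comm₀ one_pos (fract_pos hirr n)]
  simpa using fract_lt_one n

lemma gauss_pos (hα : 0 < α) (hirr : Irrational α) : ∀ n, 0 < gaussIter α n
  | 0 => hα
  | n + 1 => lt_trans one_pos (gauss_gt_one hirr n)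

lemma cf_pos (hirr : Irrational α) (n : ℕ) : 1 ≤ cfA α (n + 1) := by
  rw [cfA, Int.le_floor]
  exact_mod_cast (gauss_gt_one hirr n).le

lemma cf0_nonneg (hα : 0 < α) : 0 ≤ cfA α 0 := by
  rw [cfA, Int.le_floor]
  exact_mod_cast hα.le

lemma cf_nonneg (hα : 0 < α) (hirr : Irrational α) : ∀ n, 0 ≤ cfA α n
  | 0 => cf0_nonneg hα
  | n + 1 => le_trans zero_le_one (cf_pos hirr n)

lemma cf_lt_gauss (hirr : Irrational α) (n : ℕ) : (cfA α n : ℝ) < gaussIter α n := by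
  have := fract_pos hirr n
  rw [cfA]; linarith

lemma x_recur (hirr : Irrational α) (n : ℕ) : gaussIter α (n + 1) * (gaussIter α n - (cfA α n : ℝ)) = 1 := by
  rw [cfA, gaussIter]
  exact inv_mul_cancel₀ (ne_of_gt (fract_pos hirr n))

lemma pq_conv_nonneg (hα : 0 < α) (hirr : Irrational α) : ∀ n, 0 ≤ pConv (cfA α) n ∧ 0 ≤ qConv (cfA α) n ∧ 1 ≤ qConv (cfA α) (n + 1) := by
  intro n
  induction n using Nat.strong_induction_on with
  | _ n ih =>
    match n with
    | 0 => refine ⟨by norm_num [pConv], by norm_num [qConv], by norm_num [qConv]⟩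
    | 1 =>
      refine ⟨by rw [pConv]; exact cf0_nonneg hα, by norm_num [qConv], ?_⟩
      show 1 ≤ cfA α 1 * qConv (cfA α) 1 + qConv (cfA α) 0
      have := cf_pos hirr 0
      norm_num [qConv]
      nlinarith
    | (n + 2) =>
      obtain ⟨hp1, hq1, hq1'⟩ := ih (n + 1) (by omega)
      obtain ⟨hp0, hq0, _⟩ := ih n (by omega)
      have ha := cf_pos hirr n
      refine ⟨?_, by positivity, ?_⟩
      · rw [pConv]; nlinarith
      · show 1 ≤ cfA α (n + 2) * qConv (cfA α) (n + 2) + qConv (cfA α) (n + 1)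
        have ha2 := cf_pos hirr (n + 1)
        have : 1 ≤ qConv (cfA α) (n + 2) := hq1'
        nlinarith

noncomputable def et (α : ℝ) (n : ℕ) : ℝ := (pConv (cfA α) n : ℝ) - α * (qConv (cfA α) n : ℝ)

@[simp] lemma et_zero : et α 0 = 1 := by simp [et, pConv, qConv]

lemma et_rec (hirr : Irrational α) : ∀ n, et α (n + 1) * gaussIter α (n + 1) + et α n = 0 := by
  intro n
  induction n with
  | zero =>
    have h := x_recur hirr 0
    have h0 : gaussIter α 0 = α := rfl
    rw [et, et]
    simp only [pConv, qConv]
    push_cast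
    rw [h0] at h
    nlinarith [h]
  | succ n ih =>
    have h := x_recur hirr (n + 1)
    have hrec : et α (n + 2) = (cfA α (n + 1) : ℝ) * et α (n + 1) + et α n := by
      rw [et, et, et]
      show ((cfA α (n+1) * pConv (cfA α) (n+1) + pConv (cfA α) n : ℤ) : ℝ) - α * ((cfA α (n+1) * qConv (cfA α) (n+1) + qConv (cfA α) n : ℤ) : ℝ) = _
      push_cast
      ring
    rw [hrec]
    linear_combination gaussIter α (n + 1 + 1) * ih - et α (n + 1) * h

lemma et_succ (hirr : Irrational α) (n : ℕ) : et α (n + 1) = - et α n / gaussIter α (n + 1) := by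
  have h := et_rec hirr n
  have hx : gaussIter α (n + 1) ≠ 0 := ne_of_gt (lt_trans one_pos (gauss_gt_one hirr n))
  field_simp
  linarith

lemma et_ne (hirr : Irrational α) : ∀ n, et α n ≠ 0
  | 0 => by simp
  | n + 1 => by
    rw [et_succ hirr n]
    have hx : gaussIter α (n + 1) ≠ 0 := ne_of_gt (lt_trans one_pos (gauss_gt_one hirr n))
    exact div_ne_zero (neg_ne_zero.mpr (et_ne hirr n)) hx

lemma abs_et_succ (hirr : Irrational α) (n : ℕ) : |et α (n + 1)| = |et α n| / gaussIter α (n + 1) := by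
  rw [et_succ hirr n, abs_div, abs_neg, abs_of_pos (lt_trans one_pos (gauss_gt_one hirr n))]

lemma abs_et_lt (hirr : Irrational α) (n : ℕ) : |et α (n + 1)| < |et α n| := by
  rw [abs_et_succ hirr n]
  have h1 := gauss_gt_one hirr n
  have h2 : 0 < |et α n| := abs_pos.mpr (et_ne hirr n)
  rw [div_lt_iff₀ (by linarith)]
  nlinarith

lemma abs_et_antitone (hirr : Irrational α) {s t : ℕ} (h : s ≤ t) : |et α t| ≤ |et α s| := by
  induction t with
  | zero => simp_all
  | succ t ih =>
    rcases Nat.lt_or_ge s (t + 1) with h2 | h2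
    · exact le_trans (abs_et_lt hirr t).le (ih (by omega))
    · have : s = t + 1 := le_antisymm h h2
      simp [this]

lemma abs_et_pos (hirr : Irrational α) (n : ℕ) : 0 < |et α n| := abs_pos.mpr (et_ne hirr n)

-- ===== node machinery =====
noncomputable def pcE (α : ℝ) : ℕ → ℤ
  | 0 => 0
  | t + 1 => pConv (cfA α) t

noncomputable def qcE (α : ℝ) : ℕ → ℤ
  | 0 => 1
  | t + 1 => qConv (cfA α) t

noncomputable def mcol (α : ℝ) (t : ℕ) : ℤ × ℤ := (pConv (cfA α) t, qConv (cfA α) t)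

noncomputable def ocol (α : ℝ) (t i : ℕ) : ℤ × ℤ :=
  ((i : ℤ) * pConv (cfA α) t + pcE α t, (i : ℤ) * qConv (cfA α) t + qcE α t)

noncomputable def node (α : ℝ) (t i : ℕ) : (ℤ × ℤ) × (ℤ × ℤ) :=
  if t % 2 = 0 then (mcol α t, ocol α t i) else (ocol α t i, mcol α t)

noncomputable def pstep (α : ℝ) (w : (ℤ × ℤ) × (ℤ × ℤ)) : (ℤ × ℤ) × (ℤ × ℤ) :=
  if |va α w.2| < |va α w.1| then (w.1 + w.2, w.2) else (w.1, w.1 + w.2)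

noncomputable def pit (α : ℝ) (j : ℕ) : (ℤ × ℤ) × (ℤ × ℤ) :=
  (pstep α)^[j] ((1, 0), (0, 1))

lemma pit_zero : pit α 0 = ((1, 0), (0, 1)) := rfl

lemma pit_succ (j : ℕ) : pit α (j + 1) = pstep α (pit α j) :=
  Function.iterate_succ_apply' _ _ _

lemma va_mcol (t : ℕ) : va α (mcol α t) = et α t := rfl

noncomputable def etE (α : ℝ) (t : ℕ) : ℝ := (pcE α t : ℝ) - α * (qcE α t : ℝ)

lemma etE_eq (hirr : Irrational α) (t : ℕ) :
    etE α t = - gaussIter α t * et α t := by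
  cases t with
  | zero => simp [etE, pcE, qcE]; rfl
  | succ t =>
    have h := et_succ hirr t
    have hx : gaussIter α (t + 1) ≠ 0 := ne_of_gt (lt_trans one_pos (gauss_gt_one hirr t))
    have : etE α (t + 1) = et α t := rfl
    rw [this, h]
    field_simp

lemma va_ocol (hirr : Irrational α) (t i : ℕ) :
    va α (ocol α t i) = ((i : ℝ) - gaussIter α t) * et α t := by
  have h1 : va α (ocol α t i) = (i : ℝ) * et α t + etE α t := by
    rw [va, ocol, et, etE]
    push_cast
    ring
  rw [h1, etE_eq hirr t]
  ring

lemma x_sub_gt_one (hirr : Irrational α) {t : ℕ} {i : ℕ} (hi : (i : ℤ) < cfA α t) :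
    (i : ℝ) + 1 < gaussIter α t := by
  have h1 : ((i : ℤ) : ℝ) + 1 ≤ (cfA α t : ℝ) := by exact_mod_cast hi
  have h2 := cf_lt_gauss hirr t
  push_cast at h1 ⊢
  linarith

lemma abs_va_ocol (hirr : Irrational α) {t i : ℕ} (hi : (i : ℤ) < cfA α t) :
    |va α (ocol α t i)| = (gaussIter α t - (i : ℝ)) * |et α t| := by
  rw [va_ocol hirr, abs_mul]
  have := x_sub_gt_one hirr hi
  rw [abs_of_neg (by linarith : (i : ℝ) - gaussIter α t < 0)]
  ring

lemma abs_va_ocol_gt (hirr : Irrational α) {t i : ℕ} (hi : (i : ℤ) < cfA α t) :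
    |et α t| < |va α (ocol α t i)| := by
  rw [abs_va_ocol hirr hi]
  have h1 := x_sub_gt_one hirr (i := i) (t := t) hi
  have h2 := abs_et_pos hirr t
  nlinarith

lemma va_ocol_mul_neg (hirr : Irrational α) {t i : ℕ} (hi : (i : ℤ) < cfA α t) :
    va α (ocol α t i) * et α t < 0 := by
  rw [va_ocol hirr]
  have h1 := x_sub_gt_one hirr (i := i) (t := t) hi
  have h2 := abs_et_pos hirr t
  have h3 : 0 < et α t * et α t := mul_self_pos.mpr (et_ne hirr t)
  nlinarith

lemma mcol_add_ocol (t i : ℕ) : mcol α t + ocol α t i = ocol α t (i + 1) := by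
  rw [mcol, ocol, ocol, Prod.ext_iff]
  constructor <;> simp <;> push_cast <;> ring

lemma pstep_node (hirr : Irrational α) {t i : ℕ} (hi : (i : ℤ) < cfA α t) :
    pstep α (node α t i) = node α t (i + 1) := by
  rcases Nat.even_or_odd t with he | ho
  · have hp : t % 2 = 0 := Nat.even_iff.mp he
    rw [node, node, if_pos hp, if_pos hp, pstep]
    have hgt := abs_va_ocol_gt hirr hi
    rw [if_neg (by simp only [va_mcol]; push_neg; exact hgt.le)]
    rw [mcol_add_ocol]
  · have hodd := Nat.odd_iff.mp ho
    have hp : ¬ t % 2 = 0 := by omega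
    rw [node, node, if_neg hp, if_neg hp, pstep]
    have hgt := abs_va_ocol_gt hirr hi
    rw [if_pos (by simp only [va_mcol]; exact hgt)]
    rw [add_comm (ocol α t i), mcol_add_ocol]

lemma ocol_succ_zero (t : ℕ) : ocol α (t + 1) 0 = mcol α t := by
  simp [ocol, mcol, pcE, qcE]

lemma pc_step (t : ℕ) : pConv (cfA α) (t + 1) = cfA α t * pConv (cfA α) t + pcE α t := by
  cases t with
  | zero => simp [pConv, pcE]
  | succ t => rfl

lemma qc_step (t : ℕ) : qConv (cfA α) (t + 1) = cfA α t * qConv (cfA α) t + qcE α t := by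
  cases t with
  | zero => simp [qConv, qcE]
  | succ t => rfl

lemma mcol_succ (hα : 0 < α) (hirr : Irrational α) (t : ℕ) :
    mcol α (t + 1) = ocol α t ((cfA α t).toNat) := by
  have hnn : ((cfA α t).toNat : ℤ) = cfA α t := Int.toNat_of_nonneg (cf_nonneg hα hirr t)
  rw [mcol, ocol, hnn, ← pc_step, ← qc_step]

lemma node_roll (hα : 0 < α) (hirr : Irrational α) (t : ℕ) :
    node α t ((cfA α t).toNat) = node α (t + 1) 0 := by
  rcases Nat.even_or_odd t with he | ho
  · have hp : t % 2 = 0 := Nat.even_iff.mp he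
    have hp2 : ¬ (t + 1) % 2 = 0 := by omega
    rw [node, node, if_pos hp, if_neg hp2, ocol_succ_zero, mcol_succ hα hirr]
  · have hodd := Nat.odd_iff.mp ho
    have hp : ¬ t % 2 = 0 := by omega
    have hp2 : (t + 1) % 2 = 0 := by omega
    rw [node, node, if_neg hp, if_pos hp2, ocol_succ_zero, mcol_succ hα hirr]

noncomputable def NSn (α : ℝ) (t : ℕ) : ℕ := ∑ i ∈ Finset.range t, (cfA α i).toNat

lemma NSn_succ (t : ℕ) : NSn α (t + 1) = NSn α t + (cfA α t).toNat :=
  Finset.sum_range_succ _ _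

lemma NSn_mono {s t : ℕ} (h : s ≤ t) : NSn α s ≤ NSn α t :=
  Finset.sum_le_sum_of_subset (Finset.range_subset_range.mpr h)

lemma NSn_cast (hα : 0 < α) (hirr : Irrational α) (m : ℕ) :
    (NSn α (m + 1) : ℤ) = Nsum (cfA α) m := by
  rw [NSn, Nsum]
  push_cast
  refine Finset.sum_congr rfl (fun i _ => ?_)
  exact Int.toNat_of_nonneg (cf_nonneg hα hirr i)

lemma pit_zero_node (hα : 0 < α) (hirr : Irrational α) :
    (0 < cfA α 0 → pit α 0 = node α 0 0) ∧ (cfA α 0 = 0 → pit α 0 = node α 1 0) := by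
  constructor
  · intro _
    rw [pit_zero, node, if_pos (by norm_num)]
    simp [mcol, ocol, pcE, qcE, pConv, qConv]
  · intro h0
    rw [pit_zero, node, if_neg (by norm_num)]
    have : pConv (cfA α) 1 = 0 := by rw [pConv, h0]
    simp [mcol, ocol, pcE, qcE, pConv, qConv, this, h0]

lemma dec (hα : 0 < α) (hirr : Irrational α) {N m k : ℕ}
    (hN : N = NSn α (m + 1) + k) (hk : (k : ℤ) < cfA α (m + 1)) :
    ∀ j, j ≤ N → ∃ t i : ℕ, t ≤ m + 1 ∧ (i : ℤ) < cfA α t ∧ j = NSn α t + i ∧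
      pit α j = node α t i := by
  intro j
  induction j with
  | zero =>
    intro _
    rcases eq_or_lt_of_le (cf0_nonneg hα) with h0 | h0
    · refine ⟨1, 0, by omega, ?_, ?_, (pit_zero_node hα hirr).2 h0.symm⟩
      · exact_mod_cast cf_pos hirr 0
      · rw [NSn_succ]
        have : (cfA α 0).toNat = 0 := by omega
        simp [NSn, this]
    · exact ⟨0, 0, by omega, by exact_mod_cast h0, by simp [NSn], (pit_zero_node hα hirr).1 h0⟩
  | succ j ih =>
    intro hj
    obtain ⟨t, i, ht, hi, hji, hpit⟩ := ih (by omega)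
    have hstep : pit α (j + 1) = node α t (i + 1) := by
      rw [pit_succ, hpit, pstep_node hirr hi]
    by_cases h2 : ((i : ℤ) + 1 < cfA α t)
    · exact ⟨t, i + 1, ht, by push_cast; exact h2, by omega, hstep⟩
    · have heq : (i : ℤ) + 1 = cfA α t := by omega
      have htn : (cfA α t).toNat = i + 1 := by omega
      have hroll : node α t (i + 1) = node α (t + 1) 0 := by
        rw [← htn, node_roll hα hirr]
      have hNj : j + 1 = NSn α (t + 1) := by
        rw [NSn_succ, htn]; omega
      have ht2 : t + 1 ≤ m + 1 := by
        by_contra hcon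
        have htm : t = m + 1 := by omega
        have : j + 1 = NSn α (m + 1) + (cfA α (m + 1)).toNat := by
          rw [← htm, ← NSn_succ, ← hNj]
        have hkk : k < (cfA α (m + 1)).toNat := by omega
        omega
      refine ⟨t + 1, 0, ht2, ?_, by simpa using hNj, by rw [hstep, hroll]⟩
      exact_mod_cast cf_pos hirr t

-- ===== uniqueness and bounds =====

lemma dec_unique {N m k : ℕ}
    (hN : N = NSn α (m + 1) + k) {t i : ℕ} (ht : t ≤ m + 1)
    (hi : (i : ℤ) < cfA α t) (hj : N = NSn α t + i) : t = m + 1 ∧ i = k := by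
  rcases Nat.lt_or_ge t (m + 1) with hlt | hge
  · exfalso
    have h1 : NSn α (t + 1) ≤ NSn α (m + 1) := NSn_mono (by omega)
    have h2 : NSn α (t + 1) = NSn α t + (cfA α t).toNat := NSn_succ t
    have h3 : i < (cfA α t).toNat := by omega
    omega
  · have hteq : t = m + 1 := by omega
    subst hteq
    exact ⟨rfl, by omega⟩

lemma node_bound (hirr : Irrational α) {t i : ℕ} (hi : (i : ℤ) < cfA α t) :
    |et α t| ≤ |va α (node α t i).1| ∧ |et α t| ≤ |va α (node α t i).2| ∧
      va α (node α t i).1 * va α (node α t i).2 < 0 := by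
  have h1 := abs_va_ocol_gt hirr hi
  have h2 := va_ocol_mul_neg hirr hi
  rw [node]
  split
  · refine ⟨le_of_eq (by rw [va_mcol]), h1.le, ?_⟩
    show va α (mcol α t) * va α (ocol α t i) < 0
    rw [va_mcol]
    nlinarith [h2]
  · refine ⟨h1.le, le_of_eq (by rw [va_mcol]), ?_⟩
    show va α (ocol α t i) * va α (mcol α t) < 0
    rw [va_mcol]
    nlinarith [h2]

-- ===== summability, K =====

noncomputable def K (β : ℝ) : ℝ :=
  ∑' c : ℕ × ℕ, ((c.1 : ℝ) + 1) ^ (-(β / 2)) * ((c.2 : ℝ)) ^ (-(β / 2))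

lemma summK {β : ℝ} (hβ : 2 < β) :
    Summable (fun c : ℕ × ℕ => ((c.1 : ℝ) + 1) ^ (-(β / 2)) * ((c.2 : ℝ)) ^ (-(β / 2))) := by
  have h2 : (-(β / 2)) < -1 := by linarith
  have hg : Summable (fun n : ℕ => ((n : ℝ)) ^ (-(β / 2))) := Real.summable_nat_rpow.mpr h2
  have hf : Summable (fun n : ℕ => ((n : ℝ) + 1) ^ (-(β / 2))) := by
    have h3 := (summable_nat_add_iff 1).mpr hg
    refine h3.congr (fun n => ?_)
    push_cast
    ring_nf
  refine hf.mul_of_nonneg hg (fun n => ?_) (fun n => ?_)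
  · exact Real.rpow_nonneg (by positivity) _
  · exact Real.rpow_nonneg (Nat.cast_nonneg n) _

lemma K_nonneg {β : ℝ} : 0 ≤ K β :=
  tsum_nonneg (fun c => mul_nonneg (Real.rpow_nonneg (by positivity) _)
    (Real.rpow_nonneg (Nat.cast_nonneg _) _))

lemma term_bound {β : ℝ} (hβ : 2 < β) {ε A B : ℝ} (hε : 0 < ε) (hA : ε ≤ |A|) (hB : ε ≤ |B|)
    (hsame : 0 ≤ A * B) {p q : ℤ} (hp : 0 ≤ p) (hq : 1 ≤ q) :
    |A * (p : ℝ) + B * (q : ℝ)| ^ (-β) ≤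
      ε ^ (-β) * (((p : ℝ) + 1) ^ (-(β / 2)) * ((q : ℝ)) ^ (-(β / 2))) := by
  have hp' : (0 : ℝ) ≤ (p : ℝ) := by exact_mod_cast hp
  have hq' : (1 : ℝ) ≤ (q : ℝ) := by exact_mod_cast hq
  have habs : |A * (p : ℝ) + B * (q : ℝ)| = |A| * (p : ℝ) + |B| * (q : ℝ) := by
    rcases mul_nonneg_iff.mp hsame with ⟨hA0, hB0⟩ | ⟨hA0, hB0⟩
    · rw [abs_of_nonneg hA0, abs_of_nonneg hB0,
        abs_of_nonneg (by nlinarith : (0:ℝ) ≤ A * (p : ℝ) + B * (q : ℝ))]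
    · rw [abs_of_nonpos hA0, abs_of_nonpos hB0,
        abs_of_nonpos (by nlinarith : A * (p : ℝ) + B * (q : ℝ) ≤ 0)]
      ring
  have hlow : ε * ((p : ℝ) + (q : ℝ)) ≤ |A * (p : ℝ) + B * (q : ℝ)| := by
    rw [habs]; nlinarith
  have hpos : 0 < ε * ((p : ℝ) + (q : ℝ)) := by nlinarith
  have h1 : |A * (p : ℝ) + B * (q : ℝ)| ^ (-β) ≤ (ε * ((p : ℝ) + (q : ℝ))) ^ (-β) :=
    Real.rpow_le_rpow_of_nonpos hpos hlow (by linarith)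
  have h2 : (ε * ((p : ℝ) + (q : ℝ))) ^ (-β) = ε ^ (-β) * ((p : ℝ) + (q : ℝ)) ^ (-β) :=
    Real.mul_rpow hε.le (by linarith)
  have h3 : ((p : ℝ) + (q : ℝ)) ^ (-β) ≤ ((p : ℝ) + 1) ^ (-(β / 2)) * ((q : ℝ)) ^ (-(β / 2)) := by
    have e1 : ((p : ℝ) + 1) ^ (-(β / 2)) * ((q : ℝ)) ^ (-(β / 2)) =
        (((p : ℝ) + 1) * (q : ℝ)) ^ (-(β / 2)) :=
      (Real.mul_rpow (by linarith) (by linarith)).symm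
    have e2 : ((p : ℝ) + (q : ℝ)) ^ (-β) = (((p : ℝ) + (q : ℝ)) ^ (2 : ℝ)) ^ (-(β / 2)) := by
      rw [← Real.rpow_mul (by linarith)]
      congr 1
      ring
    have e3 : ((p : ℝ) + (q : ℝ)) ^ (2 : ℝ) = ((p : ℝ) + (q : ℝ)) ^ (2 : ℕ) := by
      rw [← Real.rpow_natCast]
      norm_num
    rw [e1, e2]
    refine Real.rpow_le_rpow_of_nonpos (by nlinarith) ?_ (by linarith)
    rw [e3]
    nlinarith
  calc |A * (p : ℝ) + B * (q : ℝ)| ^ (-β) ≤ (ε * ((p : ℝ) + (q : ℝ))) ^ (-β) := h1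
    _ = ε ^ (-β) * ((p : ℝ) + (q : ℝ)) ^ (-β) := h2
    _ ≤ ε ^ (-β) * (((p : ℝ) + 1) ^ (-(β / 2)) * ((q : ℝ)) ^ (-(β / 2))) := by
        have : (0:ℝ) ≤ ε ^ (-β) := Real.rpow_nonneg hε.le _
        nlinarith [h3]

-- ===== off-path bound =====

lemma offpath {β : ℝ} (hβ : 2 < β) {ε : ℝ} (hε : 0 < ε) {u v : ℤ × ℤ}
    (hs : 0 ≤ va α u * va α v) (hu : ε ≤ |va α u|) (hv : ε ≤ |va α v|) (n : ℕ) :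
    S α β n u v ≤ ε ^ (-β) * K β := by
  classical
  set F : ℕ × ℕ → ℝ := fun c => ((c.1 : ℝ) + 1) ^ (-(β / 2)) * ((c.2 : ℝ)) ^ (-(β / 2)) with hF
  set ι : (Fin n → Bool) → ℕ × ℕ :=
    fun σ => ((pq (List.ofFn σ)).1.toNat, (pq (List.ofFn σ)).2.toNat) with hι
  have hFnn : ∀ c, 0 ≤ F c := fun c =>
    mul_nonneg (Real.rpow_nonneg (by positivity) _) (Real.rpow_nonneg (Nat.cast_nonneg _) _)
  have hterm : ∀ σ : Fin n → Bool, g α β u v (pq (List.ofFn σ)) ≤ ε ^ (-β) * F (ι σ) := by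
    intro σ
    obtain ⟨hp, hq⟩ := pq_nonneg (List.ofFn σ)
    have b := term_bound hβ hε hu hv hs hp hq
    rw [g]
    have c1 : (((pq (List.ofFn σ)).1.toNat : ℕ) : ℝ) = ((pq (List.ofFn σ)).1 : ℝ) := by
      exact_mod_cast congrArg Int.cast (Int.toNat_of_nonneg hp)
    have c2 : (((pq (List.ofFn σ)).2.toNat : ℕ) : ℝ) = ((pq (List.ofFn σ)).2 : ℝ) := by
      exact_mod_cast congrArg Int.cast (Int.toNat_of_nonneg (by omega))
    rw [hF, hι]
    simp only []
    rw [c1, c2]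
    exact b
  have hinj : ∀ x ∈ Finset.univ, ∀ y ∈ Finset.univ, ι x = ι y → x = y := by
    intro x _ y _ hxy
    obtain ⟨hp1, hq1⟩ := pq_nonneg (List.ofFn x)
    obtain ⟨hp2, hq2⟩ := pq_nonneg (List.ofFn y)
    rw [hι] at hxy
    simp only [Prod.mk.injEq] at hxy
    have hpq : pq (List.ofFn x) = pq (List.ofFn y) := by
      refine Prod.ext ?_ ?_ <;> omega
    have hlen : (List.ofFn x).length = (List.ofFn y).length := by
      simp
    have := pq_inj _ _ hlen hpq
    exact List.ofFn_inj.mp this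
  have hsum : ∑ σ : Fin n → Bool, F (ι σ) ≤ K β := by
    rw [← Finset.sum_image hinj]
    exact Summable.sum_le_tsum _ (fun c _ => hFnn c) (summK hβ)
  calc S α β n u v ≤ ∑ σ : Fin n → Bool, ε ^ (-β) * F (ι σ) := by
        rw [S]; exact Finset.sum_le_sum (fun σ _ => hterm σ)
    _ = ε ^ (-β) * ∑ σ : Fin n → Bool, F (ι σ) := by rw [Finset.mul_sum]
    _ ≤ ε ^ (-β) * K β := by
        have : (0:ℝ) ≤ ε ^ (-β) := Real.rpow_nonneg hε.le _
        exact mul_le_mul_of_nonneg_left hsum this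

-- ===== main recursion =====

def Inv (α : ℝ) (u v : ℤ × ℤ) : Prop :=
  0 ≤ u.1 ∧ 0 ≤ u.2 ∧ 0 ≤ v.1 ∧ 0 ≤ v.2 ∧ va α u * va α v < 0

lemma main_bound {β : ℝ} (hβ : 2 < β) {ε : ℝ} (hε : 0 < ε) :
    ∀ (n : ℕ) (u v : ℤ × ℤ), Inv α u v →
      (∀ j, j ≤ n → ε ≤ |va α ((pstep α)^[j] (u, v)).1| ∧ ε ≤ |va α ((pstep α)^[j] (u, v)).2|) →
      S α β n u v ≤ |va α ((pstep α)^[n] (u, v)).2| ^ (-β) + n * (ε ^ (-β) * K β) := by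
  intro n
  induction n with
  | zero =>
    intro u v _ _
    rw [S_zero]
    simp
  | succ n ih =>
    intro u v hInv hmin
    obtain ⟨hu1, hu2, hv1, hv2, hop⟩ := hInv
    have hmin0 := hmin 0 (by omega)
    simp only [Function.iterate_zero, id_eq] at hmin0
    obtain ⟨hu, hv⟩ := hmin0
    have hmin1 := hmin 1 (by omega)
    rw [Function.iterate_one] at hmin1
    have habs_u : 0 < |va α u| := lt_of_lt_of_le hε hu
    have habs_v : 0 < |va α v| := lt_of_lt_of_le hε hv
    rw [S_succ]
    by_cases hc : |va α v| < |va α u|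
    · -- pstep (u,v) = (u+v, v); correct child = left sum term
      have hps : pstep α (u, v) = (u + v, v) := by rw [pstep, if_pos hc]
      have hsmed : ε ≤ |va α (u + v)| := by
        have := hmin1.1; rw [hps] at this; exact this
      -- wrong child (u, u+v): same sign
      have hsign : 0 ≤ va α u * va α (u + v) := by
        rw [va_add]
        nlinarith [abs_mul_abs_self (va α u), abs_mul_abs_self (va α v),
          abs_mul (va α u) (va α v), abs_of_neg hop,
          mul_le_mul_of_nonneg_left hc.le (abs_nonneg (va α u))]
      have hwrong : S α β n u (u + v) ≤ ε ^ (-β) * K β :=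
        offpath hβ hε hsign hu hsmed n
      -- correct child invariant
      have hInv2 : Inv α (u + v) v := by
        refine ⟨by simp; omega, by simp; omega, hv1, hv2, ?_⟩
        rw [va_add]
        have h5 : va α u + va α v ≠ 0 := by
          intro h0
          have h6 : va α (u + v) = 0 := (va_add α u v).trans h0
          rw [h6] at hsmed
          simp at hsmed
          linarith
        nlinarith [abs_mul_abs_self (va α v), abs_mul (va α u) (va α v), abs_of_neg hop,
          mul_lt_mul_of_pos_left hc habs_v]
      have hmin2 : ∀ j, j ≤ n → ε ≤ |va α ((pstep α)^[j] (u + v, v)).1| ∧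
          ε ≤ |va α ((pstep α)^[j] (u + v, v)).2| := by
        intro j hj
        have := hmin (j + 1) (by omega)
        rwa [Function.iterate_succ_apply, hps] at this
      have hih := ih (u + v) v hInv2 hmin2
      have hfin : ((pstep α)^[n] (u + v, v)) = ((pstep α)^[n + 1] (u, v)) := by
        rw [Function.iterate_succ_apply, hps]
      rw [hfin] at hih
      push_cast
      linarith
    · -- pstep (u,v) = (u, u+v); correct child = right sum term
      have hps : pstep α (u, v) = (u, u + v) := by rw [pstep, if_neg hc]
      push_neg at hc
      have hsmed : ε ≤ |va α (u + v)| := by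
        have := hmin1.2; rw [hps] at this; exact this
      have hmedne : va α u + va α v ≠ 0 := by
        intro h0
        have : va α (u + v) = 0 := by rw [va_add]; exact h0
        rw [this] at hsmed; simp at hsmed; linarith
      have hstrict : |va α u| < |va α v| := by
        rcases lt_or_eq_of_le hc with h | h
        · exact h
        · exfalso
          rcases abs_eq_abs.mp h.symm with h2 | h2
          · rw [h2] at hop
            nlinarith [mul_self_nonneg (va α u)]
          · exact hmedne (by rw [h2]; ring)
      have hsign : 0 ≤ va α (u + v) * va α v := by
        rw [va_add]
        nlinarith [abs_mul_abs_self (va α v), abs_mul (va α u) (va α v), abs_of_neg hop,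
          mul_le_mul_of_nonneg_right hc (abs_nonneg (va α v))]
      have hwrong : S α β n (u + v) v ≤ ε ^ (-β) * K β :=
        offpath hβ hε hsign hsmed hv n
      have hInv2 : Inv α u (u + v) := by
        refine ⟨hu1, hu2, by simp; omega, by simp; omega, ?_⟩
        rw [va_add]
        nlinarith [abs_mul_abs_self (va α u), abs_mul (va α u) (va α v), abs_of_neg hop,
          mul_lt_mul_of_pos_left hstrict habs_u]
      have hmin2 : ∀ j, j ≤ n → ε ≤ |va α ((pstep α)^[j] (u, u + v)).1| ∧
          ε ≤ |va α ((pstep α)^[j] (u, u + v)).2| := by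
        intro j hj
        have := hmin (j + 1) (by omega)
        rwa [Function.iterate_succ_apply, hps] at this
      have hih := ih u (u + v) hInv2 hmin2
      have hfin : ((pstep α)^[n] (u, u + v)) = ((pstep α)^[n + 1] (u, v)) := by
        rw [Function.iterate_succ_apply, hps]
      rw [hfin] at hih
      push_cast
      linarith

-- ===== bridge and realization =====

lemma Zpart_eq_S (N : ℕ) (α β : ℝ) : Zpart N α β = S α β N (1, 0) (0, 1) := by
  rw [Zpart, S]
  refine Finset.sum_congr rfl (fun σ _ => ?_)
  obtain ⟨h1, h2⟩ := wordProd_entries σ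
  rw [g, h1, h2]
  congr 1
  simp [va]
  ring

lemma pit_realize (α : ℝ) : ∀ j : ℕ,
    ∃ L : List Bool, L.length = j ∧ lc L = (pit α j).1 ∧ pq L = (pit α j).2 := by
  intro j
  induction j with
  | zero => exact ⟨[], rfl, rfl, rfl⟩
  | succ j ih =>
    obtain ⟨L, hlen, hlc, hpq⟩ := ih
    rw [pit_succ]
    by_cases hc : |va α (pit α j).2| < |va α (pit α j).1|
    · refine ⟨L ++ [false], by simp [hlen], ?_, ?_⟩
      · rw [lc_append_false, pstep, if_pos hc, hlc, hpq]
      · rw [pq_append_false, pstep, if_pos hc, hpq]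
    · refine ⟨L ++ [true], by simp [hlen], ?_, ?_⟩
      · rw [lc_append_true, pstep, if_neg hc, hlc]
      · rw [pq_append_true, pstep, if_neg hc, hlc, hpq]

lemma exists_word (α : ℝ) (N : ℕ) {c : ℤ × ℤ} (hc : c = (pit α N).1 ∨ c = (pit α N).2)
    (hq : 1 ≤ c.2) : ∃ σ : Fin N → Bool, pq (List.ofFn σ) = c := by
  obtain ⟨L, hlen, hlc, hpq⟩ := pit_realize α N
  have hL : ∃ L' : List Bool, L'.length = N ∧ pq L' = c := by
    rcases hc with h | h
    · rcases lc_to_pq L with h2 | ⟨L', hlen', hpq'⟩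
      · exfalso
        rw [h2] at hlc
        rw [h, ← hlc] at hq
        norm_num at hq
      · exact ⟨L', by omega, by rw [hpq', hlc, h]⟩
    · exact ⟨L, hlen, by rw [hpq, h]⟩
  obtain ⟨L', hlen', hpq'⟩ := hL
  subst hlen'
  refine ⟨L'.get, ?_⟩
  rw [List.ofFn_get]
  exact hpq'

lemma qc_comp_pos (hα : 0 < α) (hirr : Irrational α) {m k : ℕ} (hk1 : 1 ≤ k) :
    1 ≤ (ocol α (m + 1) k).2 := by
  obtain ⟨-, hq0, -⟩ := pq_conv_nonneg hα hirr m
  obtain ⟨-, -, hq1⟩ := pq_conv_nonneg hα hirr m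
  rw [ocol]
  have hqE : qcE α (m + 1) = qConv (cfA α) m := rfl
  rw [hqE]
  have : (1 : ℤ) ≤ (k : ℤ) := by exact_mod_cast hk1
  dsimp only
  nlinarith

lemma rpow_one_div_abs (x β : ℝ) : (1 / |x|) ^ β = |x| ^ (-β) := by
  rw [one_div, ← Real.rpow_neg_one |x|, ← Real.rpow_mul (abs_nonneg x)]
  congr 1
  ring

end S6

theorem stmt6 (β : ℝ) (hβ : 2 < β) :
    ∃ c : ℝ, 0 < c ∧ ∀ α : ℝ, 0 < α → Irrational α → ∀ N m k : ℕ,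
      1 ≤ N → Nsum (cfA α) 0 ≤ (N : ℤ) →
      (N : ℤ) = Nsum (cfA α) m + (k : ℤ) → (k : ℤ) < cfA α (m + 1) →
      dd α m k ^ β ≤ Zpart N α β ∧ Zpart N α β ≤ c * (N : ℝ) * dd α m 0 ^ β := by
  classical
  refine ⟨1 + S6.K β, by nlinarith [S6.K_nonneg (β := β)], ?_⟩
  intro α hα hirr N m k hN1 _ hNsum hk
  have hNnat : N = S6.NSn α (m + 1) + k := by
    have h1 : (N : ℤ) = ((S6.NSn α (m + 1) : ℕ) : ℤ) + (k : ℤ) := by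
      rw [S6.NSn_cast hα hirr]; exact hNsum
    exact_mod_cast h1
  set Em := |S6.et α (m + 1)| with hEm
  have hEmpos : 0 < Em := S6.abs_et_pos hirr (m + 1)
  have hdec := S6.dec hα hirr hNnat hk
  have hpitN : S6.pit α N = S6.node α (m + 1) k := by
    obtain ⟨t, i, ht, hi, hji, hpit⟩ := hdec N le_rfl
    obtain ⟨h1, h2⟩ := S6.dec_unique hNnat ht hi hji
    subst h1; subst h2
    exact hpit
  have hmin : ∀ j, j ≤ N → Em ≤ |S6.va α ((S6.pstep α)^[j] ((1,0),(0,1))).1| ∧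
      Em ≤ |S6.va α ((S6.pstep α)^[j] ((1,0),(0,1))).2| := by
    intro j hj
    obtain ⟨t, i, ht, hi, hji, hpit⟩ := hdec j hj
    have hb := S6.node_bound hirr hi
    have hmono : Em ≤ |S6.et α t| := S6.abs_et_antitone hirr ht
    have hpit' : (S6.pstep α)^[j] ((1,0),(0,1)) = S6.node α t i := hpit
    rw [hpit']
    exact ⟨le_trans hmono hb.1, le_trans hmono hb.2.1⟩
  have hInv : S6.Inv α (1, 0) (0, 1) := by
    refine ⟨by norm_num, by norm_num, by norm_num, by norm_num, ?_⟩
    have h1 : S6.va α (1, 0) = 1 := by simp [S6.va]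
    have h2 : S6.va α (0, 1) = -α := by simp [S6.va]
    rw [h1, h2]; linarith
  have hmain := S6.main_bound hβ hEmpos N (1,0) (0,1) hInv hmin
  have hZS : Zpart N α β = S6.S α β N (1,0) (0,1) := S6.Zpart_eq_S N α β
  have hdd0 : dd α m 0 ^ β = Em ^ (-β) := by
    rw [dd, if_pos rfl]
    have hid : |((pConv (cfA α) (m + 1) : ℤ) : ℝ) - α * ((qConv (cfA α) (m + 1) : ℤ) : ℝ)|
        = Em := rfl
    rw [hid]
    exact S6.rpow_one_div_abs _ _
  -- upper bound
  have hupper : Zpart N α β ≤ (1 + S6.K β) * (N : ℝ) * dd α m 0 ^ β := by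
    rw [hZS, hdd0]
    have hval2 := (hmin N le_rfl).2
    have h7 : |S6.va α ((S6.pstep α)^[N] ((1,0),(0,1))).2| ^ (-β) ≤ Em ^ (-β) :=
      Real.rpow_le_rpow_of_nonpos hEmpos hval2 (by linarith)
    have hEpow : 0 < Em ^ (-β) := Real.rpow_pos_of_pos hEmpos _
    have hN1' : (1 : ℝ) ≤ (N : ℝ) := by exact_mod_cast hN1
    have hK := S6.K_nonneg (β := β)
    calc S6.S α β N (1,0) (0,1)
        ≤ |S6.va α ((S6.pstep α)^[N] ((1,0),(0,1))).2| ^ (-β) + N * (Em ^ (-β) * S6.K β) :=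
          hmain
      _ ≤ Em ^ (-β) + N * (Em ^ (-β) * S6.K β) := by linarith
      _ ≤ (1 + S6.K β) * (N : ℝ) * Em ^ (-β) := by nlinarith
  -- lower bound
  have hlower : dd α m k ^ β ≤ Zpart N α β := by
    -- the target column and its value
    by_cases hk0 : k = 0
    · subst hk0
      set tgt : ℤ × ℤ := S6.mcol α (m + 1) with htgt
      have hcomp : tgt = (S6.pit α N).1 ∨ tgt = (S6.pit α N).2 := by
        rw [hpitN, S6.node]
        split
        · exact Or.inl rfl
        · exact Or.inr rfl
      have hq : 1 ≤ tgt.2 := (S6.pq_conv_nonneg hα hirr m).2.2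
      obtain ⟨σ, hσ⟩ := S6.exists_word α N hcomp hq
      have hterm : ((wordProd σ 0 1 : ℤ) : ℝ) - α * ((wordProd σ 1 1 : ℤ) : ℝ)
          = S6.va α tgt := by
        obtain ⟨h1, h2⟩ := S6.wordProd_entries σ
        rw [h1, h2, hσ]
        rfl
      have hddval : dd α m 0 ^ β = |S6.va α tgt| ^ (-β) := by
        rw [hdd0]
        rfl
      rw [hddval]
      have : |((wordProd σ 0 1 : ℤ) : ℝ) - α * ((wordProd σ 1 1 : ℤ) : ℝ)| ^ (-β)
          ≤ Zpart N α β := by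
        rw [Zpart]
        exact Finset.single_le_sum
          (f := fun τ : Fin N → Bool =>
            |((wordProd τ 0 1 : ℤ) : ℝ) - α * ((wordProd τ 1 1 : ℤ) : ℝ)| ^ (-β))
          (fun τ _ => Real.rpow_nonneg (abs_nonneg _) _) (Finset.mem_univ σ)
      rw [hterm] at this
      exact this
    · have hk1 : 1 ≤ k := by omega
      set tgt : ℤ × ℤ := S6.ocol α (m + 1) k with htgt
      have hcomp : tgt = (S6.pit α N).1 ∨ tgt = (S6.pit α N).2 := by
        rw [hpitN, S6.node]
        split
        · exact Or.inr rfl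
        · exact Or.inl rfl
      have hq : 1 ≤ tgt.2 := S6.qc_comp_pos hα hirr hk1
      obtain ⟨σ, hσ⟩ := S6.exists_word α N hcomp hq
      have hterm : ((wordProd σ 0 1 : ℤ) : ℝ) - α * ((wordProd σ 1 1 : ℤ) : ℝ)
          = S6.va α tgt := by
        obtain ⟨h1, h2⟩ := S6.wordProd_entries σ
        rw [h1, h2, hσ]
        rfl
      have hddval : dd α m k ^ β = |S6.va α tgt| ^ (-β) := by
        rw [dd, if_neg hk0]
        have hid : |(((k : ℤ) * pConv (cfA α) (m + 1) + pConv (cfA α) m : ℤ) : ℝ) -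
            α * (((k : ℤ) * qConv (cfA α) (m + 1) + qConv (cfA α) m : ℤ) : ℝ)|
            = |S6.va α tgt| := rfl
        rw [hid]
        exact S6.rpow_one_div_abs _ _
      rw [hddval]
      have : |((wordProd σ 0 1 : ℤ) : ℝ) - α * ((wordProd σ 1 1 : ℤ) : ℝ)| ^ (-β)
          ≤ Zpart N α β := by
        rw [Zpart]
        exact Finset.single_le_sum
          (f := fun τ : Fin N → Bool =>
            |((wordProd τ 0 1 : ℤ) : ℝ) - α * ((wordProd τ 1 1 : ℤ) : ℝ)| ^ (-β))
          (fun τ _ => Real.rpow_nonneg (abs_nonneg _) _) (Finset.mem_univ σ)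
      rw [hterm] at this
      exact this
  exact ⟨hlower, hupper⟩
end

section
/- There exists a positive irrational real number α such that for every real number β > 2, the limit lim_{N→∞} (log Z_N(α;β))/N exists and equals 0; in particular, α has a 1-free energy limit. -/
namespace S7
noncomputable section
open Real Filter

def aa : ℕ → ℤ := fun n => if n = 0 then 0 else (n : ℤ) + 1

lemma aa_succ (n : ℕ) : aa (n + 1) = (n : ℤ) + 2 := by simp [aa]; ring
lemma aa_two_le (n : ℕ) : 2 ≤ aa (n + 1) := by
  rw [aa_succ]; have : (0:ℤ) ≤ (n:ℤ) := Int.natCast_nonneg n; linarith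

def Q : ℕ → ℤ := qConv aa
def P : ℕ → ℤ := pConv aa

lemma Q0 : Q 0 = 0 := rfl
lemma Q1 : Q 1 = 1 := rfl
lemma Qrec (n : ℕ) : Q (n + 2) = aa (n + 1) * Q (n + 1) + Q n := rfl
lemma P0 : P 0 = 1 := rfl
lemma P1 : P 1 = 0 := rfl
lemma Prec (n : ℕ) : P (n + 2) = aa (n + 1) * P (n + 1) + P n := rfl

lemma Qpos' : ∀ n, 0 ≤ Q n ∧ 1 ≤ Q (n + 1) := by
  intro n
  induction n with
  | zero => exact ⟨le_refl 0, le_refl 1⟩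
  | succ n ih =>
    refine ⟨le_trans zero_le_one ih.2, ?_⟩
    rw [Qrec]
    nlinarith [aa_two_le n, ih.1, ih.2]

lemma Q_nonneg (n : ℕ) : 0 ≤ Q n := (Qpos' n).1
lemma Q_pos (n : ℕ) : 1 ≤ Q (n + 1) := (Qpos' n).2

lemma Q_grow (n : ℕ) : 2 * Q (n + 1) ≤ Q (n + 2) := by
  rw [Qrec]; nlinarith [aa_two_le n, Q_nonneg n, Q_pos n]

lemma Q_mono (n : ℕ) : Q (n + 1) ≤ Q (n + 2) := by
  nlinarith [Q_grow n, Q_pos n]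

lemma Q_pow (n : ℕ) : 2 ^ n ≤ Q (n + 1) := by
  induction n with
  | zero => simp [Q1]
  | succ n ih => calc (2:ℤ) ^ (n+1) = 2 * 2 ^ n := by ring
                 _ ≤ 2 * Q (n + 1) := by linarith
                 _ ≤ Q (n + 2) := Q_grow n

lemma Q_pow_mul (m : ℕ) : ∀ j, 4 ^ j * (Q (m + 1) * Q (m + 2)) ≤ Q (m + 1 + j) * Q (m + 2 + j) := by
  intro j
  induction j with
  | zero => simp
  | succ j ih =>
    have h1 : 2 * Q (m + 1 + j) ≤ Q (m + 1 + j + 1) := by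
      have e : m + 1 + j = m + j + 1 := by omega
      rw [e]; exact Q_grow (m + j)
    have h2 : 2 * Q (m + 2 + j) ≤ Q (m + 2 + j + 1) := by
      have e : m + 2 + j = m + 1 + j + 1 := by omega
      rw [e]; exact Q_grow (m + 1 + j)
    have p2 : 0 ≤ 2 * Q (m + 2 + j) := by linarith [Q_nonneg (m + 2 + j)]
    have key : (2 * Q (m + 1 + j)) * (2 * Q (m + 2 + j)) ≤ Q (m + 1 + j + 1) * Q (m + 2 + j + 1) :=
      mul_le_mul h1 h2 p2 (le_trans (by linarith [Q_nonneg (m + 1 + j)]) h1)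
    have e1 : m + 1 + (j + 1) = m + 1 + j + 1 := by omega
    have e2 : m + 2 + (j + 1) = m + 2 + j + 1 := by omega
    rw [e1, e2]
    calc 4 ^ (j + 1) * (Q (m + 1) * Q (m + 2)) = 4 * (4 ^ j * (Q (m + 1) * Q (m + 2))) := by ring
    _ ≤ 4 * (Q (m + 1 + j) * Q (m + 2 + j)) := by linarith
    _ = (2 * Q (m + 1 + j)) * (2 * Q (m + 2 + j)) := by ring
    _ ≤ _ := key

lemma Q_ub : ∀ n, Q n ≤ ((n : ℤ) + 2) ^ n := by
  have H : ∀ n, Q n ≤ ((n : ℤ) + 2) ^ n ∧ Q (n + 1) ≤ ((n : ℤ) + 3) ^ (n + 1) := by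
    intro n
    induction n with
    | zero => norm_num [Q0, Q1]
    | succ n ih =>
      obtain ⟨h1, h2⟩ := ih
      have key : Q (n + 2) ≤ ((n : ℤ) + 4) ^ (n + 2) := by
        rw [Qrec, aa_succ]
        have e2 : ((n:ℤ)+2)^n ≤ ((n:ℤ)+3)^(n+1) := by
          calc ((n:ℤ)+2)^n ≤ ((n:ℤ)+3)^n := by gcongr <;> linarith
          _ ≤ ((n:ℤ)+3)^(n+1) := by
              apply pow_le_pow_right₀ (by linarith) (by linarith)
        have e3 : ((n:ℤ)+3)^(n+2) ≤ ((n:ℤ)+4)^(n+2) := by gcongr <;> linarith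
        have e1 : ((n:ℤ) + 3) ^ (n + 2) = ((n:ℤ) + 2) * ((n:ℤ)+3)^(n+1) + ((n:ℤ)+3)^(n+1) := by ring
        nlinarith [h2]
      constructor
      · have : (((n+1:ℕ)):ℤ) + 2 = (n:ℤ) + 3 := by push_cast; ring
        rw [this]; exact h2
      · have : (((n+1:ℕ)):ℤ) + 3 = (n:ℤ) + 4 := by push_cast; ring
        rw [this]; exact key
  exact fun n => (H n).1

lemma det (n : ℕ) : P (n + 1) * Q n - P n * Q (n + 1) = (-1) ^ (n + 1) := by
  induction n with
  | zero => simp [P0, P1, Q0, Q1]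
  | succ n ih =>
    have : P (n + 2) * Q (n + 1) - P (n + 1) * Q (n + 2)
        = -(P (n + 1) * Q n - P n * Q (n + 1)) := by rw [Prec, Qrec]; ring
    rw [this, ih]; ring

-- ## Section 2 : the number alpha and the quantities th n

def Qr (n : ℕ) : ℝ := (Q n : ℝ)
def Pr (n : ℕ) : ℝ := (P n : ℝ)

lemma Qr_nonneg (n : ℕ) : 0 ≤ Qr n := by simp only [Qr]; exact_mod_cast Q_nonneg n
lemma Qr_one_le (n : ℕ) : 1 ≤ Qr (n + 1) := by simp only [Qr]; exact_mod_cast Q_pos n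
lemma Qr_pos (n : ℕ) : 0 < Qr (n + 1) := lt_of_lt_of_le zero_lt_one (Qr_one_le n)
lemma Qr_pow (n : ℕ) : (2:ℝ) ^ n ≤ Qr (n + 1) := by
  simp only [Qr]; exact_mod_cast Q_pow n

def gg : ℕ → ℝ := fun i => (-1) ^ i / (Qr (i + 1) * Qr (i + 2))

lemma gg_abs (i : ℕ) : |gg i| = 1 / (Qr (i + 1) * Qr (i + 2)) := by
  rw [gg, abs_div, abs_pow, abs_neg, abs_one, one_pow]
  congr 1
  exact abs_of_pos (mul_pos (Qr_pos i) (Qr_pos (i + 1)))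

lemma gg_bound (i : ℕ) : |gg i| ≤ (2⁻¹ : ℝ) ^ i := by
  rw [gg_abs]
  have h1 : (2:ℝ) ^ i ≤ Qr (i + 1) * Qr (i + 2) := by
    calc (2:ℝ) ^ i = 2 ^ i * 1 := by ring
    _ ≤ Qr (i + 1) * Qr (i + 2) :=
      mul_le_mul (Qr_pow i) (Qr_one_le (i + 1)) zero_le_one (le_trans (by positivity) (Qr_pow i))
  rw [div_le_iff₀ (lt_of_lt_of_le (by positivity) h1)]
  calc (1:ℝ) = 2⁻¹ ^ i * 2 ^ i := by
        rw [← mul_pow]; norm_num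
  _ ≤ 2⁻¹ ^ i * (Qr (i + 1) * Qr (i + 2)) := by
        apply mul_le_mul_of_nonneg_left h1 (by positivity)

lemma summable_gg : Summable gg := by
  apply Summable.of_abs
  apply Summable.of_nonneg_of_le (fun i => abs_nonneg _) gg_bound
  exact summable_geometric_of_lt_one (by norm_num) (by norm_num)

def alphaR : ℝ := ∑' i, gg i

lemma telescope : ∀ M, ∑ i ∈ Finset.range M, gg i = Pr (M + 1) / Qr (M + 1) := by
  intro M
  induction M with
  | zero => simp [Pr, Qr, P1, Q1]
  | succ M ih =>
    rw [Finset.sum_range_succ, ih]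
    simp only [show M + 1 + 1 = M + 2 from rfl]
    have hd : Pr (M + 2) * Qr (M + 1) - Pr (M + 1) * Qr (M + 2) = (-1) ^ M := by
      have := det (M + 1)
      have h2 : ((P (M + 2) * Q (M + 1) - P (M + 1) * Q (M + 2) : ℤ) : ℝ) = ((-1 : ℤ) ^ (M + 2) : ℝ) := by
        exact_mod_cast congrArg (fun z : ℤ => (z : ℝ)) this
      push_cast at h2
      rw [Pr, Pr, Qr, Qr]
      rw [h2]; ring
    have q1 : Qr (M + 1) ≠ 0 := ne_of_gt (Qr_pos M)
    have q2 : Qr (M + 2) ≠ 0 := ne_of_gt (Qr_pos (M + 1))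
    rw [gg]
    field_simp
    linear_combination (-1 : ℝ) * hd

def th : ℕ → ℝ := fun n => (-1) ^ n * (Pr n - Qr n * alphaR)

lemma th0 : th 0 = 1 := by simp [th, Pr, Qr, P0, Q0]

lemma threc (n : ℕ) : th (n + 2) = th n - (aa (n + 1) : ℝ) * th (n + 1) := by
  simp only [th, Pr, Qr, Prec, Qrec]
  push_cast
  ring

lemma th_tail (m : ℕ) :
    th (m + 1) = Qr (m + 1) * ∑' j, (-1) ^ j * (1 / (Qr (m + 1 + j) * Qr (m + 2 + j))) := by
  have h1 : alphaR - ∑ i ∈ Finset.range m, gg i = ∑' j, gg (j + m) := by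
    have := summable_gg.sum_add_tsum_nat_add m
    rw [alphaR]; linarith
  have h2 : th (m + 1) = Qr (m + 1) * ((-1) ^ m * (alphaR - Pr (m + 1) / Qr (m + 1))) := by
    rw [th]
    have q1 : Qr (m + 1) ≠ 0 := ne_of_gt (Qr_pos m)
    field_simp
    ring
  rw [h2, ← telescope, h1]
  congr 1
  rw [← tsum_mul_left]
  apply tsum_congr
  intro j
  have e1 : j + m + 1 = m + 1 + j := by omega
  have e2 : j + m + 2 = m + 2 + j := by omega
  rw [gg, e1, e2, mul_one_div, mul_div_assoc']
  congr 1
  rw [← pow_add, show m + (j + m) = j + 2 * m from by omega, pow_add, pow_mul]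
  norm_num

def tt (m j : ℕ) : ℝ := 1 / (Qr (m + 1 + j) * Qr (m + 2 + j))

lemma Qprod_pos (m j : ℕ) : 0 < Qr (m + 1 + j) * Qr (m + 2 + j) := by
  have h1 := Qr_pos (m + j); have h2 := Qr_pos (m + 1 + j)
  have e1 : m + 1 + j = m + j + 1 := by omega
  have e2 : m + 2 + j = m + 1 + j + 1 := by omega
  rw [e1, e2]; exact mul_pos h1 h2

lemma tt_pos (m j : ℕ) : 0 < tt m j := by
  rw [tt]; exact div_pos one_pos (Qprod_pos m j)

lemma tt_le (m j : ℕ) : tt m j ≤ tt m 0 * (4⁻¹ : ℝ) ^ j := by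
  have h : (4:ℝ) ^ j * (Qr (m + 1) * Qr (m + 2)) ≤ Qr (m + 1 + j) * Qr (m + 2 + j) := by
    have := Q_pow_mul m j
    simp only [Qr]
    exact_mod_cast this
  have h0 : (0:ℝ) < Qr (m + 1) * Qr (m + 2) := by
    have := Qprod_pos m 0; simpa using this
  rw [tt, tt]
  rw [div_le_iff₀ (Qprod_pos m j)]
  have e : 1 / (Qr (m + 1 + 0) * Qr (m + 2 + 0)) * 4⁻¹ ^ j * ((4:ℝ) ^ j * (Qr (m + 1) * Qr (m + 2))) = 1 := by
    simp only [Nat.add_zero]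
    have := (Qr_pos m).ne'; have := (Qr_pos (m + 1)).ne'
    field_simp
    rw [← mul_pow]; norm_num
  calc (1:ℝ) = 1 / (Qr (m + 1 + 0) * Qr (m + 2 + 0)) * 4⁻¹ ^ j * ((4:ℝ) ^ j * (Qr (m + 1) * Qr (m + 2))) := e.symm
  _ ≤ 1 / (Qr (m + 1 + 0) * Qr (m + 2 + 0)) * 4⁻¹ ^ j * (Qr (m + 1 + j) * Qr (m + 2 + j)) := by
      apply mul_le_mul_of_nonneg_left h
      have := tt_pos m 0
      rw [tt] at this
      positivity

lemma summable_tt (m : ℕ) : Summable (tt m) := by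
  apply Summable.of_nonneg_of_le (fun j => (tt_pos m j).le) (tt_le m)
  exact (summable_geometric_of_lt_one (by norm_num) (by norm_num)).mul_left _

lemma summable_sgn (m : ℕ) : Summable (fun j => (-1:ℝ) ^ j * tt m j) := by
  apply Summable.of_abs
  apply Summable.of_nonneg_of_le (fun j => abs_nonneg _) _ (summable_tt m)
  intro j
  rw [abs_mul, abs_pow, abs_neg, abs_one, one_pow, one_mul]
  exact le_of_eq (abs_of_pos (tt_pos m j))

lemma tail_bounds (m : ℕ) :
    (2/3) * tt m 0 ≤ (∑' j, (-1:ℝ) ^ j * tt m j) ∧ (∑' j, (-1:ℝ) ^ j * tt m j) ≤ (4/3) * tt m 0 := by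
  have hS := (summable_sgn m).tsum_eq_zero_add
  simp only [pow_zero, one_mul] at hS
  set R := ∑' j, (-1:ℝ) ^ (j + 1) * tt m (j + 1) with hR
  have hRabs : |R| ≤ (1/3) * tt m 0 := by
    have habs' : ∀ j, |(-1:ℝ) ^ (j + 1) * tt m (j + 1)| = tt m (j + 1) := by
      intro j
      rw [abs_mul, abs_pow, abs_neg, abs_one, one_pow, one_mul]
      exact abs_of_pos (tt_pos m (j + 1))
    have hs1 : Summable (fun j => (-1:ℝ) ^ (j + 1) * tt m (j + 1)) :=
      (summable_sgn m).comp_injective (add_left_injective 1)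
    have hs2 : Summable (fun j => tt m (j + 1)) :=
      (summable_tt m).comp_injective (add_left_injective 1)
    have h1 : |R| ≤ ∑' j, tt m (j + 1) := by
      rw [abs_le]
      constructor
      · rw [← tsum_neg]
        apply Summable.tsum_le_tsum _ hs2.neg hs1
        intro j
        have := (abs_le.1 (le_of_eq (habs' j))).1
        linarith
      · apply Summable.tsum_le_tsum _ hs1 hs2
        intro j
        exact le_of_abs_le (le_of_eq (habs' j))
    have h2 : ∑' j, tt m (j + 1) ≤ ∑' j : ℕ, tt m 0 * (4⁻¹:ℝ) ^ (j + 1) := by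
      apply Summable.tsum_le_tsum (fun j => tt_le m (j + 1)) hs2
      exact ((summable_geometric_of_lt_one (by norm_num) (by norm_num)).mul_left _).comp_injective (add_left_injective 1)
    have h3 : ∑' j : ℕ, tt m 0 * (4⁻¹:ℝ) ^ (j + 1) = (1/3) * tt m 0 := by
      have he : ∀ j : ℕ, tt m 0 * (4⁻¹:ℝ) ^ (j + 1) = (tt m 0 * 4⁻¹) * (4⁻¹:ℝ) ^ j := by
        intro j; ring
      rw [tsum_congr he, tsum_mul_left, tsum_geometric_of_lt_one (by norm_num) (by norm_num)]
      ring
    linarith [h1, h2, h3.le]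
  have habs := abs_le.1 hRabs
  constructor
  · rw [hS]; linarith
  · rw [hS]; linarith

lemma th_tail' (m : ℕ) : th (m + 1) = Qr (m + 1) * ∑' j, (-1:ℝ) ^ j * tt m j := th_tail m

lemma Qr_mul_tt0 (m : ℕ) : Qr (m + 1) * tt m 0 = 1 / Qr (m + 2) := by
  have h1 := (Qr_pos m).ne'
  have h2 := (Qr_pos (m + 1)).ne'
  rw [tt]
  simp only [Nat.add_zero]
  field_simp

lemma th_lb (m : ℕ) : (2/3) / Qr (m + 2) ≤ th (m + 1) := by
  rw [th_tail' m]
  have h := (tail_bounds m).1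
  have hq := (Qr_pos m).le
  calc (2/3) / Qr (m + 2) = (2/3) * (Qr (m + 1) * tt m 0) := by rw [Qr_mul_tt0]; ring
  _ = Qr (m + 1) * ((2/3) * tt m 0) := by ring
  _ ≤ Qr (m + 1) * ∑' j, (-1:ℝ) ^ j * tt m j := mul_le_mul_of_nonneg_left h hq

lemma th_ub (m : ℕ) : th (m + 1) ≤ (4/3) / Qr (m + 2) := by
  rw [th_tail' m]
  have h := (tail_bounds m).2
  have hq := (Qr_pos m).le
  calc Qr (m + 1) * ∑' j, (-1:ℝ) ^ j * tt m j ≤ Qr (m + 1) * ((4/3) * tt m 0) :=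
        mul_le_mul_of_nonneg_left h hq
  _ = (4/3) * (Qr (m + 1) * tt m 0) := by ring
  _ = (4/3) / Qr (m + 2) := by rw [Qr_mul_tt0]; ring

lemma th_pos : ∀ n, 0 < th n := by
  intro n
  cases n with
  | zero => rw [th0]; norm_num
  | succ m => exact lt_of_lt_of_le (div_pos (by norm_num) (Qr_pos (m + 1))) (th_lb m)

lemma Q2 : Q 2 = 2 := by
  have : Q 2 = aa 1 * Q 1 + Q 0 := Qrec 0
  rw [this, Q1, Q0, aa_succ 0]; ring

lemma Qr2 : Qr 2 = 2 := by rw [Qr, Q2]; norm_num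

lemma alpha_eq : alphaR = th 1 := by
  simp [th, Pr, Qr, P1, Q1]

lemma alpha_pos : 0 < alphaR := by rw [alpha_eq]; exact th_pos 1

lemma alpha_le : alphaR ≤ 2/3 := by
  rw [alpha_eq]
  have := th_ub 0
  rw [Qr2] at this
  linarith

lemma th_dec : ∀ n, th (n + 1) ≤ th n := by
  intro n
  cases n with
  | zero =>
    have h : th 1 ≤ 2/3 := by rw [← alpha_eq]; exact alpha_le
    show th 1 ≤ th 0
    rw [th0]; linarith
  | succ m =>
    have h1 := th_ub (m + 1)
    have h2 := th_lb m
    have hg : 2 * Qr (m + 2) ≤ Qr (m + 3) := by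
      simp only [Qr]; exact_mod_cast Q_grow (m + 1)
    have hp2 := Qr_pos (m + 1)
    have hp3 := Qr_pos (m + 2)
    have key : (4/3) / Qr (m + 3) ≤ (2/3) / Qr (m + 2) := by
      rw [div_le_div_iff₀ hp3 hp2]
      nlinarith
    linarith

lemma th_anti : ∀ {k n : ℕ}, k ≤ n → th n ≤ th k := by
  intro k n h
  exact antitone_nat_of_succ_le th_dec h

lemma th_le_one (n : ℕ) : th n ≤ 1 := by
  have := th_anti (Nat.zero_le n); rw [th0] at this; exact this

lemma th_split (n : ℕ) : th n = th (n + 2) + (aa (n + 1) : ℝ) * th (n + 1) := by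
  have := threc n; linarith

lemma irrational_alphaR : Irrational alphaR := by
  rintro ⟨x, hx⟩
  have hden : (0:ℝ) < (x.den : ℝ) := by exact_mod_cast x.pos
  obtain ⟨n, hn⟩ := pow_unbounded_of_one_lt ((4/3) * (x.den : ℝ)) (by norm_num : (1:ℝ) < 2)
  set K : ℤ := P (n + 1) * (x.den : ℤ) - Q (n + 1) * x.num with hKdef
  have hK : (K : ℝ) = (x.den : ℝ) * (Pr (n + 1) - Qr (n + 1) * alphaR) := by
    have hxr : alphaR = (x.num : ℝ) / (x.den : ℝ) := by rw [← hx, Rat.cast_def]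
    rw [hKdef, hxr]
    push_cast
    rw [Pr, Qr]
    field_simp
  have habs : |(K : ℝ)| = (x.den : ℝ) * th (n + 1) := by
    rw [hK, abs_mul, abs_of_pos hden]
    congr 1
    have hpos := th_pos (n + 1)
    have h2 : th (n + 1) = |th (n + 1)| := (abs_of_pos hpos).symm
    have h3 : |th (n + 1)| = |Pr (n + 1) - Qr (n + 1) * alphaR| := by
      rw [th, abs_mul, abs_pow, abs_neg, abs_one, one_pow, one_mul]
    rw [h2, h3]
  have hKne : K ≠ 0 := by
    intro h0
    rw [h0] at habs
    simp only [Int.cast_zero, abs_zero] at habs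
    have := mul_pos hden (th_pos (n + 1))
    linarith
  have h1 : (1:ℝ) ≤ |(K : ℝ)| := by
    have := Int.one_le_abs hKne
    calc (1:ℝ) = ((1:ℤ):ℝ) := by norm_num
    _ ≤ ((|K| : ℤ) : ℝ) := by exact_mod_cast this
    _ = |(K : ℝ)| := by push_cast; ring
  have h2 : |(K : ℝ)| < 1 := by
    rw [habs]
    have hu := th_ub n
    have hq : (2:ℝ) ^ (n + 1) ≤ Qr (n + 2) := Qr_pow (n + 1)
    have hq0 := Qr_pos (n + 1)
    calc (x.den : ℝ) * th (n + 1) ≤ (x.den : ℝ) * ((4/3) / Qr (n + 2)) :=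
          mul_le_mul_of_nonneg_left hu hden.le
    _ = ((4/3) * (x.den : ℝ)) / Qr (n + 2) := by ring
    _ < 1 := by
        rw [div_lt_one hq0]
        calc (4/3) * (x.den : ℝ) < 2 ^ n := hn
        _ ≤ 2 ^ (n + 1) := pow_le_pow_right₀ one_le_two (Nat.le_succ n)
        _ ≤ Qr (n + 2) := hq
  linarith


-- ## Section 3 : the potential function Phi

lemma mvt_ineq {β : ℝ} (hβ : 2 < β) {u v : ℝ} (hu : 0 < u) (hv : 0 < v) :
    (β - 2) * v * ((u + v) ^ (2 - β) / (u + v)) ≤ u ^ (2 - β) - (u + v) ^ (2 - β) := by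
  have huv : 0 < u + v := by linarith
  have hlt : u < u + v := by linarith
  have hderiv : ∀ x ∈ Set.Ioo u (u + v),
      HasDerivAt (fun y : ℝ => y ^ (2 - β)) ((2 - β) * x ^ (1 - β)) x := by
    intro x hx
    have hx0 : x ≠ 0 := ne_of_gt (lt_trans hu hx.1)
    have := Real.hasDerivAt_rpow_const (p := 2 - β) (Or.inl hx0)
    have he : (2 - β) - 1 = 1 - β := by ring
    rwa [he] at this
  have hcont : ContinuousOn (fun y : ℝ => y ^ (2 - β)) (Set.Icc u (u + v)) := by
    intro x hx
    have hx0 : x ≠ 0 := ne_of_gt (lt_of_lt_of_le hu hx.1)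
    exact ((Real.hasDerivAt_rpow_const (p := 2 - β) (Or.inl hx0)).continuousAt).continuousWithinAt
  obtain ⟨ξ, hξ, hslope⟩ := exists_hasDerivAt_eq_slope (fun y : ℝ => y ^ (2 - β))
    (fun x => (2 - β) * x ^ (1 - β)) hlt hcont hderiv
  have hξpos : 0 < ξ := lt_trans hu hξ.1
  have hmono : (u + v) ^ (1 - β) ≤ ξ ^ (1 - β) :=
    Real.rpow_le_rpow_of_nonpos hξpos hξ.2.le (by linarith)
  have huv1 : (u + v) ^ (1 - β) = (u + v) ^ (2 - β) / (u + v) := by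
    rw [show (1 - β) = (2 - β) - 1 by ring, Real.rpow_sub huv, Real.rpow_one]
  have hden : (u + v) - u = v := by ring
  rw [hden] at hslope
  have hval : u ^ (2 - β) - (u + v) ^ (2 - β) = (β - 2) * ξ ^ (1 - β) * v := by
    have hv' : v ≠ 0 := ne_of_gt hv
    field_simp at hslope
    linarith [hslope]
  rw [hval, ← huv1]
  have h1 : (β - 2) * (u + v) ^ (1 - β) * v ≤ (β - 2) * ξ ^ (1 - β) * v := by
    have hb2 : (0:ℝ) ≤ (β - 2) * v := mul_nonneg (by linarith) hv.le
    have h := mul_le_mul_of_nonneg_left hmono hb2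
    ring_nf at h ⊢
    linarith [h]
  linarith [h1]

def Phi (β u v : ℝ) : ℝ := v ^ (-β) + (β - 2)⁻¹ * (u ^ (1 - β) / v)

lemma rpow_one_sub {x β : ℝ} (hx : 0 < x) : x ^ (1 - β) = x ^ (2 - β) / x := by
  rw [show (1 - β) = (2 - β) - 1 by ring, Real.rpow_sub hx, Real.rpow_one]

lemma rpow_neg_beta {x β : ℝ} (hx : 0 < x) : x ^ (-β) = x ^ (2 - β) / (x * x) := by
  rw [show (-β) = (2 - β) - 2 by ring, Real.rpow_sub hx]
  congr 1
  rw [show (2:ℝ) = ((2:ℕ):ℝ) by norm_num, Real.rpow_natCast]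
  ring

lemma Phi_step {β : ℝ} (hβ : 2 < β) {u v : ℝ} (hu : 0 < u) (hv : 0 < v) :
    Phi β (u + v) v + Phi β u (u + v) ≤ Phi β u v := by
  have huv : 0 < u + v := by linarith
  set c := (β - 2)⁻¹ with hc
  have hcpos : 0 < c := by rw [hc]; exact inv_pos.2 (by linarith)
  have hcmul : c * (β - 2) = 1 := inv_mul_cancel₀ (by linarith)
  set A := u ^ (2 - β) with hA
  set B := (u + v) ^ (2 - β) with hB
  set C := v ^ (2 - β) with hC
  have hApos : 0 < A := Real.rpow_pos_of_pos hu _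
  have hBpos : 0 < B := Real.rpow_pos_of_pos huv _
  have key : v * (B / (u + v)) ≤ c * (A - B) := by
    have h0 := mvt_ineq hβ hu hv
    have h1 := mul_le_mul_of_nonneg_left h0 hcpos.le
    calc v * (B / (u + v)) = (c * (β - 2)) * (v * (B / (u + v))) := by rw [hcmul]; ring
    _ = c * ((β - 2) * v * (B / (u + v))) := by ring
    _ ≤ c * (A - B) := h1
  have hnum : 0 ≤ c * (A - B) - v * (B / (u + v)) := by linarith
  clear_value c A B C
  have hid : Phi β u v - (Phi β (u + v) v + Phi β u (u + v))
      = (c * (A - B) - v * (B / (u + v))) / (v * (u + v)) := by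
    rw [Phi, Phi, Phi]
    rw [rpow_neg_beta hv, rpow_neg_beta huv, rpow_one_sub hu, rpow_one_sub huv]
    rw [← hA, ← hB, ← hC, ← hc]
    have hu' : u ≠ 0 := ne_of_gt hu
    have hv' : v ≠ 0 := ne_of_gt hv
    have huv' : u + v ≠ 0 := ne_of_gt huv
    field_simp
    ring
  have hfrac : 0 ≤ (c * (A - B) - v * (B / (u + v))) / (v * (u + v)) :=
    div_nonneg hnum (by positivity)
  linarith [hid ▸ hfrac]

lemma Phi_ge {β : ℝ} (hβ : 2 < β) {u v : ℝ} (hu : 0 < u) (hv : 0 < v) :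
    v ^ (-β) ≤ Phi β u v := by
  rw [Phi]
  have : 0 < (β - 2)⁻¹ * (u ^ (1 - β) / v) := by
    apply mul_pos (inv_pos.2 (by linarith))
    exact div_pos (Real.rpow_pos_of_pos hu _) hv
  linarith

lemma Phi_le {β : ℝ} (hβ : 2 < β) {u v m : ℝ} (hm : 0 < m) (hmu : m ≤ u) (hmv : m ≤ v)
    (hu1 : u ≤ 1) (hv1 : v ≤ 1) :
    Phi β u v ≤ (1 + (β - 2)⁻¹) * m ^ (-β) := by
  have hu : 0 < u := lt_of_lt_of_le hm hmu
  have hv : 0 < v := lt_of_lt_of_le hm hmv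
  have h1 : v ^ (-β) ≤ m ^ (-β) := Real.rpow_le_rpow_of_nonpos hm hmv (by linarith)
  have h2 : u ^ (1 - β) ≤ m ^ (1 - β) := Real.rpow_le_rpow_of_nonpos hm hmu (by linarith)
  have h3 : u ^ (1 - β) / v ≤ m ^ (1 - β) / m := by
    apply div_le_div₀ (Real.rpow_pos_of_pos hm _).le h2 hm hmv
  have h4 : m ^ (1 - β) / m = m ^ (-β) := by
    rw [rpow_one_sub hm, rpow_neg_beta hm]
    field_simp
  have hcpos : (0:ℝ) < (β - 2)⁻¹ := inv_pos.2 (by linarith)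
  rw [Phi]
  have h5 : (β - 2)⁻¹ * (u ^ (1 - β) / v) ≤ (β - 2)⁻¹ * m ^ (-β) := by
    apply mul_le_mul_of_nonneg_left _ hcpos.le
    rw [← h4]; exact h3
  nlinarith [h1, h5]



-- ## Section 4 : the partition sums Hs

def pw {N : ℕ} (σ : Fin N → Bool) : ℝ := ((wordProd σ 0 1 : ℤ) : ℝ)
def qw {N : ℕ} (σ : Fin N → Bool) : ℝ := ((wordProd σ 1 1 : ℤ) : ℝ)

def Hs (β : ℝ) (N : ℕ) (u v : ℝ) : ℝ :=
  ∑ σ : Fin N → Bool, |u * pw σ + v * qw σ| ^ (-β)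

lemma wordProd_nil (σ : Fin 0 → Bool) : wordProd σ = 1 := by
  simp [wordProd]

lemma wordProd_cons {N : ℕ} (b : Bool) (σ : Fin N → Bool) :
    wordProd (Fin.cons b σ) = (if b then A1 else A0) * wordProd σ := by
  rw [wordProd, List.ofFn_succ]
  simp only [Fin.cons_zero, Fin.cons_succ]
  rw [List.prod_cons]
  rfl

lemma A0_mul_01 (M : Matrix (Fin 2) (Fin 2) ℤ) : (A0 * M) 0 1 = M 0 1 := by
  simp [A0, Matrix.mul_apply, Fin.sum_univ_two]
lemma A0_mul_11 (M : Matrix (Fin 2) (Fin 2) ℤ) : (A0 * M) 1 1 = M 0 1 + M 1 1 := by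
  simp [A0, Matrix.mul_apply, Fin.sum_univ_two]
lemma A1_mul_01 (M : Matrix (Fin 2) (Fin 2) ℤ) : (A1 * M) 0 1 = M 0 1 + M 1 1 := by
  simp [A1, Matrix.mul_apply, Fin.sum_univ_two]
lemma A1_mul_11 (M : Matrix (Fin 2) (Fin 2) ℤ) : (A1 * M) 1 1 = M 1 1 := by
  simp [A1, Matrix.mul_apply, Fin.sum_univ_two]

lemma pw_cons_false {N : ℕ} (σ : Fin N → Bool) : pw (Fin.cons false σ) = pw σ := by
  rw [pw, wordProd_cons]; simp [A0_mul_01, pw]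
lemma qw_cons_false {N : ℕ} (σ : Fin N → Bool) : qw (Fin.cons false σ) = pw σ + qw σ := by
  rw [qw, wordProd_cons]; simp [A0_mul_11, pw, qw]
lemma pw_cons_true {N : ℕ} (σ : Fin N → Bool) : pw (Fin.cons true σ) = pw σ + qw σ := by
  rw [pw, wordProd_cons]; simp [A1_mul_01, pw, qw]
lemma qw_cons_true {N : ℕ} (σ : Fin N → Bool) : qw (Fin.cons true σ) = qw σ := by
  rw [qw, wordProd_cons]; simp [A1_mul_11, qw]

lemma Hs_zero (β u v : ℝ) : Hs β 0 u v = |v| ^ (-β) := by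
  rw [Hs]
  rw [Fintype.sum_eq_single (fun i : Fin 0 => false) (by intro σ h; exfalso; apply h; funext i; exact absurd i.2 (by omega))]
  simp [pw, qw, wordProd_nil, Matrix.one_apply]

lemma Hs_succ (β : ℝ) (N : ℕ) (u v : ℝ) :
    Hs β (N + 1) u v = Hs β N (u + v) v + Hs β N u (u + v) := by
  rw [Hs]
  rw [← Equiv.sum_comp (Fin.consEquiv (fun _ : Fin (N + 1) => Bool))
      (fun σ => |u * pw σ + v * qw σ| ^ (-β))]
  rw [Fintype.sum_prod_type]
  rw [Fintype.sum_bool]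
  have h1 : ∀ σ : Fin N → Bool,
      |u * pw (Fin.cons true σ) + v * qw (Fin.cons true σ)| ^ (-β)
      = |u * pw σ + (u + v) * qw σ| ^ (-β) := by
    intro σ
    rw [pw_cons_true, qw_cons_true]
    congr 1
    rw [abs_eq_abs]
    left; ring
  have h0 : ∀ σ : Fin N → Bool,
      |u * pw (Fin.cons false σ) + v * qw (Fin.cons false σ)| ^ (-β)
      = |(u + v) * pw σ + v * qw σ| ^ (-β) := by
    intro σ
    rw [pw_cons_false, qw_cons_false]
    congr 1
    rw [abs_eq_abs]
    left; ring
  have e1 : ∀ σ : Fin N → Bool,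
      (Fin.consEquiv (fun _ : Fin (N + 1) => Bool)) (true, σ) = Fin.cons true σ := fun _ => rfl
  have e0 : ∀ σ : Fin N → Bool,
      (Fin.consEquiv (fun _ : Fin (N + 1) => Bool)) (false, σ) = Fin.cons false σ := fun _ => rfl
  simp only [e1, e0]
  rw [Finset.sum_congr rfl (fun σ _ => h1 σ), add_comm]
  congr 1
  rw [Finset.sum_congr rfl (fun σ _ => h0 σ)]
  rfl

lemma Hs_neg (β : ℝ) (N : ℕ) (u v : ℝ) : Hs β N (-u) (-v) = Hs β N u v := by
  rw [Hs, Hs]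
  apply Finset.sum_congr rfl
  intro σ _
  congr 1
  rw [abs_eq_abs]
  right; ring

lemma Hs_le_Phi {β : ℝ} (hβ : 2 < β) :
    ∀ N : ℕ, ∀ u v : ℝ, 0 < u → 0 < v → Hs β N u v ≤ Phi β u v := by
  intro N
  induction N with
  | zero =>
    intro u v hu hv
    rw [Hs_zero, abs_of_pos hv]
    exact Phi_ge hβ hu hv
  | succ N ih =>
    intro u v hu hv
    have huv : 0 < u + v := by linarith
    rw [Hs_succ]
    have h1 := ih (u + v) v huv hv
    have h2 := ih u (u + v) hu huv
    have h3 := Phi_step hβ hu hv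
    linarith

lemma Zpart_eq (N : ℕ) (α β : ℝ) : Zpart N α β = Hs β N 1 (-α) := by
  rw [Zpart, Hs]
  apply Finset.sum_congr rfl
  intro σ _
  congr 1
  rw [abs_eq_abs]
  left
  rw [pw, qw]
  ring


-- ## Section 5 : the orbit of the subtractive algorithm

def orb : ℕ → ℝ × ℝ
  | 0 => (1, alphaR)
  | k + 1 =>
    if (orb k).2 < (orb k).1 then ((orb k).1 - (orb k).2, (orb k).2)
    else ((orb k).1, (orb k).2 - (orb k).1)

def GoodAt (k m j : ℕ) : Prop :=
  (j : ℤ) < aa (m + 1) ∧ (k : ℤ) = Nsum aa m + (j : ℤ) ∧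
  (((orb k).1 = th m - (j : ℝ) * th (m + 1) ∧ (orb k).2 = th (m + 1)) ∨
   ((orb k).2 = th m - (j : ℝ) * th (m + 1) ∧ (orb k).1 = th (m + 1)))

lemma Nsum_zero : Nsum aa 0 = 0 := by simp [Nsum, aa]
lemma Nsum_succ (m : ℕ) : Nsum aa (m + 1) = Nsum aa m + aa (m + 1) :=
  Finset.sum_range_succ aa (m + 1)
lemma Nsum_mono {m M : ℕ} (h : m ≤ M) : Nsum aa m ≤ Nsum aa M := by
  rw [Nsum, Nsum]
  apply Finset.sum_le_sum_of_subset_of_nonneg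
  · exact Finset.range_subset_range.2 (by omega)
  · intro i _ _
    cases i with
    | zero => simp [aa]
    | succ n => linarith [aa_two_le n]

lemma big_lb {m j : ℕ} (hj : (j : ℤ) < aa (m + 1)) :
    th (m + 1) + th (m + 2) ≤ th m - (j : ℝ) * th (m + 1) := by
  have hsplit := th_split m
  have hj' : (j : ℝ) + 1 ≤ (aa (m + 1) : ℝ) := by exact_mod_cast hj
  have hp := th_pos (m + 1)
  nlinarith [hj', hp]

lemma big_sub_lb {m j : ℕ} (hj : (j : ℤ) < aa (m + 1)) :
    th (m + 2) ≤ th m - (j : ℝ) * th (m + 1) - th (m + 1) := by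
  have := big_lb hj
  linarith

lemma big_ub {m j : ℕ} : th m - (j : ℝ) * th (m + 1) ≤ 1 := by
  have h1 := th_le_one m
  have h2 := th_pos (m + 1)
  have h3 : (0:ℝ) ≤ (j : ℝ) := Nat.cast_nonneg j
  nlinarith

lemma good_zero : GoodAt 0 0 0 := by
  refine ⟨by rw [aa_succ]; norm_num, by rw [Nsum_zero]; norm_num, Or.inl ⟨?_, ?_⟩⟩
  · norm_num [orb, th0]
  · norm_num [orb, alpha_eq]

lemma good_step {k m j : ℕ} (h : GoodAt k m j) : ∃ m' j', GoodAt (k + 1) m' j' := by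
  obtain ⟨hj, hk, hor⟩ := h
  set B := th (m + 1) with hB
  set big := th m - (j : ℝ) * th (m + 1) with hbig
  have hBpos := th_pos (m + 1)
  have hlt : B < big := by
    have := big_lb hj
    have := th_pos (m + 2)
    rw [hB, hbig]; linarith
  have horb : orb (k + 1) = ((orb k).1 - (orb k).2, (orb k).2) ∨
      orb (k + 1) = ((orb k).1, (orb k).2 - (orb k).1) := by
    by_cases hc : (orb k).2 < (orb k).1
    · left; rw [show orb (k+1) = if (orb k).2 < (orb k).1 then ((orb k).1 - (orb k).2, (orb k).2)
        else ((orb k).1, (orb k).2 - (orb k).1) from rfl, if_pos hc]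
    · right; rw [show orb (k+1) = if (orb k).2 < (orb k).1 then ((orb k).1 - (orb k).2, (orb k).2)
        else ((orb k).1, (orb k).2 - (orb k).1) from rfl, if_neg hc]
  -- the new unordered pair is {big - B, B}
  have hpair : ((orb (k+1)).1 = big - B ∧ (orb (k+1)).2 = B) ∨
      ((orb (k+1)).2 = big - B ∧ (orb (k+1)).1 = B) := by
    rcases hor with ⟨h1, h2⟩ | ⟨h1, h2⟩
    · -- fst = big, snd = B, so snd < fst
      have hc : (orb k).2 < (orb k).1 := by rw [h1, h2]; exact hlt
      have : orb (k + 1) = ((orb k).1 - (orb k).2, (orb k).2) := by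
        rw [show orb (k+1) = if (orb k).2 < (orb k).1 then ((orb k).1 - (orb k).2, (orb k).2)
          else ((orb k).1, (orb k).2 - (orb k).1) from rfl, if_pos hc]
      left
      rw [this]
      exact ⟨by simp [h1, h2], by simp [h2]⟩
    · -- snd = big, fst = B, so ¬(snd < fst)
      have hc : ¬ ((orb k).2 < (orb k).1) := by rw [h1, h2]; exact not_lt.2 hlt.le
      have : orb (k + 1) = ((orb k).1, (orb k).2 - (orb k).1) := by
        rw [show orb (k+1) = if (orb k).2 < (orb k).1 then ((orb k).1 - (orb k).2, (orb k).2)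
          else ((orb k).1, (orb k).2 - (orb k).1) from rfl, if_neg hc]
      right
      rw [this]
      exact ⟨by simp [h1, h2], by simp [h2]⟩
  by_cases hlast : (j : ℤ) + 1 < aa (m + 1)
  · refine ⟨m, j + 1, hlast, ?_, ?_⟩
    · push_cast
      push_cast at hk
      linarith
    · have hval : big - B = th m - ((j:ℝ) + 1) * th (m + 1) := by rw [hbig, hB]; ring
      rcases hpair with ⟨h1, h2⟩ | ⟨h1, h2⟩
      · left
        constructor
        · rw [h1, hval]; push_cast; ring_nf
        · rw [h2]
      · right
        constructor
        · rw [h1, hval]; push_cast; ring_nf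
        · rw [h2]
  · have hj1 : (j : ℤ) + 1 = aa (m + 1) := by omega
    have hval : big - B = th (m + 2) := by
      have := threc m
      have hj1' : (j : ℝ) + 1 = (aa (m + 1) : ℝ) := by exact_mod_cast hj1
      rw [hbig, hB]
      nlinarith [this, hj1']
    refine ⟨m + 1, 0, ?_, ?_, ?_⟩
    · rw [aa_succ]
      have : (0:ℤ) ≤ (m:ℤ) + 1 := by positivity
      omega
    · rw [Nsum_succ]
      push_cast
      push_cast at hk
      omega
    · rcases hpair with ⟨h1, h2⟩ | ⟨h1, h2⟩
      · right
        constructor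
        · rw [h2, hB]; norm_num
        · rw [h1, hval]
      · left
        constructor
        · rw [h2, hB]; norm_num
        · rw [h1, hval]

lemma good_all : ∀ k, ∃ m j, GoodAt k m j := by
  intro k
  induction k with
  | zero => exact ⟨0, 0, good_zero⟩
  | succ k ih =>
    obtain ⟨m, j, h⟩ := ih
    exact good_step h

lemma run_lt {k m j M : ℕ} (h : GoodAt k m j) (hk : (k : ℤ) < Nsum aa M) : m < M := by
  by_contra hc
  push_neg at hc
  have h1 : Nsum aa M ≤ Nsum aa m := Nsum_mono hc
  have h2 : (k : ℤ) = Nsum aa m + (j : ℤ) := h.2.1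
  have h3 : (0:ℤ) ≤ (j:ℤ) := Int.natCast_nonneg j
  omega

lemma orb_min {M k : ℕ} (hk : (k : ℤ) < Nsum aa M) :
    th (M + 1) ≤ (orb k).1 ∧ th (M + 1) ≤ (orb k).2 ∧
    th (M + 1) ≤ |(orb k).1 - (orb k).2| ∧ (orb k).1 ≤ 1 ∧ (orb k).2 ≤ 1 := by
  obtain ⟨m, j, h⟩ := good_all k
  have hm := run_lt h hk
  obtain ⟨hj, -, hor⟩ := h
  have hBth : th (M + 1) ≤ th (m + 1) := th_anti (by omega)
  have hDth : th (M + 1) ≤ th (m + 2) := th_anti (by omega)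
  have hbig : th (m + 1) + th (m + 2) ≤ th m - (j : ℝ) * th (m + 1) := big_lb hj
  have hsub := big_sub_lb hj
  have hub : th m - (j : ℝ) * th (m + 1) ≤ 1 := big_ub
  have hp1 := th_pos (m + 1)
  have hp2 := th_pos (m + 2)
  rcases hor with ⟨h1, h2⟩ | ⟨h1, h2⟩
  · refine ⟨by rw [h1]; linarith, by rw [h2]; linarith, ?_, by rw [h1]; linarith,
      by rw [h2]; linarith⟩
    rw [h1, h2, abs_of_pos (by linarith)]
    linarith
  · refine ⟨by rw [h2]; linarith, by rw [h1]; linarith, ?_, by rw [h2]; linarith,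
      by rw [h1]; linarith⟩
    rw [h1, h2, abs_of_neg (by linarith)]
    linarith


-- ## Section 6 : the key upper bound for Zpart

lemma rpow_neg_anti {β x y : ℝ} (hx : 0 < x) (hxy : x ≤ y) (hβ : 0 < β) :
    y ^ (-β) ≤ x ^ (-β) :=
  Real.rpow_le_rpow_of_nonpos hx hxy (by linarith)

lemma key_bound {β : ℝ} (hβ : 2 < β) (M : ℕ) :
    ∀ N k : ℕ, ((k + N : ℕ) : ℤ) < Nsum aa M →
      Hs β N (orb k).1 (-(orb k).2) ≤
        (N : ℝ) * ((1 + (β - 2)⁻¹) * th (M + 1) ^ (-β)) + th (M + 1) ^ (-β) := by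
  intro N
  induction N with
  | zero =>
    intro k hk
    have hk' : (k : ℤ) < Nsum aa M := by push_cast at hk; omega
    obtain ⟨h1, h2, h3, h4, h5⟩ := orb_min hk'
    have hthp := th_pos (M + 1)
    have hsndpos : 0 < (orb k).2 := lt_of_lt_of_le hthp h2
    rw [Hs_zero, abs_neg, abs_of_pos hsndpos]
    have := rpow_neg_anti hthp h2 (by linarith : (0:ℝ) < β)
    simp only [Nat.cast_zero, zero_mul, zero_add]
    exact this
  | succ N ih =>
    intro k hk
    have hk' : (k : ℤ) < Nsum aa M := by push_cast at hk; omega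
    have hk1 : ((k + 1 + N : ℕ) : ℤ) < Nsum aa M := by push_cast at hk ⊢; omega
    obtain ⟨h1, h2, h3, h4, h5⟩ := orb_min hk'
    have hthp := th_pos (M + 1)
    have hc : (0:ℝ) < (β - 2)⁻¹ := inv_pos.2 (by linarith)
    have hu : 0 < (orb k).1 := lt_of_lt_of_le hthp h1
    have hw : 0 < (orb k).2 := lt_of_lt_of_le hthp h2
    set u := (orb k).1 with hudef
    set w := (orb k).2 with hwdef
    have hne : u ≠ w := by
      intro hcon
      rw [hcon] at h3
      simp at h3
      linarith
    have hrec : Hs β (N + 1) u (-w) = Hs β N (u - w) (-w) + Hs β N u (u - w) := by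
      have := Hs_succ β N u (-w)
      rw [show u + -w = u - w by ring] at this
      exact this
    have hPhi_bound : ∀ a b : ℝ, th (M + 1) ≤ a → th (M + 1) ≤ b → a ≤ 1 → b ≤ 1 →
        Hs β N a b ≤ (1 + (β - 2)⁻¹) * th (M + 1) ^ (-β) := by
      intro a b ha hb ha1 hb1
      have hap : 0 < a := lt_of_lt_of_le hthp ha
      have hbp : 0 < b := lt_of_lt_of_le hthp hb
      calc Hs β N a b ≤ Phi β a b := Hs_le_Phi hβ N a b hap hbp
      _ ≤ (1 + (β - 2)⁻¹) * th (M + 1) ^ (-β) := Phi_le hβ hthp ha hb ha1 hb1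
    by_cases hcase : w < u
    · have horb1 : orb (k + 1) = (u - w, w) := by
        rw [show orb (k+1) = if (orb k).2 < (orb k).1 then ((orb k).1 - (orb k).2, (orb k).2)
          else ((orb k).1, (orb k).2 - (orb k).1) from rfl, if_pos hcase]
      have hterm1 : Hs β N (u - w) (-w) ≤
          (N : ℝ) * ((1 + (β - 2)⁻¹) * th (M + 1) ^ (-β)) + th (M + 1) ^ (-β) := by
        have := ih (k + 1) hk1
        rw [horb1] at this
        exact this
      have hdiff : th (M + 1) ≤ u - w := by
        rw [abs_of_pos (by linarith : (0:ℝ) < u - w)] at h3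
        exact h3
      have hterm2 : Hs β N u (u - w) ≤ (1 + (β - 2)⁻¹) * th (M + 1) ^ (-β) :=
        hPhi_bound u (u - w) h1 hdiff h4 (by linarith)
      rw [hrec]
      push_cast
      linarith
    · have hlt : u < w := lt_of_le_of_ne (not_lt.1 hcase) hne
      have horb1 : orb (k + 1) = (u, w - u) := by
        rw [show orb (k+1) = if (orb k).2 < (orb k).1 then ((orb k).1 - (orb k).2, (orb k).2)
          else ((orb k).1, (orb k).2 - (orb k).1) from rfl, if_neg hcase]
      have hterm1 : Hs β N u (u - w) ≤
          (N : ℝ) * ((1 + (β - 2)⁻¹) * th (M + 1) ^ (-β)) + th (M + 1) ^ (-β) := by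
        have := ih (k + 1) hk1
        rw [horb1] at this
        rw [show u - w = -(w - u) by ring]
        exact this
      have hdiff : th (M + 1) ≤ w - u := by
        rw [abs_of_neg (by linarith : u - w < 0)] at h3
        rw [show -(u - w) = w - u by ring] at h3
        exact h3
      have hterm2 : Hs β N (u - w) (-w) ≤ (1 + (β - 2)⁻¹) * th (M + 1) ^ (-β) := by
        have heq : Hs β N (u - w) (-w) = Hs β N (w - u) w := by
          rw [show u - w = -(w - u) by ring, Hs_neg]
        rw [heq]
        exact hPhi_bound (w - u) w hdiff h2 (by linarith) h5
      rw [hrec]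
      push_cast
      linarith

lemma Zpart_ub {β : ℝ} (hβ : 2 < β) {M N : ℕ} (hNM : (N : ℤ) < Nsum aa M) :
    Zpart N alphaR β ≤ (1 + (β - 2)⁻¹) * ((N : ℝ) + 1) * th (M + 1) ^ (-β) := by
  have h0 : orb 0 = (1, alphaR) := rfl
  have := key_bound hβ M N 0 (by push_cast; omega)
  rw [h0] at this
  simp only at this
  rw [Zpart_eq]
  have hc : (0:ℝ) < (β - 2)⁻¹ := inv_pos.2 (by linarith)
  have hthp : (0:ℝ) < th (M + 1) ^ (-β) := Real.rpow_pos_of_pos (th_pos (M + 1)) _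
  calc Hs β N 1 (-alphaR) ≤ (N : ℝ) * ((1 + (β - 2)⁻¹) * th (M + 1) ^ (-β)) + th (M + 1) ^ (-β) := this
  _ ≤ (1 + (β - 2)⁻¹) * ((N : ℝ) + 1) * th (M + 1) ^ (-β) := by
      have hN : (0:ℝ) ≤ (N:ℝ) := Nat.cast_nonneg N
      nlinarith

-- lower bound : Zpart ≥ alphaR ^ (-β) ≥ 1

lemma wordProd_falses : ∀ N : ℕ, (wordProd (fun _ : Fin N => false)) 0 1 = 0 ∧
    (wordProd (fun _ : Fin N => false)) 1 1 = 1 := by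
  intro N
  induction N with
  | zero =>
    rw [wordProd_nil]
    constructor <;> simp [Matrix.one_apply]
  | succ N ih =>
    have hfun : (fun _ : Fin (N + 1) => false) = Fin.cons false (fun _ : Fin N => false) := by
      funext i
      refine Fin.cases ?_ ?_ i <;> simp
    rw [hfun, wordProd_cons]
    simp only [if_neg (by simp : ¬ (false = true))]
    rw [A0_mul_01, A0_mul_11]
    exact ⟨ih.1, by rw [ih.1, ih.2]; norm_num⟩

lemma Zpart_lb {β : ℝ} (hβ : 2 < β) (N : ℕ) : 1 ≤ Zpart N alphaR β := by
  have hterm : |((wordProd (fun _ : Fin N => false) 0 1 : ℤ) : ℝ) -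
      alphaR * ((wordProd (fun _ : Fin N => false) 1 1 : ℤ) : ℝ)| ^ (-β) = alphaR ^ (-β) := by
    rw [(wordProd_falses N).1, (wordProd_falses N).2]
    norm_num
    rw [abs_of_pos alpha_pos]
  have hsingle : alphaR ^ (-β) ≤ Zpart N alphaR β := by
    rw [Zpart, ← hterm]
    apply Finset.single_le_sum (f := fun σ : Fin N → Bool =>
      |((wordProd σ 0 1 : ℤ) : ℝ) - alphaR * ((wordProd σ 1 1 : ℤ) : ℝ)| ^ (-β))
    · intro σ _
      positivity
    · exact Finset.mem_univ _
  have hge1 : (1:ℝ) ≤ alphaR ^ (-β) := by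
    apply Real.one_le_rpow_of_pos_of_le_one_of_nonpos alpha_pos (by linarith [alpha_le]) (by linarith)
  linarith


-- ## Section 7 : putting it together

lemma Nsum_lb : ∀ M : ℕ, (M : ℤ) * M ≤ 2 * Nsum aa M := by
  intro M
  induction M with
  | zero => simp [Nsum_zero]
  | succ M ih =>
    rw [Nsum_succ, aa_succ]
    push_cast
    nlinarith [ih]

def MM (N : ℕ) : ℕ := Nat.sqrt (2 * N) + 1

lemma MM_works (N : ℕ) : (N : ℤ) < Nsum aa (MM N) := by
  have h1 : 2 * N < (Nat.sqrt (2 * N) + 1) * (Nat.sqrt (2 * N) + 1) := Nat.lt_succ_sqrt (2 * N)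
  have h2 := Nsum_lb (MM N)
  have h1' : (2 * (N:ℤ)) < (MM N : ℤ) * (MM N : ℤ) := by
    rw [show ((MM N : ℤ)) = ((Nat.sqrt (2 * N) + 1 : ℕ) : ℤ) from by rw [MM]]
    exact_mod_cast h1
  linarith

lemma logZ_ub {β : ℝ} (hβ : 2 < β) (N : ℕ) :
    Real.log (Zpart N alphaR β) ≤ Real.log (1 + (β - 2)⁻¹) + Real.log ((N : ℝ) + 1)
      + β * (Real.log (3/2) + ((MM N : ℝ) + 2) * Real.log ((MM N : ℝ) + 4)) := by
  set M := MM N with hM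
  have hZpos : 0 < Zpart N alphaR β := lt_of_lt_of_le one_pos (Zpart_lb hβ N)
  have hub := Zpart_ub hβ (MM_works N)
  have hcinv : (0:ℝ) < (β - 2)⁻¹ := inv_pos.2 (by linarith)
  have hc1 : (0:ℝ) < 1 + (β - 2)⁻¹ := by linarith
  have hN1 : (0:ℝ) < (N : ℝ) + 1 := by positivity
  have hth : 0 < th (M + 1) := th_pos _
  have hrp : 0 < th (M + 1) ^ (-β) := Real.rpow_pos_of_pos hth _
  have hlog1 : Real.log (Zpart N alphaR β)
      ≤ Real.log ((1 + (β - 2)⁻¹) * ((N : ℝ) + 1) * th (M + 1) ^ (-β)) :=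
    Real.log_le_log hZpos hub
  rw [Real.log_mul (by positivity) (ne_of_gt hrp), Real.log_mul (ne_of_gt hc1) (ne_of_gt hN1),
    Real.log_rpow hth] at hlog1
  have hQpos : 0 < Qr (M + 2) := Qr_pos (M + 1)
  have hlb : (2/3) / Qr (M + 2) ≤ th (M + 1) := th_lb M
  have hloglb : Real.log ((2/3) / Qr (M + 2)) ≤ Real.log (th (M + 1)) :=
    Real.log_le_log (by positivity) hlb
  have hlogdiv : Real.log ((2/3) / Qr (M + 2)) = Real.log (2/3) - Real.log (Qr (M + 2)) :=
    Real.log_div (by norm_num) (ne_of_gt hQpos)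
  have hQub : Qr (M + 2) ≤ ((M : ℝ) + 4) ^ (M + 2) := by
    have h := Q_ub (M + 2)
    rw [Qr]
    calc ((Q (M + 2) : ℤ) : ℝ) ≤ (((((M + 2 : ℕ)) : ℤ) + 2) ^ (M + 2) : ℤ) := by exact_mod_cast h
    _ = ((M : ℝ) + 4) ^ (M + 2) := by push_cast; ring
  have hlogQ : Real.log (Qr (M + 2)) ≤ ((M : ℝ) + 2) * Real.log ((M : ℝ) + 4) := by
    calc Real.log (Qr (M + 2)) ≤ Real.log (((M : ℝ) + 4) ^ (M + 2)) := Real.log_le_log hQpos hQub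
    _ = ((M + 2 : ℕ) : ℝ) * Real.log ((M : ℝ) + 4) := Real.log_pow _ _
    _ = ((M : ℝ) + 2) * Real.log ((M : ℝ) + 4) := by push_cast; ring
  have hlog23 : Real.log (2/3 : ℝ) = - Real.log (3/2 : ℝ) := by
    rw [show (2/3 : ℝ) = (3/2 : ℝ)⁻¹ by norm_num, Real.log_inv]
  have hβpos : (0:ℝ) < β := by linarith
  have h6 : -Real.log (th (M + 1)) ≤ Real.log (3/2) + ((M : ℝ) + 2) * Real.log ((M : ℝ) + 4) := by
    rw [hlogdiv, hlog23] at hloglb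
    linarith
  have hkey : -β * Real.log (th (M + 1))
      ≤ β * (Real.log (3/2) + ((M : ℝ) + 2) * Real.log ((M : ℝ) + 4)) := by
    calc -β * Real.log (th (M + 1)) = β * (-Real.log (th (M + 1))) := by ring
    _ ≤ β * (Real.log (3/2) + ((M : ℝ) + 2) * Real.log ((M : ℝ) + 4)) :=
        mul_le_mul_of_nonneg_left h6 hβpos.le
  linarith

lemma MM_le_sqrt {N : ℕ} (hN : 1 ≤ N) :
    ((MM N : ℝ) + 2 ≤ 5 * Real.sqrt (N : ℝ)) ∧ ((MM N : ℝ) + 4 ≤ 7 * Real.sqrt (N : ℝ)) := by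
  have hs1 : (1:ℝ) ≤ Real.sqrt (N : ℝ) := Real.one_le_sqrt.2 (by exact_mod_cast hN)
  have hspos : (0:ℝ) < Real.sqrt (N : ℝ) := by linarith
  have hns : ((Nat.sqrt (2 * N) : ℕ) : ℝ) ≤ Real.sqrt ((2 * N : ℕ) : ℝ) := by
    rw [Real.le_sqrt (by positivity) (by positivity)]
    exact_mod_cast Nat.sqrt_le' (2 * N)
  have hsm : Real.sqrt ((2 * N : ℕ) : ℝ) = Real.sqrt 2 * Real.sqrt (N : ℝ) := by
    rw [show ((2 * N : ℕ) : ℝ) = 2 * (N : ℝ) from by push_cast; ring]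
    exact Real.sqrt_mul (by norm_num) _
  have hs2 : Real.sqrt 2 ≤ 3/2 := Real.sqrt_le_iff.2 ⟨by norm_num, by norm_num⟩
  have h1 : ((Nat.sqrt (2 * N) : ℕ) : ℝ) ≤ (3/2) * Real.sqrt (N : ℝ) := by
    rw [hsm] at hns
    calc ((Nat.sqrt (2 * N) : ℕ) : ℝ) ≤ Real.sqrt 2 * Real.sqrt (N : ℝ) := hns
    _ ≤ (3/2) * Real.sqrt (N : ℝ) := mul_le_mul_of_nonneg_right hs2 hspos.le
  have hMMval : (MM N : ℝ) = ((Nat.sqrt (2 * N) : ℕ) : ℝ) + 1 := by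
    rw [MM]; push_cast; ring
  constructor
  · rw [hMMval]; nlinarith
  · rw [hMMval]; nlinarith

end
end S7

open S7 Real Filter in
theorem stmt7 :
    ∃ α : ℝ, 0 < α ∧ Irrational α ∧ ∀ β : ℝ, 2 < β →
      Filter.Tendsto (fun N : ℕ => Real.log (Zpart N α β) / (N : ℝ))
        Filter.atTop (nhds 0) := by
  refine ⟨alphaR, alpha_pos, irrational_alphaR, ?_⟩
  intro β hβ
  have hβpos : (0:ℝ) < β := by linarith
  set c1 : ℝ := Real.log (1 + (β - 2)⁻¹) + Real.log 2 + β * Real.log (3/2) with hc1def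
  -- the comparison function
  set g : ℕ → ℝ := fun N => c1 * (1 / (N : ℝ)) + Real.log (N : ℝ) / (N : ℝ)
      + (5 * β * Real.log 7) * (1 / Real.sqrt (N : ℝ))
      + (5 * β) * (Real.log (Real.sqrt (N : ℝ)) / Real.sqrt (N : ℝ)) with hgdef
  have tlogx : Tendsto (fun x : ℝ => Real.log x / x) atTop (nhds 0) := by
    have := Real.isLittleO_log_id_atTop.tendsto_div_nhds_zero
    simpa using this
  have tnat : Tendsto (fun N : ℕ => (N : ℝ)) atTop atTop := tendsto_natCast_atTop_atTop
  have tsqrt : Tendsto (fun N : ℕ => Real.sqrt (N : ℝ)) atTop atTop := by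
    have h1 : Tendsto (fun x : ℝ => x ^ (1/2 : ℝ)) atTop atTop := tendsto_rpow_atTop (by norm_num)
    apply (h1.comp tnat).congr
    intro N
    simp [Real.sqrt_eq_rpow, Function.comp]
  have t1 : Tendsto (fun N : ℕ => 1 / (N : ℝ)) atTop (nhds 0) :=
    tendsto_one_div_atTop_nhds_zero_nat
  have t2 : Tendsto (fun N : ℕ => Real.log (N : ℝ) / (N : ℝ)) atTop (nhds 0) := tlogx.comp tnat
  have t4 : Tendsto (fun N : ℕ => 1 / Real.sqrt (N : ℝ)) atTop (nhds 0) := by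
    have := tendsto_inv_atTop_zero.comp tsqrt
    simpa [one_div, Function.comp_def] using this
  have t5 : Tendsto (fun N : ℕ => Real.log (Real.sqrt (N : ℝ)) / Real.sqrt (N : ℝ)) atTop (nhds 0) :=
    tlogx.comp tsqrt
  have tg : Tendsto g atTop (nhds 0) := by
    rw [hgdef]
    have h := (((t1.const_mul c1).add t2).add
      (t4.const_mul (5 * β * Real.log 7))).add (t5.const_mul (5 * β))
    simpa using h
  apply tendsto_of_tendsto_of_tendsto_of_le_of_le' tendsto_const_nhds tg
  · filter_upwards [eventually_ge_atTop 1] with N hN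
    have hNpos : (0:ℝ) < (N : ℝ) := by exact_mod_cast hN
    exact div_nonneg (Real.log_nonneg (Zpart_lb hβ N)) hNpos.le
  · filter_upwards [eventually_ge_atTop 1] with N hN
    have hNpos : (0:ℝ) < (N : ℝ) := by exact_mod_cast hN
    have hN1' : (1:ℝ) ≤ (N : ℝ) := by exact_mod_cast hN
    set s : ℝ := Real.sqrt (N : ℝ) with hsdef
    have hs1 : (1:ℝ) ≤ s := Real.one_le_sqrt.2 (by exact_mod_cast hN)
    have hspos : (0:ℝ) < s := by linarith
    have hNsq : s * s = (N : ℝ) := Real.mul_self_sqrt hNpos.le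
    obtain ⟨hMM2, hMM4⟩ := MM_le_sqrt hN
    -- the intermediate upper bound R
    set R : ℝ := c1 + Real.log (N : ℝ) + (5 * β * Real.log 7) * s + (5 * β) * (s * Real.log s)
      with hRdef
    have hlogR : Real.log (Zpart N alphaR β) ≤ R := by
      have h0 := logZ_ub hβ N
      -- log (N+1) ≤ log 2 + log N
      have hlogN1 : Real.log ((N : ℝ) + 1) ≤ Real.log 2 + Real.log (N : ℝ) := by
        rw [← Real.log_mul (by norm_num) (ne_of_gt hNpos)]
        apply Real.log_le_log (by linarith)
        linarith
      -- the MM term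
      have hMMpos : (1:ℝ) ≤ (MM N : ℝ) + 4 := by
        have : (0:ℝ) ≤ (MM N : ℝ) := Nat.cast_nonneg _
        linarith
      have hlogMM : Real.log ((MM N : ℝ) + 4) ≤ Real.log 7 + Real.log s := by
        rw [← Real.log_mul (by norm_num) (ne_of_gt hspos)]
        apply Real.log_le_log (by linarith)
        exact hMM4
      have hterm : ((MM N : ℝ) + 2) * Real.log ((MM N : ℝ) + 4)
          ≤ (5 * s) * (Real.log 7 + Real.log s) := by
        apply mul_le_mul hMM2 hlogMM (Real.log_nonneg hMMpos)
        positivity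
      have hterm2 : β * (((MM N : ℝ) + 2) * Real.log ((MM N : ℝ) + 4))
          ≤ β * ((5 * s) * (Real.log 7 + Real.log s)) :=
        mul_le_mul_of_nonneg_left hterm hβpos.le
      rw [hRdef, hc1def]
      nlinarith [h0, hlogN1, hterm2]
    -- now divide by N
    have hdiv : Real.log (Zpart N alphaR β) / (N : ℝ) ≤ R / (N : ℝ) := by gcongr
    have hgid : R / (N : ℝ) = g N := by
      rw [hgdef, hRdef]
      simp only
      rw [← hNsq]
      have hsne : s ≠ 0 := ne_of_gt hspos
      field_simp
      rw [Real.sqrt_sq hspos.le]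
      ring
    rw [← hgid]
    exact hdiv
end

section
/- There exists a positive irrational real number α such that for every real number β > 0, the sequence N ↦ (log Z_N(α;β))/N is unbounded above; in particular, for every β > 0 the limit lim_{N→∞} (log Z_N(α;β))/N does not exist, so α has no 1-free energy limit. -/
namespace Stmt8

/-- pairs (a_m, N_m) -/
def ff : ℕ → ℕ × ℕ
  | 0 => (1, 1)
  | m + 1 =>
    let s := (ff m).2
    (2 ^ ((m + 1) * s + 1), s + 2 ^ ((m + 1) * s + 1))

def aN (m : ℕ) : ℕ := (ff m).1
def NN (m : ℕ) : ℕ := (ff m).2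

lemma aN_zero : aN 0 = 1 := rfl
lemma NN_zero : NN 0 = 1 := rfl
lemma aN_succ (m : ℕ) : aN (m + 1) = 2 ^ ((m + 1) * NN m + 1) := rfl
lemma NN_succ (m : ℕ) : NN (m + 1) = NN m + aN (m + 1) := rfl

lemma NN_pos (m : ℕ) : 0 < NN m := by
  induction m with
  | zero => norm_num [NN_zero]
  | succ m ih => rw [NN_succ]; omega

lemma aN_pos (m : ℕ) : 0 < aN m := by
  cases m with
  | zero => norm_num [aN_zero]
  | succ m => rw [aN_succ]; positivity

lemma aN_ge4 (m : ℕ) : 4 ≤ aN (m + 1) := by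
  rw [aN_succ]
  calc (4 : ℕ) = 2 ^ 2 := by norm_num
    _ ≤ 2 ^ ((m + 1) * NN m + 1) := by
        apply Nat.pow_le_pow_right (by norm_num)
        have := NN_pos m
        nlinarith

def P : ℕ → ℕ
  | 0 => 1
  | 1 => aN 0
  | n + 2 => aN (n + 1) * P (n + 1) + P n

def Q : ℕ → ℕ
  | 0 => 0
  | 1 => 1
  | n + 2 => aN (n + 1) * Q (n + 1) + Q n

lemma Q_pos : ∀ n, 0 < Q (n + 1) := by
  intro n
  induction n with
  | zero => norm_num [Q]
  | succ n ih =>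
    show 0 < aN (n + 1) * Q (n + 1) + Q n
    have := aN_pos (n + 1)
    positivity

lemma Q_mul4 (n : ℕ) : 4 * Q (n + 1) ≤ Q (n + 2) := by
  show 4 * Q (n + 1) ≤ aN (n + 1) * Q (n + 1) + Q n
  have h := aN_ge4 n
  nlinarith

lemma Q_pow : ∀ k n, 4 ^ k * Q (n + 1) ≤ Q (n + 1 + k) := by
  intro k
  induction k with
  | zero => simp
  | succ k ih =>
    intro n
    have h1 := ih (n + 1)
    have h2 := Q_mul4 n
    calc 4 ^ (k + 1) * Q (n + 1) = 4 ^ k * (4 * Q (n + 1)) := by ring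
      _ ≤ 4 ^ k * Q (n + 2) := Nat.mul_le_mul_left _ h2
      _ ≤ Q (n + 2 + k) := h1
      _ = Q (n + 1 + (k + 1)) := by ring_nf

lemma Q_ge_pow (n : ℕ) : 4 ^ n ≤ Q (n + 1) := by
  have h := Q_pow n 0
  have : Q 1 = 1 := rfl
  rw [this, Nat.mul_one] at h
  simpa [Nat.add_comm] using h

lemma det_PQ : ∀ n, (P (n + 1) : ℤ) * Q n - P n * Q (n + 1) = (-1) ^ (n + 1) := by
  intro n
  induction n with
  | zero => simp [P, Q, aN_zero]
  | succ n ih =>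
    show ((aN (n + 1) * P (n + 1) + P n : ℕ) : ℤ) * Q (n + 1)
        - P (n + 1) * ((aN (n + 1) * Q (n + 1) + Q n : ℕ) : ℤ) = (-1) ^ (n + 2)
    push_cast
    push_cast at ih
    linear_combination (-1 : ℤ) * ih


/-! ### words and matrices -/

lemma A1_pow (k : ℕ) : A1 ^ k = !![1, (k : ℤ); 0, 1] := by
  induction k with
  | zero => simp [Matrix.one_fin_two]
  | succ k ih =>
    rw [pow_succ, ih, A1, Matrix.mul_fin_two]
    push_cast
    congr 1 <;> ring

lemma A0_pow (k : ℕ) : A0 ^ k = !![1, 0; (k : ℤ), 1] := by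
  induction k with
  | zero => simp [Matrix.one_fin_two]
  | succ k ih =>
    rw [pow_succ, ih, A0, Matrix.mul_fin_two]
    push_cast
    congr 1 <;> ring

def gmat (b : Bool) : Matrix (Fin 2) (Fin 2) ℤ := if b then A1 else A0

def mlist (l : List Bool) : Matrix (Fin 2) (Fin 2) ℤ := (l.map gmat).prod

lemma mlist_append (l l' : List Bool) : mlist (l ++ l') = mlist l * mlist l' := by
  simp [mlist]

lemma mlist_replicate (k : ℕ) (b : Bool) : mlist (List.replicate k b) = gmat b ^ k := by
  simp [mlist, List.map_replicate, List.prod_replicate]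

def blk (j : ℕ) : List Bool := List.replicate (aN j) (decide (j % 2 = 0))

def wlist : ℕ → List Bool
  | 0 => blk 0
  | m + 1 => wlist m ++ blk (m + 1)

lemma blk_length (j : ℕ) : (blk j).length = aN j := by simp [blk]

lemma wlist_length (m : ℕ) : (wlist m).length = NN m := by
  induction m with
  | zero => simp [wlist, blk_length, aN_zero, NN_zero]
  | succ m ih => simp [wlist, blk_length, ih, NN_succ]

lemma mlist_blk_even (j : ℕ) (h : j % 2 = 0) : mlist (blk j) = !![1, (aN j : ℤ); 0, 1] := by
  rw [blk, mlist_replicate]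
  have : decide (j % 2 = 0) = true := by simp [h]
  rw [this]
  show A1 ^ aN j = _
  exact A1_pow _

lemma mlist_blk_odd (j : ℕ) (h : j % 2 = 1) : mlist (blk j) = !![1, 0; (aN j : ℤ), 1] := by
  rw [blk, mlist_replicate]
  have : decide (j % 2 = 0) = false := by simp [h]
  rw [this]
  show A0 ^ aN j = _
  exact A0_pow _

lemma wlist_prod : ∀ k : ℕ,
    mlist (wlist (2 * k)) = !![(P (2 * k) : ℤ), P (2 * k + 1); Q (2 * k), Q (2 * k + 1)] ∧
    mlist (wlist (2 * k + 1)) =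
      !![(P (2 * k + 2) : ℤ), P (2 * k + 1); Q (2 * k + 2), Q (2 * k + 1)] := by
  intro k
  induction k with
  | zero =>
    constructor
    · show mlist (blk 0) = _
      rw [mlist_blk_even 0 (by norm_num)]
      norm_num [P, Q, aN_zero]
    · show mlist (blk 0 ++ blk 1) = _
      rw [mlist_append, mlist_blk_even 0 (by norm_num), mlist_blk_odd 1 (by norm_num),
        Matrix.mul_fin_two]
      have hP2 : (P 2 : ℤ) = aN 1 * P 1 + P 0 := by
        show ((aN 1 * P 1 + P 0 : ℕ) : ℤ) = _; push_cast; ring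
      have hQ2 : (Q 2 : ℤ) = aN 1 * Q 1 + Q 0 := by
        show ((aN 1 * Q 1 + Q 0 : ℕ) : ℤ) = _; push_cast; ring
      rw [hP2, hQ2]
      norm_num [P, Q, aN_zero]
      ring
  | succ k ih =>
    obtain ⟨_, ih2⟩ := ih
    have heven : mlist (wlist (2 * (k + 1))) =
        !![(P (2 * (k + 1)) : ℤ), P (2 * (k + 1) + 1); Q (2 * (k + 1)), Q (2 * (k + 1) + 1)] := by
      have e : 2 * (k + 1) = (2 * k + 1) + 1 := by ring
      rw [e]
      show mlist (wlist (2 * k + 1) ++ blk (2 * k + 1 + 1)) = _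
      rw [mlist_append, ih2, mlist_blk_even _ (by omega), Matrix.mul_fin_two]
      have hP : (P (2 * k + 3) : ℤ) = aN (2 * k + 2) * P (2 * k + 2) + P (2 * k + 1) := by
        show ((aN (2 * k + 2) * P (2 * k + 2) + P (2 * k + 1) : ℕ) : ℤ) = _; push_cast; ring
      have hQ : (Q (2 * k + 3) : ℤ) = aN (2 * k + 2) * Q (2 * k + 2) + Q (2 * k + 1) := by
        show ((aN (2 * k + 2) * Q (2 * k + 2) + Q (2 * k + 1) : ℕ) : ℤ) = _; push_cast; ring
      have e2 : 2 * k + 1 + 1 = 2 * k + 2 := by ring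
      have e3 : 2 * k + 1 + 1 + 1 = 2 * k + 3 := by ring
      rw [e2, e3, hP, hQ]
      congr 1 <;> ring
    refine ⟨heven, ?_⟩
    show mlist (wlist (2 * (k + 1)) ++ blk (2 * (k + 1) + 1)) = _
    rw [mlist_append, heven, mlist_blk_odd _ (by omega), Matrix.mul_fin_two]
    have hP : (P (2 * (k + 1) + 2) : ℤ)
        = aN (2 * (k + 1) + 1) * P (2 * (k + 1) + 1) + P (2 * (k + 1)) := by
      show ((aN (2 * (k + 1) + 1) * P (2 * (k + 1) + 1) + P (2 * (k + 1)) : ℕ) : ℤ) = _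
      push_cast; ring
    have hQ : (Q (2 * (k + 1) + 2) : ℤ)
        = aN (2 * (k + 1) + 1) * Q (2 * (k + 1) + 1) + Q (2 * (k + 1)) := by
      show ((aN (2 * (k + 1) + 1) * Q (2 * (k + 1) + 1) + Q (2 * (k + 1)) : ℕ) : ℤ) = _
      push_cast; ring
    rw [hP, hQ]
    congr 1 <;> ring

lemma exists_word (N : ℕ) (l : List Bool) (h : l.length = N) :
    ∃ σ : Fin N → Bool, wordProd σ = mlist l := by
  subst h
  refine ⟨fun i => l.get i, ?_⟩
  unfold wordProd mlist
  congr 1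
  conv_rhs => rw [← List.ofFn_get l]
  rw [List.map_ofFn]
  rfl

lemma Zpart_ge {N : ℕ} (α β : ℝ) (σ : Fin N → Bool) :
    |((wordProd σ 0 1 : ℤ) : ℝ) - α * ((wordProd σ 1 1 : ℤ) : ℝ)| ^ (-β) ≤ Zpart N α β := by
  unfold Zpart
  exact Finset.single_le_sum
    (f := fun τ : Fin N → Bool =>
      |((wordProd τ 0 1 : ℤ) : ℝ) - α * ((wordProd τ 1 1 : ℤ) : ℝ)| ^ (-β))
    (fun τ _ => Real.rpow_nonneg (abs_nonneg _) _) (Finset.mem_univ σ)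


/-! ### real convergents -/

noncomputable def c (m : ℕ) : ℝ := (P (m + 1) : ℝ) / (Q (m + 1) : ℝ)

lemma Qr_pos (n : ℕ) : (0 : ℝ) < (Q (n + 1) : ℝ) := by exact_mod_cast Q_pos n

lemma c_diff (n : ℕ) : c (n + 1) - c n = (-1) ^ n / ((Q (n + 1) : ℝ) * Q (n + 2)) := by
  have h1 := Qr_pos n
  have h2 := Qr_pos (n + 1)
  have hd : (P (n + 2) : ℝ) * Q (n + 1) - P (n + 1) * Q (n + 2) = (-1) ^ n := by
    have h := det_PQ (n + 1)
    have he : ((-1 : ℤ)) ^ (n + 2) = (-1) ^ n := by ring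
    rw [he] at h
    exact_mod_cast h
  unfold c
  field_simp
  linear_combination hd

lemma c_dist (n : ℕ) : dist (c n) (c (n + 1)) = 1 / ((Q (n + 1) : ℝ) * Q (n + 2)) := by
  have h1 := Qr_pos n
  have h2 := Qr_pos (n + 1)
  rw [dist_comm, Real.dist_eq, c_diff, abs_div, abs_pow, abs_neg, abs_one, one_pow,
    abs_of_pos (by positivity)]

lemma c_cauchy : CauchySeq c := by
  apply cauchySeq_of_le_geometric (1 / 4) 1 (by norm_num)
  intro n
  rw [c_dist, one_mul, div_pow, one_pow]
  apply one_div_le_one_div_of_le (by positivity)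
  have hq1 : (4 : ℝ) ^ n ≤ Q (n + 1) := by exact_mod_cast Q_ge_pow n
  have hq2 : (1 : ℝ) ≤ Q (n + 2) := by exact_mod_cast Q_pos (n + 1)
  nlinarith [pow_pos (show (0:ℝ) < 4 by norm_num) n]

noncomputable def alphaR : ℝ := (cauchySeq_tendsto_of_complete c_cauchy).choose

lemma c_tendsto : Filter.Tendsto c Filter.atTop (nhds alphaR) :=
  (cauchySeq_tendsto_of_complete c_cauchy).choose_spec

lemma upper (m : ℕ) : |alphaR - c m| ≤ 2 / ((Q (m + 1) : ℝ) * Q (m + 2)) := by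
  have hA := Qr_pos m
  have hB := Qr_pos (m + 1)
  set D : ℝ := 1 / ((Q (m + 1) : ℝ) * Q (m + 2)) with hD
  have hDpos : 0 < D := by positivity
  have hshift : Filter.Tendsto (fun k => c (m + k)) Filter.atTop (nhds alphaR) := by
    have h := c_tendsto.comp (Filter.tendsto_add_atTop_nat m)
    refine h.congr (fun k => ?_)
    simp [Nat.add_comm]
  have hu : ∀ k, dist (c (m + k)) (c (m + k + 1)) ≤ D * (1 / 16) ^ k := by
    intro k
    rw [c_dist]
    have hrw : D * (1 / 16) ^ k = 1 / (((Q (m + 1) : ℝ) * Q (m + 2)) * 16 ^ k) := by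
      rw [hD, div_pow, one_pow, div_mul_div_comm, one_mul]
    rw [hrw]
    apply one_div_le_one_div_of_le (by positivity)
    have e1 : 4 ^ k * Q (m + 1) ≤ Q (m + k + 1) := by
      have h := Q_pow k m
      have e : m + 1 + k = m + k + 1 := by omega
      rwa [e] at h
    have e2 : 4 ^ k * Q (m + 2) ≤ Q (m + k + 2) := by
      have h := Q_pow k (m + 1)
      have e : m + 1 + 1 + k = m + k + 2 := by omega
      rwa [e] at h
    have c1 : (4 : ℝ) ^ k * Q (m + 1) ≤ Q (m + k + 1) := by exact_mod_cast e1
    have c2 : (4 : ℝ) ^ k * Q (m + 2) ≤ Q (m + k + 2) := by exact_mod_cast e2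
    have hp : (4 : ℝ) ^ k * 4 ^ k = 16 ^ k := by rw [← mul_pow]; norm_num
    calc ((Q (m + 1) : ℝ) * Q (m + 2)) * 16 ^ k
        = (4 ^ k * Q (m + 1)) * (4 ^ k * Q (m + 2)) := by rw [← hp]; ring
      _ ≤ (Q (m + k + 1) : ℝ) * Q (m + k + 2) :=
          mul_le_mul c1 c2 (by positivity) (Qr_pos (m + k)).le
  have key := dist_le_of_le_geometric_of_tendsto₀ (1 / 16) D (by norm_num) hu hshift
  have h0 : dist (c (m + 0)) alphaR = |alphaR - c m| := by
    rw [Nat.add_zero, dist_comm, Real.dist_eq]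
  rw [h0] at key
  calc |alphaR - c m| ≤ D / (1 - 1 / 16) := key
    _ ≤ 2 * D := by
        have hE : D / (1 - 1 / 16) = (16 / 15) * D := by ring
        linarith
    _ = 2 / ((Q (m + 1) : ℝ) * Q (m + 2)) := by rw [hD]; ring

lemma lower (m : ℕ) : 1 / (2 * ((Q (m + 1) : ℝ) * Q (m + 2))) ≤ |alphaR - c m| := by
  have hA : (0 : ℝ) < (Q (m + 1) : ℝ) := Qr_pos m
  have hB : (0 : ℝ) < (Q (m + 2) : ℝ) := Qr_pos (m + 1)
  have hC : (0 : ℝ) < (Q (m + 3) : ℝ) := Qr_pos (m + 2)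
  have h1 : |c (m + 1) - c m| = 1 / ((Q (m + 1) : ℝ) * Q (m + 2)) := by
    rw [c_diff, abs_div, abs_pow, abs_neg, abs_one, one_pow, abs_of_pos (by positivity)]
  have h2 : |alphaR - c (m + 1)| ≤ 2 / ((Q (m + 2) : ℝ) * Q (m + 3)) := upper (m + 1)
  have h3 : |c (m + 1) - c m| ≤ |c (m + 1) - alphaR| + |alphaR - c m| := abs_sub_le _ _ _
  have h4 : |c (m + 1) - alphaR| = |alphaR - c (m + 1)| := abs_sub_comm _ _
  have hq2 : (4 : ℝ) * Q (m + 2) ≤ Q (m + 3) := by exact_mod_cast Q_mul4 (m + 1)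
  have hmono : (Q (m + 1) : ℝ) ≤ Q (m + 2) := by
    have := Q_mul4 m
    have : (4 : ℝ) * Q (m + 1) ≤ Q (m + 2) := by exact_mod_cast this
    linarith
  have h5 : (2 : ℝ) / ((Q (m + 2) : ℝ) * Q (m + 3)) ≤ 1 / (2 * ((Q (m + 1) : ℝ) * Q (m + 2))) := by
    rw [div_le_div_iff₀ (by positivity) (by positivity)]
    nlinarith
  have h6 : (1 : ℝ) / ((Q (m + 1) : ℝ) * Q (m + 2))
      = 1 / (2 * ((Q (m + 1) : ℝ) * Q (m + 2))) + 1 / (2 * ((Q (m + 1) : ℝ) * Q (m + 2))) := by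
    ring
  linarith [h2.trans h5]

lemma alphaR_pos : 0 < alphaR := by
  have h := upper 0
  have hQ1 : (Q 1 : ℝ) = 1 := by norm_num [Q]
  have hQ2 : (Q 2 : ℝ) = 4 := by
    have : Q 2 = 4 := by decide
    rw [this]; norm_num
  have hc0 : c 0 = 1 := by
    have hP1 : (P 1 : ℝ) = 1 := by
      have : P 1 = 1 := by decide
      rw [this]; norm_num
    unfold c
    rw [hP1, hQ1]; norm_num
  rw [hc0, hQ1, hQ2] at h
  have := abs_le.mp h
  have h2 : -(1/2 : ℝ) ≤ alphaR - 1 := by linarith [this.1]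
  linarith

lemma alphaR_irrational : Irrational alphaR := by
  rintro ⟨r, hr⟩
  set m := 2 * r.den + 1 with hm
  have hden : (0 : ℝ) < (r.den : ℝ) := by exact_mod_cast r.pos
  have hQm1 := Qr_pos m
  have hQm2 := Qr_pos (m + 1)
  set z : ℤ := r.den * P (m + 1) - r.num * Q (m + 1) with hzdef
  have hz : (z : ℝ) = (r.den : ℝ) * Q (m + 1) * (c m - alphaR) := by
    rw [← hr]
    rw [Rat.cast_def]
    unfold c
    rw [hzdef]
    push_cast
    field_simp
  have habs : |(z : ℝ)| = (r.den : ℝ) * Q (m + 1) * |alphaR - c m| := by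
    rw [hz, abs_mul, abs_of_nonneg (by positivity), abs_sub_comm]
  have hub : |(z : ℝ)| ≤ 2 * r.den / Q (m + 2) := by
    rw [habs]
    calc (r.den : ℝ) * Q (m + 1) * |alphaR - c m|
        ≤ (r.den : ℝ) * Q (m + 1) * (2 / ((Q (m + 1) : ℝ) * Q (m + 2))) := by
          apply mul_le_mul_of_nonneg_left (upper m) (by positivity)
      _ = 2 * r.den / Q (m + 2) := by field_simp
  have hlb : (r.den : ℝ) / (2 * Q (m + 2)) ≤ |(z : ℝ)| := by
    rw [habs]
    calc (r.den : ℝ) / (2 * Q (m + 2))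
        = (r.den : ℝ) * Q (m + 1) * (1 / (2 * ((Q (m + 1) : ℝ) * Q (m + 2)))) := by
          field_simp
      _ ≤ (r.den : ℝ) * Q (m + 1) * |alphaR - c m| := by
          apply mul_le_mul_of_nonneg_left (lower m) (by positivity)
  have hzne : z ≠ 0 := by
    intro h0
    rw [h0] at hlb
    simp at hlb
    have : (0 : ℝ) < (r.den : ℝ) / (2 * Q (m + 2)) := by positivity
    linarith
  have hone : (1 : ℝ) ≤ |(z : ℝ)| := by
    have := Int.one_le_abs hzne
    calc (1 : ℝ) = ((1 : ℤ) : ℝ) := by norm_num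
      _ ≤ ((|z| : ℤ) : ℝ) := by exact_mod_cast this
      _ = |(z : ℝ)| := by push_cast; ring
  have hQle : (Q (m + 2) : ℝ) ≤ 2 * r.den := by
    have h := hone.trans hub
    rw [le_div_iff₀ hQm2, one_mul] at h
    linarith
  -- but Q (m+2) ≥ 4 ^ (m+1) > m + 1 ≥ 2 * r.den + 2
  have hbig : 2 * r.den + 1 < Q (m + 2) := by
    have h1 : m + 1 < 4 ^ (m + 1) := Nat.lt_pow_self (by norm_num)
    have h2 : 4 ^ (m + 1) ≤ Q (m + 2) := Q_ge_pow (m + 1)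
    omega
  have : (2 * r.den + 1 : ℝ) < Q (m + 2) := by exact_mod_cast hbig
  push_cast at hQle
  linarith


lemma aN_le_Q (k : ℕ) : (aN (2 * k + 1) : ℝ) ≤ (Q (2 * k + 2) : ℝ) := by
  have h : aN (2 * k + 1) ≤ Q (2 * k + 2) := by
    show aN (2 * k + 1) ≤ aN (2 * k + 1) * Q (2 * k + 1) + Q (2 * k)
    have h1 := Q_pos (2 * k)
    nlinarith
  exact_mod_cast h

lemma logZ_bound (β : ℝ) (hβ : 0 < β) (k : ℕ) :
    β * (2 * (k : ℝ) + 1) * Real.log 2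
      ≤ Real.log (Zpart (NN (2 * k)) alphaR β) / (NN (2 * k) : ℝ) := by
  obtain ⟨σ, hσ⟩ := exists_word (NN (2 * k)) (wlist (2 * k)) (wlist_length _)
  rw [(wlist_prod k).1] at hσ
  have h01 : wordProd σ 0 1 = (P (2 * k + 1) : ℤ) := by
    rw [hσ]
    simp [Matrix.cons_val_zero, Matrix.cons_val_one, Matrix.head_cons]
  have h11 : wordProd σ 1 1 = (Q (2 * k + 1) : ℤ) := by
    rw [hσ]
    simp [Matrix.cons_val_one, Matrix.head_cons]
  have hQ1 : (0 : ℝ) < (Q (2 * k + 1) : ℝ) := Qr_pos (2 * k)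
  have hQ2 : (0 : ℝ) < (Q (2 * k + 2) : ℝ) := Qr_pos (2 * k + 1)
  set x : ℝ := |((P (2 * k + 1) : ℕ) : ℝ) - alphaR * ((Q (2 * k + 1) : ℕ) : ℝ)| with hxdef
  have hx_eq : x = (Q (2 * k + 1) : ℝ) * |alphaR - c (2 * k)| := by
    rw [hxdef]
    have : ((P (2 * k + 1) : ℕ) : ℝ) - alphaR * ((Q (2 * k + 1) : ℕ) : ℝ)
        = (Q (2 * k + 1) : ℝ) * (c (2 * k) - alphaR) := by
      unfold c
      field_simp
    rw [this, abs_mul, abs_of_pos hQ1, abs_sub_comm]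
  have hx_pos : 0 < x := by
    rw [hx_eq]
    have hl := lower (2 * k)
    have : (0 : ℝ) < 1 / (2 * ((Q (2 * k + 1) : ℝ) * Q (2 * k + 2))) := by positivity
    nlinarith
  have hx_le : x ≤ 2 / (aN (2 * k + 1) : ℝ) := by
    rw [hx_eq]
    have hu : |alphaR - c (2 * k)| ≤ 2 / ((Q (2 * k + 1) : ℝ) * Q (2 * k + 2)) := upper (2 * k)
    have haQ := aN_le_Q k
    have haN : (0 : ℝ) < (aN (2 * k + 1) : ℝ) := by exact_mod_cast aN_pos (2 * k + 1)
    calc (Q (2 * k + 1) : ℝ) * |alphaR - c (2 * k)|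
        ≤ (Q (2 * k + 1) : ℝ) * (2 / ((Q (2 * k + 1) : ℝ) * Q (2 * k + 2))) :=
          mul_le_mul_of_nonneg_left hu hQ1.le
      _ = 2 / (Q (2 * k + 2) : ℝ) := by field_simp
      _ ≤ 2 / (aN (2 * k + 1) : ℝ) := by
          apply div_le_div_of_nonneg_left (by norm_num) haN haQ
  have hZ : x ^ (-β) ≤ Zpart (NN (2 * k)) alphaR β := by
    have h := Zpart_ge (N := NN (2 * k)) alphaR β σ
    rw [h01, h11] at h
    exact_mod_cast h
  have hZpos : 0 < Zpart (NN (2 * k)) alphaR β :=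
    lt_of_lt_of_le (Real.rpow_pos_of_pos hx_pos _) hZ
  have hlog1 : -β * Real.log x ≤ Real.log (Zpart (NN (2 * k)) alphaR β) := by
    have h := Real.log_le_log (Real.rpow_pos_of_pos hx_pos _) hZ
    rwa [Real.log_rpow hx_pos] at h
  have haN2 : (aN (2 * k + 1) : ℝ) = 2 ^ ((2 * k + 1) * NN (2 * k) + 1) := by
    rw [aN_succ]
    push_cast
    ring
  have hlogx : Real.log x ≤ -(((2 * k + 1) * NN (2 * k) : ℕ) : ℝ) * Real.log 2 := by
    have h := Real.log_le_log hx_pos hx_le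
    have he : Real.log (2 / (aN (2 * k + 1) : ℝ))
        = -(((2 * k + 1) * NN (2 * k) : ℕ) : ℝ) * Real.log 2 := by
      rw [haN2, Real.log_div (by norm_num) (by positivity), Real.log_pow]
      push_cast
      ring
    rw [he] at h
    exact h
  have hlog2 : 0 < Real.log 2 := Real.log_pos (by norm_num)
  have hNN : (0 : ℝ) < (NN (2 * k) : ℝ) := by exact_mod_cast NN_pos (2 * k)
  rw [le_div_iff₀ hNN]
  have hEcast : (((2 * k + 1) * NN (2 * k) : ℕ) : ℝ) = (2 * (k : ℝ) + 1) * (NN (2 * k) : ℝ) := by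
    push_cast
    ring
  have h7 : β * (((2 * k + 1) * NN (2 * k) : ℕ) : ℝ) * Real.log 2 ≤ -β * Real.log x := by
    nlinarith [mul_le_mul_of_nonneg_left hlogx hβ.le]
  calc β * (2 * (k : ℝ) + 1) * Real.log 2 * (NN (2 * k) : ℝ)
      = β * (((2 * k + 1) * NN (2 * k) : ℕ) : ℝ) * Real.log 2 := by rw [hEcast]; ring
    _ ≤ -β * Real.log x := h7
    _ ≤ Real.log (Zpart (NN (2 * k)) alphaR β) := hlog1

lemma not_bddAbove (β : ℝ) (hβ : 0 < β) :
    ¬ BddAbove (Set.range fun N : ℕ => Real.log (Zpart N alphaR β) / (N : ℝ)) := by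
  rintro ⟨cbd, hcbd⟩
  have hlog2 : 0 < Real.log 2 := Real.log_pos (by norm_num)
  obtain ⟨k, hk⟩ := exists_nat_gt (cbd / (β * Real.log 2))
  have h1 := logZ_bound β hβ k
  have h2 : Real.log (Zpart (NN (2 * k)) alphaR β) / ((NN (2 * k) : ℕ) : ℝ) ≤ cbd :=
    hcbd (Set.mem_range_self (NN (2 * k)))
  have h3 : cbd < (k : ℝ) * (β * Real.log 2) := by
    rw [div_lt_iff₀ (by positivity)] at hk
    linarith
  have h4 : (k : ℝ) * (β * Real.log 2) ≤ β * (2 * (k : ℝ) + 1) * Real.log 2 := by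
    have hp1 : 0 ≤ (k : ℝ) * (β * Real.log 2) := by positivity
    have hp2 : 0 < β * Real.log 2 := by positivity
    nlinarith
  linarith

end Stmt8


theorem stmt8 :
    ∃ α : ℝ, 0 < α ∧ Irrational α ∧ ∀ β : ℝ, 0 < β →
      ¬ BddAbove (Set.range fun N : ℕ => Real.log (Zpart N α β) / (N : ℝ)) ∧
      ∀ L : ℝ, ¬ Filter.Tendsto (fun N : ℕ => Real.log (Zpart N α β) / (N : ℝ))
        Filter.atTop (nhds L) := by
  refine ⟨Stmt8.alphaR, Stmt8.alphaR_pos, Stmt8.alphaR_irrational, ?_⟩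
  intro β hβ
  refine ⟨Stmt8.not_bddAbove β hβ, ?_⟩
  intro L hT
  exact Stmt8.not_bddAbove β hβ hT.bddAbove_range
end

section
/- Let α > 0 be a real number for which there exist a constant C > 0 and a real number d ≥ 2 such that C/q^d ≤ |p − α·q| for all coprime integers p and positive integers q. Then for every real number k > 1 and every real number β > 2, lim_{N→∞} (log Z_N(α;β))/N^k = 0; in particular α has a k-free energy limit equal to zero for every k > 1. -/
lemma wordProd_succ {N : ℕ} (σ : Fin (N+1) → Bool) :
    wordProd σ = (if σ 0 then A1 else A0) * wordProd (fun i => σ i.succ) := by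
  unfold wordProd
  rw [List.ofFn_succ, List.prod_cons]

lemma wordProd_prop : ∀ (N : ℕ) (σ : Fin N → Bool),
    0 ≤ wordProd σ 0 0 ∧ 0 ≤ wordProd σ 0 1 ∧ 0 ≤ wordProd σ 1 0 ∧ 0 ≤ wordProd σ 1 1 ∧
    wordProd σ 0 1 ≤ 2^N ∧ wordProd σ 1 1 ≤ 2^N ∧
    wordProd σ 0 0 * wordProd σ 1 1 - wordProd σ 0 1 * wordProd σ 1 0 = 1 := by
  intro N
  induction N with
  | zero =>
    intro σ
    unfold wordProd
    simp [List.ofFn_zero, Matrix.one_apply]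
  | succ n ih =>
    intro σ
    obtain ⟨h1, h2, h3, h4, h5, h6, h7⟩ := ih (fun i => σ i.succ)
    rw [wordProd_succ]
    cases hb : σ 0 <;>
      simp [hb, A0, A1, Matrix.mul_apply, Fin.sum_univ_two, pow_succ] <;>
      refine ⟨?_, ?_, ?_, ?_, ?_, ?_, ?_⟩ <;>
      nlinarith [pow_pos (by norm_num : (0:ℤ) < 2) n]

lemma lin_div_rpow (a b k : ℝ) (hk : 1 < k) :
    Filter.Tendsto (fun N : ℕ => (a * N + b) / (N : ℝ) ^ k) Filter.atTop (nhds 0) := by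
  have hcast : Filter.Tendsto (fun n : ℕ => (n:ℝ)) Filter.atTop Filter.atTop :=
    tendsto_natCast_atTop_atTop
  have h1 : Filter.Tendsto (fun N : ℕ => (N:ℝ) ^ (1 - k)) Filter.atTop (nhds 0) := by
    have := (tendsto_rpow_neg_atTop (show 0 < k - 1 by linarith)).comp hcast
    simpa [neg_sub, Function.comp_def] using this
  have h2 : Filter.Tendsto (fun N : ℕ => (N:ℝ) ^ (-k)) Filter.atTop (nhds 0) := by
    have := (tendsto_rpow_neg_atTop (show 0 < k by linarith)).comp hcast
    simpa [Function.comp_def] using this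
  have h3 : Filter.Tendsto (fun N : ℕ => a * (N:ℝ)^(1-k) + b * (N:ℝ)^(-k))
      Filter.atTop (nhds 0) := by
    have := (h1.const_mul a).add (h2.const_mul b)
    simpa using this
  refine Filter.Tendsto.congr' ?_ h3
  filter_upwards [Filter.eventually_ge_atTop 1] with N hN
  have hNpos : (0:ℝ) < N := by exact_mod_cast Nat.lt_of_lt_of_le Nat.zero_lt_one hN
  have hNk : (N:ℝ)^k ≠ 0 := (Real.rpow_pos_of_pos hNpos k).ne'
  rw [Real.rpow_sub hNpos, Real.rpow_one, Real.rpow_neg hNpos.le]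
  field_simp

theorem stmt9 (α : ℝ) (hα : 0 < α) (C d : ℝ) (hC : 0 < C) (hd : 2 ≤ d)
    (hdioph : ∀ p q : ℤ, 0 < q → IsCoprime p q →
      C / (q : ℝ) ^ d ≤ |(p : ℝ) - α * (q : ℝ)|)
    (k β : ℝ) (hk : 1 < k) (hβ : 2 < β) :
    Filter.Tendsto (fun N : ℕ => Real.log (Zpart N α β) / (N : ℝ) ^ k)
      Filter.atTop (nhds 0) := by
  have h2N : ∀ N : ℕ, (0:ℝ) < 2 ^ N := fun N => by positivity
  have hCd : ∀ N : ℕ, 0 < C / ((2:ℝ)^N)^d :=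
    fun N => div_pos hC (Real.rpow_pos_of_pos (h2N N) d)
  have key : ∀ (N : ℕ) (σ : Fin N → Bool),
      C / ((2:ℝ)^N)^d ≤ |((wordProd σ 0 1 : ℤ):ℝ) - α * ((wordProd σ 1 1 : ℤ):ℝ)| ∧
      |((wordProd σ 0 1 : ℤ):ℝ) - α * ((wordProd σ 1 1 : ℤ):ℝ)| ≤ (1 + α) * 2^N := by
    intro N σ
    obtain ⟨h1, h2, h3, h4, h5, h6, h7⟩ := wordProd_prop N σ
    have hq0 : 0 < wordProd σ 1 1 := by nlinarith
    have hcop : IsCoprime (wordProd σ 0 1) (wordProd σ 1 1) :=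
      ⟨-(wordProd σ 1 0), wordProd σ 0 0, by linear_combination h7⟩
    have hqR : (1:ℝ) ≤ ((wordProd σ 1 1 : ℤ):ℝ) := by exact_mod_cast hq0
    have hqle : ((wordProd σ 1 1 : ℤ):ℝ) ≤ 2^N := by exact_mod_cast h6
    have hple : ((wordProd σ 0 1 : ℤ):ℝ) ≤ 2^N := by exact_mod_cast h5
    have hp0 : (0:ℝ) ≤ ((wordProd σ 0 1 : ℤ):ℝ) := by exact_mod_cast h2
    constructor
    · refine le_trans ?_ (hdioph _ _ hq0 hcop)
      have hle : ((wordProd σ 1 1 : ℤ):ℝ)^d ≤ ((2:ℝ)^N)^d :=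
        Real.rpow_le_rpow (by linarith) hqle (by linarith)
      have hpos : (0:ℝ) < ((wordProd σ 1 1 : ℤ):ℝ)^d :=
        Real.rpow_pos_of_pos (by linarith) d
      gcongr
    · rw [abs_le]
      constructor <;>
        nlinarith [mul_le_mul_of_nonneg_left hqle hα.le,
          mul_nonneg hα.le (le_trans zero_le_one hqR), h2N N]
  have habs_pos : ∀ (N : ℕ) (σ : Fin N → Bool),
      0 < |((wordProd σ 0 1 : ℤ):ℝ) - α * ((wordProd σ 1 1 : ℤ):ℝ)| :=
    fun N σ => lt_of_lt_of_le (hCd N) (key N σ).1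
  set U : ℕ → ℝ := fun N => 2 ^ N * (C / ((2:ℝ) ^ N) ^ d) ^ (-β) with hU
  set L : ℕ → ℝ := fun N => ((1 + α) * 2 ^ N) ^ (-β) with hL
  have hLpos : ∀ N, 0 < L N := fun N => Real.rpow_pos_of_pos (by positivity) _
  have hZlo : ∀ N, L N ≤ Zpart N α β := by
    intro N
    unfold Zpart
    refine le_trans ?_ (Finset.single_le_sum (f := fun σ : Fin N → Bool =>
      |((wordProd σ 0 1 : ℤ):ℝ) - α * ((wordProd σ 1 1 : ℤ):ℝ)| ^ (-β))
      (fun σ _ => Real.rpow_nonneg (abs_nonneg _) _) (Finset.mem_univ (fun _ => true)))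
    exact Real.rpow_le_rpow_of_nonpos (habs_pos N _) (key N _).2 (by linarith)
  have hZup : ∀ N, Zpart N α β ≤ U N := by
    intro N
    unfold Zpart
    calc ∑ σ : Fin N → Bool,
          |((wordProd σ 0 1 : ℤ):ℝ) - α * ((wordProd σ 1 1 : ℤ):ℝ)| ^ (-β)
        ≤ ∑ _σ : Fin N → Bool, (C / ((2:ℝ)^N)^d) ^ (-β) :=
          Finset.sum_le_sum (fun σ _ =>
            Real.rpow_le_rpow_of_nonpos (hCd N) (key N σ).1 (by linarith))
      _ = U N := by
          rw [Finset.sum_const, nsmul_eq_mul, Finset.card_univ]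
          simp [hU, Fintype.card_fun]
  have hZpos : ∀ N, 0 < Zpart N α β := fun N => lt_of_lt_of_le (hLpos N) (hZlo N)
  have hlogL : ∀ N : ℕ, Real.log (L N) = (-β * Real.log 2) * N + (-β * Real.log (1 + α)) := by
    intro N
    rw [hL]
    rw [Real.log_rpow (by positivity), Real.log_mul (by positivity) (h2N N).ne',
      Real.log_pow]
    ring
  have hlogU : ∀ N : ℕ, Real.log (U N) =
      (Real.log 2 + β * (d * Real.log 2)) * N + (-β * Real.log C) := by
    intro N
    rw [hU]
    rw [Real.log_mul (h2N N).ne' (Real.rpow_pos_of_pos (hCd N) _).ne',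
      Real.log_rpow (hCd N),
      Real.log_div hC.ne' (Real.rpow_pos_of_pos (h2N N) d).ne',
      Real.log_rpow (h2N N), Real.log_pow]
    ring
  have hlow := (lin_div_rpow (-β * Real.log 2) (-β * Real.log (1 + α)) k hk).congr
    (fun N => by rw [← hlogL N])
  have hup := (lin_div_rpow (Real.log 2 + β * (d * Real.log 2)) (-β * Real.log C) k hk).congr
    (fun N => by rw [← hlogU N])
  refine tendsto_of_tendsto_of_tendsto_of_le_of_le' hlow hup ?_ ?_
  · filter_upwards [Filter.eventually_ge_atTop 1] with N hN
    have hNpos : (0:ℝ) < N := by exact_mod_cast Nat.lt_of_lt_of_le Nat.zero_lt_one hN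
    have hNk : (0:ℝ) < (N:ℝ)^k := Real.rpow_pos_of_pos hNpos k
    gcongr
    exact hZlo N
  · filter_upwards [Filter.eventually_ge_atTop 1] with N hN
    have hNpos : (0:ℝ) < N := by exact_mod_cast Nat.lt_of_lt_of_le Nat.zero_lt_one hN
    have hNk : (0:ℝ) < (N:ℝ)^k := Real.rpow_pos_of_pos hNpos k
    gcongr
    exacts [hZpos N, hZup N]
end

section
/- Let α > 0 be an irrational real algebraic number. Then for every real number k > 1 and every real number β > 2, lim_{N→∞} (log Z_N(α;β))/N^k = 0; that is, every positive real algebraic number of degree at least two has k-free energy limit equal to zero for every k > 1. -/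
lemma prodEntries (l : List (Matrix (Fin 2) (Fin 2) ℤ))
    (h : ∀ A ∈ l, A = A0 ∨ A = A1) :
    (∀ i j, 0 ≤ l.prod i j ∧ l.prod i j ≤ 2 ^ l.length) ∧ 1 ≤ l.prod 1 1 := by
  induction l with
  | nil =>
    refine ⟨fun i j => ?_, by simp [Matrix.one_apply]⟩
    fin_cases i <;> fin_cases j <;> simp [Matrix.one_apply]
  | cons A l ih =>
    obtain ⟨h1, h2⟩ := ih (fun B hB => h B (List.mem_cons_of_mem _ hB))
    have hm : ∀ i j, ((A :: l).prod) i j = A i 0 * l.prod 0 j + A i 1 * l.prod 1 j := by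
      intro i j
      rw [List.prod_cons, Matrix.mul_apply, Fin.sum_univ_two]
    have hA := h A (List.mem_cons_self)
    constructor
    · intro i j
      obtain ⟨p1, p2⟩ := h1 0 j
      obtain ⟨p3, p4⟩ := h1 1 j
      have hL : (2:ℤ) ^ (A :: l).length = 2 ^ l.length * 2 := by
        rw [List.length_cons, pow_succ]
      revert i
      rw [Fin.forall_fin_two]
      rcases hA with rfl | rfl <;>
        · rw [hm 0 j, hm 1 j, hL]
          simp only [A0, A1, Matrix.cons_val_zero, Matrix.cons_val_one, Matrix.head_cons,
            Matrix.of_apply, Matrix.cons_val', Matrix.empty_val', Matrix.cons_val_fin_one,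
            Matrix.head_fin_const]
          refine ⟨⟨?_, ?_⟩, ?_, ?_⟩ <;> linarith
    · obtain ⟨p1, p2⟩ := h1 0 1
      rcases hA with rfl | rfl <;>
        · rw [hm 1 1]
          simp only [A0, A1, Matrix.cons_val_zero, Matrix.cons_val_one, Matrix.head_cons,
            Matrix.of_apply, Matrix.cons_val', Matrix.empty_val', Matrix.cons_val_fin_one,
            Matrix.head_fin_const]
          linarith
/-- Entry bounds for `wordProd`. -/
lemma wordProd_bounds {N : ℕ} (σ : Fin N → Bool) :
    (∀ i j, 0 ≤ wordProd σ i j ∧ wordProd σ i j ≤ 2 ^ N) ∧ 1 ≤ wordProd σ 1 1 := by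
  have h := prodEntries (List.ofFn fun i => if σ i then A1 else A0) ?_
  · rwa [List.length_ofFn] at h
  · intro A hA
    obtain ⟨i, rfl⟩ := Set.mem_range.mp (List.mem_ofFn.mp hA)
    by_cases hi : σ i <;> simp [hi]

/-- Auxiliary limit: `(a N + b)/N^k → 0` for `k > 1`. -/
lemma aux_tendsto (k : ℝ) (hk : 1 < k) (a b : ℝ) :
    Filter.Tendsto (fun N : ℕ => (a * N + b) / (N : ℝ) ^ k)
      Filter.atTop (nhds 0) := by
  have t1 : Filter.Tendsto (fun N : ℕ => (N : ℝ) ^ (-(k - 1)))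
      Filter.atTop (nhds 0) :=
    (tendsto_rpow_neg_atTop (by linarith)).comp tendsto_natCast_atTop_atTop
  have t2 : Filter.Tendsto (fun N : ℕ => (N : ℝ) ^ (-k))
      Filter.atTop (nhds 0) :=
    (tendsto_rpow_neg_atTop (by linarith)).comp tendsto_natCast_atTop_atTop
  have t : Filter.Tendsto (fun N : ℕ => a * (N : ℝ) ^ (-(k - 1)) + b * (N : ℝ) ^ (-k))
      Filter.atTop (nhds 0) := by
    have := (t1.const_mul a).add (t2.const_mul b)
    simpa using this
  refine t.congr' ?_
  filter_upwards [Filter.eventually_ge_atTop 1] with N hN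
  have hN0 : (0 : ℝ) < N := by exact_mod_cast Nat.lt_of_lt_of_le Nat.zero_lt_one hN
  rw [show -(k - 1) = 1 + -k by ring, Real.rpow_add hN0, Real.rpow_one,
    Real.rpow_neg hN0.le, div_eq_mul_inv]
  ring

theorem stmt10 (α : ℝ) (hα : 0 < α) (hirr : Irrational α)
    (halg : IsAlgebraic ℚ α) (k β : ℝ) (hk : 1 < k) (hβ : 2 < β) :
    Filter.Tendsto (fun N : ℕ => Real.log (Zpart N α β) / (N : ℝ) ^ k)
      Filter.atTop (nhds 0) := by
  -- Get an integer polynomial vanishing at α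
  have halgZ : IsAlgebraic ℤ α := (IsFractionRing.isAlgebraic_iff ℤ ℚ ℝ).mpr halg
  obtain ⟨f, f0, hf⟩ := halgZ
  have hf' : Polynomial.eval α (Polynomial.map (algebraMap ℤ ℝ) f) = 0 := by
    rwa [Polynomial.eval_map, ← Polynomial.aeval_def]
  obtain ⟨A, hA, hAb⟩ := Liouville.exists_pos_real_of_irrational_root hirr f0 hf'
  set d := f.natDegree with hd
  -- Liouville-type bound: |P - α Q| ≥ 1 / (A * Q^d) for 1 ≤ Q
  have key : ∀ P Q : ℤ, 1 ≤ Q → ((A * (Q : ℝ) ^ d))⁻¹ ≤ |(P : ℝ) - α * Q| := by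
    intro P Q hQ
    have hQR : (1 : ℝ) ≤ (Q : ℝ) := by exact_mod_cast hQ
    have hQ0 : (0 : ℝ) < Q := by linarith
    have hb : ((Q.toNat - 1 : ℕ) : ℝ) + 1 = (Q : ℝ) := by
      have : ((Q.toNat - 1 : ℕ) : ℤ) = Q - 1 := by omega
      have := congrArg (fun x : ℤ => (x : ℝ)) this
      push_cast at this ⊢
      linarith
    have h1 := hAb P (Q.toNat - 1)
    rw [hb] at h1
    -- h1 : 1 ≤ Q^d * (|α - P/Q| * A)
    have hQd : (0 : ℝ) < (Q : ℝ) ^ d := pow_pos hQ0 d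
    have h2 : ((A * (Q:ℝ) ^ d))⁻¹ ≤ |α - (P : ℝ) / Q| := by
      rw [inv_le_iff_one_le_mul₀ (by positivity)]
      nlinarith [h1]
    have h3 : |(P : ℝ) - α * Q| = (Q : ℝ) * |α - (P : ℝ) / Q| := by
      have he : (P : ℝ) - α * Q = -((Q : ℝ) * (α - (P : ℝ) / Q)) := by
        field_simp
        ring
      rw [he, abs_neg, abs_mul, abs_of_pos hQ0]
    rw [h3]
    calc ((A * (Q:ℝ) ^ d))⁻¹ ≤ |α - (P : ℝ) / Q| := h2
      _ ≤ (Q : ℝ) * |α - (P : ℝ) / Q| := le_mul_of_one_le_left (abs_nonneg _) hQR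
  -- notations for the entries
  have hterm_pos : ∀ (N : ℕ) (σ : Fin N → Bool),
      0 < |((wordProd σ 0 1 : ℤ) : ℝ) - α * ((wordProd σ 1 1 : ℤ) : ℝ)| := by
    intro N σ
    rw [abs_pos]
    intro hcontra
    have hQ1 : 1 ≤ wordProd σ 1 1 := (wordProd_bounds σ).2
    have hQR : (0 : ℝ) < ((wordProd σ 1 1 : ℤ) : ℝ) := by exact_mod_cast hQ1
    apply hirr
    refine ⟨(wordProd σ 0 1 : ℚ) / (wordProd σ 1 1 : ℚ), ?_⟩
    push_cast
    field_simp
    linarith [sub_eq_zero.mp hcontra]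
  -- Lower bound for each term appearing and positivity of Zpart
  have hβ0 : (0 : ℝ) < β := by linarith
  have hZpos : ∀ N : ℕ, 0 < Zpart N α β := by
    intro N
    have : ∀ σ : Fin N → Bool,
        0 < |((wordProd σ 0 1 : ℤ) : ℝ) - α * ((wordProd σ 1 1 : ℤ) : ℝ)| ^ (-β) :=
      fun σ => Real.rpow_pos_of_pos (hterm_pos N σ) _
    exact Finset.sum_pos (fun σ _ => this σ) ⟨fun _ => false, Finset.mem_univ _⟩
  -- Upper bound: log Zpart ≤ N log 2 + β (log A + N d log 2)
  have hupper : ∀ N : ℕ, Real.log (Zpart N α β) ≤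
      ((1 + β * d) * Real.log 2) * N + β * Real.log A := by
    intro N
    set ε : ℝ := (A * (2 : ℝ) ^ (N * d))⁻¹ with hε
    have hεpos : 0 < ε := by positivity
    have hbound : ∀ σ : Fin N → Bool,
        |((wordProd σ 0 1 : ℤ) : ℝ) - α * ((wordProd σ 1 1 : ℤ) : ℝ)| ^ (-β)
          ≤ ε ^ (-β) := by
      intro σ
      obtain ⟨hb, hq⟩ := wordProd_bounds σ
      have hεle : ε ≤ |((wordProd σ 0 1 : ℤ) : ℝ) - α * ((wordProd σ 1 1 : ℤ) : ℝ)| := by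
        refine le_trans ?_ (key _ _ hq)
        rw [hε]
        apply inv_anti₀
        · have hq0 : (0:ℝ) < ((wordProd σ 1 1 : ℤ) : ℝ) := by exact_mod_cast hq
          positivity
        · have h2 : ((wordProd σ 1 1 : ℤ) : ℝ) ^ d ≤ (2:ℝ) ^ (N * d) := by
            rw [pow_mul]
            apply pow_le_pow_left₀
            · exact_mod_cast le_trans zero_le_one hq
            · exact_mod_cast (hb 1 1).2
          nlinarith [pow_pos (show (0:ℝ) < ((wordProd σ 1 1 : ℤ):ℝ) by exact_mod_cast hq) d]
      exact Real.rpow_le_rpow_of_nonpos hεpos hεle (by linarith)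
    have hsum : Zpart N α β ≤ (2 ^ N : ℕ) * ε ^ (-β) := by
      rw [Zpart]
      calc ∑ σ : Fin N → Bool, |((wordProd σ 0 1 : ℤ) : ℝ) - α * ((wordProd σ 1 1 : ℤ) : ℝ)| ^ (-β)
          ≤ (Finset.univ : Finset (Fin N → Bool)).card • ε ^ (-β) :=
            Finset.sum_le_card_nsmul _ _ _ (fun σ _ => hbound σ)
        _ = (2 ^ N : ℕ) * ε ^ (-β) := by
            rw [Finset.card_univ, nsmul_eq_mul]
            norm_num
    calc Real.log (Zpart N α β) ≤ Real.log ((2 ^ N : ℕ) * ε ^ (-β)) :=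
          Real.log_le_log (hZpos N) hsum
      _ = N * Real.log 2 + (-β) * Real.log ε := by
          rw [Real.log_mul (by positivity) (ne_of_gt (Real.rpow_pos_of_pos hεpos _)),
            Real.log_rpow hεpos, Nat.cast_pow, Real.log_pow]
          push_cast
          ring
      _ = ((1 + β * d) * Real.log 2) * N + β * Real.log A := by
          rw [hε, Real.log_inv, Real.log_mul (ne_of_gt hA) (by positivity), Real.log_pow]
          push_cast
          ring
  -- Lower bound: log Zpart ≥ -β (N log 2 + log (1 + α))
  have hlower : ∀ N : ℕ, ((-β) * Real.log 2) * N + (-β) * Real.log (1 + α)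
      ≤ Real.log (Zpart N α β) := by
    intro N
    set σ0 : Fin N → Bool := fun _ => false with hσ0
    set M : ℝ := (2 : ℝ) ^ N * (1 + α) with hM
    have hMpos : 0 < M := by positivity
    obtain ⟨hb, hq⟩ := wordProd_bounds σ0
    have hle : |((wordProd σ0 0 1 : ℤ) : ℝ) - α * ((wordProd σ0 1 1 : ℤ) : ℝ)| ≤ M := by
      have hp0 : (0:ℝ) ≤ ((wordProd σ0 0 1 : ℤ) : ℝ) := by exact_mod_cast (hb 0 1).1
      have hp2 : ((wordProd σ0 0 1 : ℤ) : ℝ) ≤ (2:ℝ) ^ N := by exact_mod_cast (hb 0 1).2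
      have hq0 : (0:ℝ) ≤ ((wordProd σ0 1 1 : ℤ) : ℝ) := by exact_mod_cast (hb 1 1).1
      have hq2 : ((wordProd σ0 1 1 : ℤ) : ℝ) ≤ (2:ℝ) ^ N := by exact_mod_cast (hb 1 1).2
      rw [abs_le]
      constructor <;> rw [hM] <;> nlinarith
    have hterm : M ^ (-β) ≤
        |((wordProd σ0 0 1 : ℤ) : ℝ) - α * ((wordProd σ0 1 1 : ℤ) : ℝ)| ^ (-β) :=
      Real.rpow_le_rpow_of_nonpos (hterm_pos N σ0) hle (by linarith)
    have hsum : M ^ (-β) ≤ Zpart N α β := by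
      refine le_trans hterm ?_
      rw [Zpart]
      exact Finset.single_le_sum
        (f := fun σ : Fin N → Bool =>
          |((wordProd σ 0 1 : ℤ) : ℝ) - α * ((wordProd σ 1 1 : ℤ) : ℝ)| ^ (-β))
        (fun σ _ => Real.rpow_nonneg (abs_nonneg _) _) (Finset.mem_univ σ0)
    calc ((-β) * Real.log 2) * N + (-β) * Real.log (1 + α)
        = (-β) * Real.log M := by
          rw [hM, Real.log_mul (by positivity) (by positivity), Real.log_pow]
          push_cast; ring
      _ = Real.log (M ^ (-β)) := (Real.log_rpow hMpos _).symm
      _ ≤ Real.log (Zpart N α β) := Real.log_le_log (Real.rpow_pos_of_pos hMpos _) hsum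
  -- Squeeze
  have tU := aux_tendsto k hk ((1 + β * d) * Real.log 2) (β * Real.log A)
  have tL := aux_tendsto k hk ((-β) * Real.log 2) ((-β) * Real.log (1 + α))
  refine tendsto_of_tendsto_of_tendsto_of_le_of_le' tL tU ?_ ?_
  · filter_upwards [Filter.eventually_ge_atTop 1] with N hN
    have hN0 : (0:ℝ) < (N:ℝ) := by exact_mod_cast Nat.lt_of_lt_of_le Nat.zero_lt_one hN
    have hNk : (0:ℝ) < (N:ℝ) ^ k := Real.rpow_pos_of_pos hN0 k
    exact (div_le_div_iff_of_pos_right hNk).mpr (hlower N)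
  · filter_upwards [Filter.eventually_ge_atTop 1] with N hN
    have hN0 : (0:ℝ) < (N:ℝ) := by exact_mod_cast Nat.lt_of_lt_of_le Nat.zero_lt_one hN
    have hNk : (0:ℝ) < (N:ℝ) ^ k := Real.rpow_pos_of_pos hN0 k
    exact (div_le_div_iff_of_pos_right hNk).mpr (hupper N)
end

section
/- Let φ = (1+√5)/2 be the golden ratio. Then for every real number β > 2, lim_{N→∞} (log Z_N(φ;β))/N = β·log φ. -/
noncomputable def Wfun (β : ℝ) : ℕ → ℝ → ℝ → ℝ
  | 0, _, y => |y| ^ (-β)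
  | N+1, x, y => Wfun β N (x+y) y + Wfun β N x (x+y)

lemma wordProd_zero (σ : Fin 0 → Bool) : wordProd σ = 1 := by
  simp [wordProd]

lemma wordProd_cons {N : ℕ} (b : Bool) (σ : Fin N → Bool) :
    wordProd (Fin.cons b σ) = (if b then A1 else A0) * wordProd σ := by
  simp [wordProd, List.ofFn_succ, Fin.cons_succ]

lemma Zgen (β : ℝ) : ∀ (N : ℕ) (x y : ℝ),
    (∑ σ : Fin N → Bool,
      |x * ((wordProd σ 0 1 : ℤ) : ℝ) + y * ((wordProd σ 1 1 : ℤ) : ℝ)| ^ (-β))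
    = Wfun β N x y := by
  intro N
  induction N with
  | zero =>
    intro x y
    rw [Finset.sum_eq_single_of_mem (fun i => i.elim0) (Finset.mem_univ _)]
    · simp [wordProd_zero, Matrix.one_apply, Wfun]
    · intro σ _ hσ
      exact absurd (funext fun i => i.elim0) hσ
  | succ N ih =>
    intro x y
    rw [← Equiv.sum_comp (Fin.consEquiv (fun _ => Bool))]
    rw [Fintype.sum_prod_type]
    show (∑ b : Bool, ∑ σ : Fin N → Bool,
      |x * ((wordProd (Fin.cons b σ) 0 1 : ℤ) : ℝ)
        + y * ((wordProd (Fin.cons b σ) 1 1 : ℤ) : ℝ)| ^ (-β)) = _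
    rw [Fintype.sum_bool]
    have h1 : ∀ σ : Fin N → Bool,
        x * ((wordProd (Fin.cons true σ) 0 1 : ℤ) : ℝ)
          + y * ((wordProd (Fin.cons true σ) 1 1 : ℤ) : ℝ)
        = x * ((wordProd σ 0 1 : ℤ) : ℝ) + (x + y) * ((wordProd σ 1 1 : ℤ) : ℝ) := by
      intro σ
      rw [wordProd_cons]
      simp only [if_true, A1, Matrix.mul_apply, Fin.sum_univ_two]
      norm_num [Matrix.cons_val_zero, Matrix.cons_val_one]
      push_cast
      ring
    have h0 : ∀ σ : Fin N → Bool,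
        x * ((wordProd (Fin.cons false σ) 0 1 : ℤ) : ℝ)
          + y * ((wordProd (Fin.cons false σ) 1 1 : ℤ) : ℝ)
        = (x + y) * ((wordProd σ 0 1 : ℤ) : ℝ) + y * ((wordProd σ 1 1 : ℤ) : ℝ) := by
      intro σ
      rw [wordProd_cons]
      simp only [if_false, A0, Matrix.mul_apply, Fin.sum_univ_two]
      norm_num [Matrix.cons_val_zero, Matrix.cons_val_one]
      push_cast
      ring
    simp only [h1, h0, ih]
    rw [Wfun]
    ring

lemma Wfun_nonneg (β : ℝ) : ∀ (N : ℕ) (x y : ℝ), 0 ≤ Wfun β N x y := by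
  intro N
  induction N with
  | zero => intro x y; exact Real.rpow_nonneg (abs_nonneg y) _
  | succ N ih => intro x y; exact add_nonneg (ih _ _) (ih _ _)

lemma Wfun_homog (β : ℝ) (c : ℝ) : ∀ (N : ℕ) (x y : ℝ),
    Wfun β N (c * x) (c * y) = |c| ^ (-β) * Wfun β N x y := by
  intro N
  induction N with
  | zero =>
    intro x y
    show |c * y| ^ (-β) = |c| ^ (-β) * |y| ^ (-β)
    rw [abs_mul, Real.mul_rpow (abs_nonneg c) (abs_nonneg y)]
  | succ N ih =>
    intro x y
    show Wfun β N (c*x + c*y) (c*y) + Wfun β N (c*x) (c*x + c*y) = _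
    rw [← mul_add, ih, ih, Wfun]
    ring

lemma Wfun_samesign (β : ℝ) (hβ : 0 < β) : ∀ (N : ℕ) (x y : ℝ), 0 ≤ x → 0 < y →
    Wfun β N x y ≤ 2 ^ N * y ^ (-β) := by
  intro N
  induction N with
  | zero =>
    intro x y hx hy
    show |y| ^ (-β) ≤ 2 ^ 0 * y ^ (-β)
    rw [abs_of_pos hy]
    simp
  | succ N ih =>
    intro x y hx hy
    have hxy : 0 < x + y := by linarith
    have h1 : Wfun β N (x + y) y ≤ 2 ^ N * y ^ (-β) := ih _ _ hxy.le hy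
    have h2 : Wfun β N x (x + y) ≤ 2 ^ N * (x + y) ^ (-β) := ih _ _ hx hxy
    have h3 : (x + y) ^ (-β) ≤ y ^ (-β) :=
      Real.rpow_le_rpow_of_nonpos hy (by linarith) (by linarith)
    have h4 : (0:ℝ) < 2 ^ N := by positivity
    show Wfun β N (x + y) y + Wfun β N x (x + y) ≤ 2 ^ (N+1) * y ^ (-β)
    have : (2:ℝ) ^ (N+1) = 2^N + 2^N := by ring
    rw [this]
    nlinarith

theorem stmt13 (β : ℝ) (hβ : 2 < β) :
    Filter.Tendsto
      (fun N : ℕ => Real.log (Zpart N ((1 + Real.sqrt 5) / 2) β) / (N : ℝ))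
      Filter.atTop (nhds (β * Real.log ((1 + Real.sqrt 5) / 2))) := by
  set g : ℝ := (1 + Real.sqrt 5) / 2 with hg
  have hs5 : Real.sqrt 5 ^ 2 = 5 := Real.sq_sqrt (by norm_num)
  have hs5' : 0 ≤ Real.sqrt 5 := Real.sqrt_nonneg 5
  have hg1 : 1 < g := by rw [hg]; nlinarith
  have hgpos : 0 < g := by linarith
  have hsq : g ^ 2 = g + 1 := by rw [hg]; field_simp; nlinarith
  have hginv : g - 1 = g⁻¹ := by
    field_simp
    nlinarith
  have hβ0 : 0 < β := by linarith
  set P : ℝ := g ^ β with hPdef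
  have hPpos : 0 < P := Real.rpow_pos_of_pos hgpos β
  have hP2 : 2 < P := by
    have h1 : g ^ (2:ℕ) ≤ P := by
      rw [hPdef, ← Real.rpow_natCast g 2]
      exact Real.rpow_le_rpow_of_exponent_le hg1.le (by exact_mod_cast hβ.le)
    nlinarith
  have hP1 : 1 ≤ P := by linarith
  have hgβ : g ^ (-β) = P⁻¹ := by rw [Real.rpow_neg hgpos.le]
  have hginvβ : (g⁻¹) ^ (-β) = P := by
    rw [Real.inv_rpow hgpos.le, hgβ, inv_inv]
  set a : ℕ → ℝ := fun N => Wfun β N 1 (-g) with ha_def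
  set b : ℕ → ℝ := fun N => Wfun β N g (-1) with hb_def
  have ha0 : a 0 = P⁻¹ := by
    show |(-g)| ^ (-β) = P⁻¹
    rw [abs_neg, abs_of_pos hgpos, hgβ]
  have hb0 : b 0 = 1 := by
    show |(-1:ℝ)| ^ (-β) = 1
    simp [Real.one_rpow]
  have hg1' : g⁻¹ * g = 1 := by field_simp
  have habs : |g⁻¹| ^ (-β) = P := by
    rw [abs_of_pos (inv_pos.mpr hgpos), hginvβ]
  have harec : ∀ N, a (N + 1) = Wfun β N (g - 1) g + P * b N := by
    intro N
    show Wfun β N (1 + -g) (-g) + Wfun β N 1 (1 + -g) = _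
    have e1 : Wfun β N (1 + -g) (-g) = Wfun β N (g - 1) g := by
      have h := Wfun_homog β (-1) N (g - 1) g
      rw [show (-1:ℝ) * (g-1) = 1 + -g by ring, show (-1:ℝ) * g = -g by ring] at h
      simpa using h
    have e2 : Wfun β N 1 (1 + -g) = P * b N := by
      have h := Wfun_homog β g⁻¹ N g (-1)
      rw [hg1', show g⁻¹ * (-1) = 1 + -g by rw [← hginv]; ring, habs] at h
      exact h
    rw [e1, e2]
  have hbrec : ∀ N, b (N + 1) = P * a N + Wfun β N g (g - 1) := by
    intro N
    show Wfun β N (g + -1) (-1) + Wfun β N g (g + -1) = _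
    have e1 : Wfun β N (g + -1) (-1) = P * a N := by
      have h := Wfun_homog β g⁻¹ N 1 (-g)
      rw [show g⁻¹ * (-g) = -1 by field_simp, show g⁻¹ * 1 = g + -1 by rw [mul_one, ← hginv]; ring,
        habs] at h
      exact h
    have e2 : Wfun β N g (g + -1) = Wfun β N g (g - 1) := by ring_nf
    rw [e1, e2]
  have hgm1 : 0 < g - 1 := by linarith
  have hss1 : ∀ N, Wfun β N (g - 1) g ≤ 2 ^ N * P⁻¹ := by
    intro N
    have h := Wfun_samesign β hβ0 N (g - 1) g hgm1.le hgpos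
    rwa [hgβ] at h
  have hgm1β : (g - 1) ^ (-β) = P := by rw [hginv, hginvβ]
  have hss2 : ∀ N, Wfun β N g (g - 1) ≤ 2 ^ N * P := by
    intro N
    have h := Wfun_samesign β hβ0 N g (g - 1) hgpos.le hgm1
    rwa [hgm1β] at h
  set D : ℝ := P / (P - 2) with hD_def
  have hDpos : 0 < D := div_pos hPpos (by linarith)
  have hP2' : P - 2 ≠ 0 := by linarith
  have hPD : P * D = P + 2 * D := by rw [hD_def]; field_simp; ring
  set C : ℝ := D + 1 with hC_def
  have hCpos : 0 < C := by positivity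
  have hPinv1 : P⁻¹ ≤ 1 := inv_le_one_of_one_le₀ hP1
  have key : ∀ N, a N ≤ C * P ^ N - D * 2 ^ N ∧ b N ≤ C * P ^ N - D * 2 ^ N := by
    intro N
    induction N with
    | zero =>
      refine ⟨?_, ?_⟩
      · rw [ha0]; simp only [pow_zero, mul_one, hC_def]; linarith
      · rw [hb0]; simp only [pow_zero, mul_one, hC_def]; linarith
    | succ N ih =>
      have h2N : (0:ℝ) < 2 ^ N := by positivity
      have h5 : 2 ^ N * (P * D) = 2 ^ N * P + 2 ^ N * (2 * D) := by rw [hPD]; ring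
      have h6 : 2 ^ N * P⁻¹ ≤ 2 ^ N * P := by
        have : P⁻¹ ≤ P := le_trans hPinv1 hP1
        nlinarith
      refine ⟨?_, ?_⟩
      · have hb' : P * b N ≤ P * (C * P ^ N - D * 2 ^ N) :=
          mul_le_mul_of_nonneg_left ih.2 hPpos.le
        calc a (N + 1) = Wfun β N (g - 1) g + P * b N := harec N
          _ ≤ 2 ^ N * P⁻¹ + P * (C * P ^ N - D * 2 ^ N) := add_le_add (hss1 N) hb'
          _ ≤ C * P ^ (N + 1) - D * 2 ^ (N + 1) := by
              rw [pow_succ, pow_succ]; linarith [h5, h6]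
      · have ha' : P * a N ≤ P * (C * P ^ N - D * 2 ^ N) :=
          mul_le_mul_of_nonneg_left ih.1 hPpos.le
        calc b (N + 1) = P * a N + Wfun β N g (g - 1) := hbrec N
          _ ≤ P * (C * P ^ N - D * 2 ^ N) + 2 ^ N * P := add_le_add ha' (hss2 N)
          _ ≤ C * P ^ (N + 1) - D * 2 ^ (N + 1) := by
              rw [pow_succ, pow_succ]; linarith [h5]
  have low : ∀ N, P⁻¹ * P ^ N ≤ a N ∧ P⁻¹ * P ^ N ≤ b N := by
    intro N
    induction N with
    | zero =>
      refine ⟨?_, ?_⟩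
      · rw [ha0]; simp
      · rw [hb0]; simpa using hPinv1
    | succ N ih =>
      refine ⟨?_, ?_⟩
      · rw [harec N, pow_succ]
        have h1 : P * (P⁻¹ * P ^ N) ≤ P * b N := mul_le_mul_of_nonneg_left ih.2 hPpos.le
        have h2 : 0 ≤ Wfun β N (g - 1) g := Wfun_nonneg β N _ _
        have h3 : P * (P⁻¹ * P ^ N) = P⁻¹ * (P ^ N * P) := by ring
        linarith
      · rw [hbrec N, pow_succ]
        have h1 : P * (P⁻¹ * P ^ N) ≤ P * a N := mul_le_mul_of_nonneg_left ih.1 hPpos.le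
        have h2 : 0 ≤ Wfun β N g (g - 1) := Wfun_nonneg β N _ _
        have h3 : P * (P⁻¹ * P ^ N) = P⁻¹ * (P ^ N * P) := by ring
        linarith
  have hZ : ∀ N, Zpart N g β = a N := by
    intro N
    show Zpart N g β = Wfun β N 1 (-g)
    rw [← Zgen β N 1 (-g)]
    unfold Zpart
    apply Finset.sum_congr rfl
    intro σ _
    congr 1
    ring
  have hPNpos : ∀ N : ℕ, (0:ℝ) < P ^ N := fun N => pow_pos hPpos N
  have hZlo : ∀ N, P⁻¹ * P ^ N ≤ Zpart N g β := fun N => (hZ N) ▸ (low N).1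
  have hZhi : ∀ N, Zpart N g β ≤ C * P ^ N := by
    intro N
    rw [hZ N]
    have h1 := (key N).1
    have h2N : (0:ℝ) < 2 ^ N := by positivity
    have h2 : 0 < D * 2 ^ N := by positivity
    linarith
  have hZpos : ∀ N, 0 < Zpart N g β := by
    intro N
    have : (0:ℝ) < P⁻¹ * P ^ N := by positivity
    linarith [hZlo N]
  have hlogP : Real.log P = β * Real.log g := Real.log_rpow hgpos β
  have hlo : ∀ N : ℕ, (N : ℝ) * Real.log P - Real.log P ≤ Real.log (Zpart N g β) := by
    intro N
    have h := Real.log_le_log (by positivity) (hZlo N)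
    rw [Real.log_mul (by positivity) (by positivity), Real.log_inv, Real.log_pow] at h
    linarith
  have hhi : ∀ N : ℕ, Real.log (Zpart N g β) ≤ Real.log C + (N : ℝ) * Real.log P := by
    intro N
    have h := Real.log_le_log (hZpos N) (hZhi N)
    rw [Real.log_mul (by positivity) (by positivity), Real.log_pow] at h
    linarith
  rw [← hlogP]
  have t0 : Filter.Tendsto (fun N : ℕ => Real.log P - Real.log P / N) Filter.atTop
      (nhds (Real.log P)) := by
    simpa using tendsto_const_nhds.sub (tendsto_const_div_atTop_nhds_zero_nat (Real.log P))
  have t1 : Filter.Tendsto (fun N : ℕ => ((N : ℝ) * Real.log P - Real.log P) / N) Filter.atTop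
      (nhds (Real.log P)) := by
    apply t0.congr'
    filter_upwards [Filter.eventually_ge_atTop 1] with N hN
    have hN0 : (N : ℝ) ≠ 0 := Nat.cast_ne_zero.mpr (by omega)
    field_simp
  have t2' : Filter.Tendsto (fun N : ℕ => Real.log P + Real.log C / N) Filter.atTop
      (nhds (Real.log P)) := by
    simpa using tendsto_const_nhds.add (tendsto_const_div_atTop_nhds_zero_nat (Real.log C))
  have t2 : Filter.Tendsto (fun N : ℕ => (Real.log C + (N : ℝ) * Real.log P) / N) Filter.atTop
      (nhds (Real.log P)) := by
    apply t2'.congr'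
    filter_upwards [Filter.eventually_ge_atTop 1] with N hN
    have hN0 : (N : ℝ) ≠ 0 := Nat.cast_ne_zero.mpr (by omega)
    field_simp
    ring
  apply tendsto_of_tendsto_of_tendsto_of_le_of_le' t1 t2
  · filter_upwards [Filter.eventually_ge_atTop 1] with N hN
    have hN0 : (0:ℝ) < (N : ℝ) := by exact_mod_cast (by omega : 0 < N)
    exact (div_le_div_iff_of_pos_right hN0).mpr (hlo N)
  · filter_upwards [Filter.eventually_ge_atTop 1] with N hN
    have hN0 : (0:ℝ) < (N : ℝ) := by exact_mod_cast (by omega : 0 < N)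
    exact (div_le_div_iff_of_pos_right hN0).mpr (hhi N)
end
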